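/- arXiv:1803.01760 — 12 statements merged into one kernel-verified Lean document; each statement's English description precedes it below -/
import Mathlib

section
/- Let 1 < i < j ≤ n with j ≥ 4. If 1 < i ≤ ⌊j/2⌋, then the order of the product f_{i−1} f_{j−1} of pancake generators in the symmetric group S_n is 4. -/
/-- The pancake generator `f_m` of the symmetric group `S_n` on `{1,…,n}`, modeled as
`Equiv.Perm (Fin n)` (positions `0`-indexed): it reverses the first `m+1` entries, i.e.
it sends the position `a` to `m - a` whenever `a ≤ m` (and `m < n`), and fixes all other
positions.  (In `1`-indexed terms, `f_m a = m + 2 - a` for `1 ≤ a ≤ m+1` and `f_m a = a`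
for `m + 1 < a ≤ n`.) -/
def pancake (n m : ℕ) : Equiv.Perm (Fin n) :=
  Function.Involutive.toPerm
    (fun a => if h : (a : ℕ) ≤ m ∧ m < n then
        ⟨m - (a : ℕ), Nat.lt_of_le_of_lt (Nat.sub_le m a) h.2⟩ else a)
    (by
      intro a
      dsimp only
      by_cases h : (a : ℕ) ≤ m ∧ m < n
      · rw [dif_pos h, dif_pos ⟨Nat.sub_le m (a : ℕ), h.2⟩]
        exact Fin.ext (Nat.sub_sub_self h.1)
      · rw [dif_neg h, dif_neg h])

lemma pancake_apply_val (n m : ℕ) (hm : m < n) (x : Fin n) :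
    ((pancake n m x : ℕ)) = if (x : ℕ) ≤ m then m - (x : ℕ) else (x : ℕ) := by
  simp only [pancake, Function.Involutive.coe_toPerm]
  show ((if h : (x : ℕ) ≤ m ∧ m < n then (⟨m - (x : ℕ), Nat.lt_of_le_of_lt (Nat.sub_le m x) h.2⟩ : Fin n) else x : Fin n) : ℕ) = _
  by_cases h : (x : ℕ) ≤ m
  · rw [dif_pos ⟨h, hm⟩, if_pos h]
  · rw [dif_neg (by tauto), if_neg h]

/-- If `1 < i < j ≤ n`, `j ≥ 4` and `i ≤ ⌊j/2⌋`, then the order of `f_{i-1} f_{j-1}`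
in `S_n` is `4`. -/
theorem order_pancake_mul_of_le_half (n i j : ℕ) (hi : 1 < i) (hij : i < j) (hjn : j ≤ n)
    (hj4 : 4 ≤ j) (hhalf : i ≤ j / 2) :
    orderOf (pancake n (i - 1) * pancake n (j - 1)) = 4 := by
  have hin : i - 1 < n := by omega
  have hjn' : j - 1 < n := by omega
  set g := pancake n (i - 1) * pancake n (j - 1) with hg
  have hgapp : ∀ x : Fin n, ((g x : ℕ)) =
      if (x : ℕ) ≤ j - i - 1 then j - 1 - (x : ℕ)
      else if (x : ℕ) ≤ j - 1 then (x : ℕ) - (j - i) else (x : ℕ) := by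
    intro x
    rw [hg, Equiv.Perm.mul_apply, pancake_apply_val _ _ hin,
      pancake_apply_val _ _ hjn']
    split_ifs <;> omega
  have hg2 : ∀ x : Fin n, (((g * g) x : ℕ)) =
      if (x : ℕ) ≤ i - 1 then i - 1 - (x : ℕ)
      else if j - i ≤ (x : ℕ) ∧ (x : ℕ) ≤ j - 1 then (j - 1) + (j - i) - (x : ℕ)
      else (x : ℕ) := by
    intro x
    rw [Equiv.Perm.mul_apply, hgapp, hgapp]
    split_ifs <;> omega
  have h4 : g ^ 4 = 1 := by
    have hpow : g ^ 4 = (g * g) * (g * g) := by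
      rw [pow_succ, pow_succ, pow_succ, pow_one, mul_assoc]
    rw [hpow]
    ext x
    have : (((g * g) ((g * g) x)) : ℕ) = (x : ℕ) := by
      rw [hg2, hg2]
      split_ifs <;> omega
    simpa [Equiv.Perm.mul_apply] using this
  have hne : g ^ 2 ≠ 1 := by
    intro h
    have h0 : (0 : ℕ) < n := by omega
    have := hg2 ⟨0, h0⟩
    rw [show g * g = g ^ 2 from (pow_two g).symm, h] at this
    simp at this
    omega
  have hd : orderOf g ∣ 4 := orderOf_dvd_of_pow_eq_one h4
  have h1 : orderOf g ≠ 1 := by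
    intro h
    exact hne (by rw [orderOf_eq_one_iff.mp h]; simp)
  have h2' : orderOf g ≠ 2 := by
    intro h
    exact hne (by rw [← h]; exact pow_orderOf_eq_one g)
  have hm : orderOf g ∈ (4 : ℕ).divisors := Nat.mem_divisors.mpr ⟨hd, by norm_num⟩
  have hdiv : (4 : ℕ).divisors = {1, 2, 4} := by decide
  rw [hdiv] at hm
  simp only [Finset.mem_insert, Finset.mem_singleton] at hm
  rcases hm with h | h | h
  · exact absurd h h1
  · exact absurd h h2'
  · exact h
end

section
/- Let 1 < i < j ≤ n with j ≥ 4 and ⌊j/2⌋ < i < j−1 (and ⌊j/2⌋ > 1). Set d = j−i, q = ⌊j/d⌋, r = j mod d, and t = d−r. Then the order of f_{i−1} f_{j−1} in S_n equals: 2q(q+1) if (r ≥ 2 and t ≥ 2), or (r = 1, t ≥ 2, q even), or (r ≥ 2, t = 1, q odd); q(q+1) if (r = 1, t ≥ 2, q odd), or (r ≥ 2, t = 1, q even), or (r = 1 and t = 1); and 2q if r = 0. -/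
namespace OrderPancakeAux

lemma pancake_coe (n m : ℕ) (a : Fin n) :
    ((pancake n m) a : ℕ) = if (a : ℕ) ≤ m ∧ m < n then m - (a : ℕ) else (a : ℕ) := by
  by_cases h : (a : ℕ) ≤ m ∧ m < n
  · simp only [pancake, Function.Involutive.toPerm, Equiv.coe_fn_mk, dif_pos h, if_pos h]
  · simp only [pancake, Function.Involutive.toPerm, Equiv.coe_fn_mk, dif_neg h, if_neg h]

lemma gval (n i j : ℕ) (hi : 1 < i) (hij : i < j) (hjn : j ≤ n) (x : Fin n)
    (hx : (x : ℕ) < j) :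
    (((pancake n (i-1) * pancake n (j-1)) x : Fin n) : ℕ) =
      if (x : ℕ) < j - i then j - 1 - (x : ℕ) else (x : ℕ) - (j - i) := by
  rw [Equiv.Perm.mul_apply]
  have h1 : ((pancake n (j-1)) x : ℕ) = j - 1 - (x : ℕ) := by
    rw [pancake_coe, if_pos ⟨by omega, by omega⟩]
  rw [pancake_coe, h1]
  by_cases h : (x : ℕ) < j - i
  · rw [if_neg (show ¬(j - 1 - (x:ℕ) ≤ i - 1 ∧ i - 1 < n) by omega), if_pos h]
  · rw [if_pos ⟨by omega, by omega⟩, if_neg h]; omega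

lemma gfix (n i j : ℕ) (hi : 1 < i) (hij : i < j) (x : Fin n) (hx : j ≤ (x : ℕ)) :
    (pancake n (i-1) * pancake n (j-1)) x = x := by
  have h1 : (pancake n (j-1)) x = x := by
    apply Fin.ext; rw [pancake_coe, if_neg (by omega)]
  rw [Equiv.Perm.mul_apply, h1]
  apply Fin.ext; rw [pancake_coe, if_neg (by omega)]

lemma pow_down (n i j : ℕ) (hi : 1 < i) (hij : i < j) (hjn : j ≤ n) :
    ∀ (k : ℕ) (x : Fin n), (x : ℕ) < j → (j - i) * k ≤ (x : ℕ) →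
      (((pancake n (i-1) * pancake n (j-1)) ^ k) x : ℕ) = (x : ℕ) - (j - i) * k := by
  intro k
  induction k with
  | zero => intro x hx _; simp
  | succ k ih =>
    intro x hx hk
    have hmul : (j - i) * (k + 1) = (j - i) * k + (j - i) := by ring
    rw [hmul] at hk ⊢
    have hgx := gval n i j hi hij hjn x hx
    rw [if_neg (by omega)] at hgx
    rw [pow_succ, Equiv.Perm.mul_apply]
    have hx' : (((pancake n (i-1) * pancake n (j-1)) x : Fin n) : ℕ) < j := by omega
    have h2 := ih ((pancake n (i-1) * pancake n (j-1)) x) hx' (by omega)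
    omega

end OrderPancakeAux

open OrderPancakeAux in
/-- Theorem (Coxeter-like relations, middle case): let `1 < i < j ≤ n` with `j ≥ 4`,
`1 < ⌊j/2⌋ < i < j - 1`, and set `d = j - i`, `q = ⌊j/d⌋`, `r = j mod d`, `t = d - r`.
Then the order of `f_{i-1} f_{j-1}` in `S_n` is `2q(q+1)`, `q(q+1)` or `2q` according
to the listed cases on `r`, `t` and the parity of `q`. -/
theorem order_pancake_mul_middle_case (n i j d q r t : ℕ) (hi : 1 < i) (hij : i < j)
    (hjn : j ≤ n) (hj4 : 4 ≤ j) (hhalf1 : 1 < j / 2) (hhalf : j / 2 < i) (hij1 : i < j - 1)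
    (hd : d = j - i) (hq : q = j / d) (hr : r = j % d) (ht : t = d - r) :
    ((2 ≤ r ∧ 2 ≤ t) ∨ (r = 1 ∧ 2 ≤ t ∧ Even q) ∨ (2 ≤ r ∧ t = 1 ∧ Odd q) →
      orderOf (pancake n (i - 1) * pancake n (j - 1)) = 2 * q * (q + 1)) ∧
    ((r = 1 ∧ 2 ≤ t ∧ Odd q) ∨ (2 ≤ r ∧ t = 1 ∧ Even q) ∨ (r = 1 ∧ t = 1) →
      orderOf (pancake n (i - 1) * pancake n (j - 1)) = q * (q + 1)) ∧
    (r = 0 → orderOf (pancake n (i - 1) * pancake n (j - 1)) = 2 * q) := by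
  set g := pancake n (i - 1) * pancake n (j - 1) with hg
  have hd2 : 2 ≤ d := by omega
  have hdj : d ≤ j := by omega
  have hdm : d * q + r = j := by rw [hq, hr]; exact Nat.div_add_mod j d
  have hrd : r < d := by rw [hr]; exact Nat.mod_lt _ (by omega)
  have hq1 : 1 ≤ q := by
    rw [hq]; exact (Nat.one_le_div_iff (by omega)).mpr hdj
  have hrt : r + t = d := by omega
  -- basic action lemmas
  have hgv : ∀ x : Fin n, (x : ℕ) < j →
      ((g x : Fin n) : ℕ) = if (x : ℕ) < d then j - 1 - (x : ℕ) else (x : ℕ) - d := by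
    intro x hx
    have h := gval n i j hi hij hjn x hx
    rw [← hd] at h
    exact h
  have hdown : ∀ (k : ℕ) (x : Fin n), (x : ℕ) < j → d * k ≤ (x : ℕ) →
      ((g ^ k) x : ℕ) = (x : ℕ) - d * k := by
    intro k x hx hk
    have h := pow_down n i j hi hij hjn k x hx (by rw [← hd]; exact hk)
    rw [← hd] at h
    exact h
  have hup1 : ∀ (k : ℕ) (y : Fin n), (y : ℕ) < d → d * k + (y : ℕ) ≤ j - 1 →
      ((g ^ (k + 1)) y : ℕ) = j - 1 - (y : ℕ) - d * k := by
    intro k y hy hk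
    have hgy : ((g y : Fin n) : ℕ) = j - 1 - (y : ℕ) := by
      rw [hgv y (by omega), if_pos hy]
    have h2 := hdown k (g y) (by omega) (by omega)
    rw [pow_succ, Equiv.Perm.mul_apply]
    omega
  have hC : ∀ y : Fin n, r ≤ (y : ℕ) → (y : ℕ) < d →
      ((g ^ q) y : ℕ) = d + r - 1 - (y : ℕ) := by
    intro y h1 h2
    obtain ⟨q', hq'⟩ : ∃ q', q = q' + 1 := ⟨q - 1, by omega⟩
    have e1 : d * q = d * q' + d := by rw [hq']; ring
    have h := hup1 q' y h2 (by omega)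
    rw [← hq'] at h
    omega
  have hC' : ∀ y : Fin n, (y : ℕ) < r → ((g ^ (q + 1)) y : ℕ) = r - 1 - (y : ℕ) := by
    intro y h1
    have h := hup1 q y (by omega) (by omega)
    omega
  have hPB : ∀ y : Fin n, r ≤ (y : ℕ) → (y : ℕ) < d → (g ^ (2 * q)) y = y := by
    intro y h1 h2
    have e1 := hC y h1 h2
    have h3 : r ≤ ((g ^ q) y : ℕ) := by omega
    have h4 : ((g ^ q) y : ℕ) < d := by omega
    have e2 := hC _ h3 h4
    have e3 : (g ^ (2 * q)) y = (g ^ q) ((g ^ q) y) := by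
      rw [two_mul, pow_add, Equiv.Perm.mul_apply]
    rw [e3]; apply Fin.ext; rw [e2]; omega
  have hPA : ∀ y : Fin n, (y : ℕ) < r → (g ^ (2 * (q + 1))) y = y := by
    intro y h1
    have e1 := hC' y h1
    have h3 : ((g ^ (q + 1)) y : ℕ) < r := by omega
    have e2 := hC' _ h3
    have e3 : (g ^ (2 * (q + 1))) y = (g ^ (q + 1)) ((g ^ (q + 1)) y) := by
      rw [two_mul, pow_add, Equiv.Perm.mul_apply]
    rw [e3]; apply Fin.ext; rw [e2]; omega
  have hfix_pow : ∀ (x : Fin n), g x = x → ∀ k, (g ^ k) x = x := by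
    intro x hx k
    induction k with
    | zero => simp
    | succ k ih => rw [pow_succ, Equiv.Perm.mul_apply, hx, ih]
  have hmulfix : ∀ (y : Fin n) (L : ℕ), (g ^ L) y = y → ∀ m, (g ^ (L * m)) y = y := by
    intro y L hL m
    induction m with
    | zero => simp
    | succ m ih =>
      have e : L * (m + 1) = L * m + L := by ring
      rw [e, pow_add, Equiv.Perm.mul_apply, hL, ih]
  have hdvd_fix : ∀ (y : Fin n) (L N : ℕ), L ∣ N → (g ^ L) y = y → (g ^ N) y = y := by
    intro y L N hLN hyL
    obtain ⟨m, rfl⟩ := hLN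
    exact hmulfix y L hyL m
  have hone : ∀ N : ℕ, (∀ y : Fin n, (y : ℕ) < d → (g ^ N) y = y) → g ^ N = 1 := by
    intro N hN
    apply Equiv.ext
    intro x
    rw [Equiv.Perm.one_apply]
    by_cases hx : (x : ℕ) < j
    · have e := Nat.div_add_mod (x : ℕ) d
      have e2 : (x : ℕ) % d < d := Nat.mod_lt _ (by omega)
      have h1 : d * ((x : ℕ) / d) ≤ (x : ℕ) := by omega
      have h2 := hdown ((x : ℕ) / d) x hx h1
      have h3 : ((g ^ ((x : ℕ) / d)) x : ℕ) < d := by omega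
      have h4 := hN _ h3
      have h5 : (g ^ ((x : ℕ) / d)) ((g ^ N) x) = (g ^ N) ((g ^ ((x : ℕ) / d)) x) := by
        rw [← Equiv.Perm.mul_apply, ← Equiv.Perm.mul_apply, ← pow_add, ← pow_add, add_comm]
      rw [h4] at h5
      exact (g ^ ((x : ℕ) / d)).injective h5
    · exact hfix_pow x (gfix n i j hi hij x (by omega)) N
  have hmin : ∀ (y : Fin n) (L : ℕ), 0 < L → (g ^ L) y = y →
      (∀ k, 0 < k → k < L → (g ^ k) y ≠ y) → ∀ m, (g ^ m) y = y → L ∣ m := by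
    intro y L hL hyL hne m hm
    have e := Nat.mod_add_div m L
    have h1 : (g ^ (m % L)) y = y := by
      have h2 : (g ^ (m % L + L * (m / L))) y = y := by rw [e]; exact hm
      rw [pow_add, Equiv.Perm.mul_apply, hmulfix y L hyL (m / L)] at h2
      exact h2
    by_cases h0 : m % L = 0
    · exact Nat.dvd_of_mod_eq_zero h0
    · exact absurd h1 (hne _ (Nat.pos_of_ne_zero h0) (Nat.mod_lt _ hL))
  -- the two special points
  have hn0 : 0 < n := by omega
  set y0 : Fin n := ⟨0, hn0⟩ with hy0
  have hrn : r < n := by omega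
  set yr : Fin n := ⟨r, hrn⟩ with hyr
  have hy0v : (y0 : ℕ) = 0 := rfl
  have hyrv : (yr : ℕ) = r := rfl
  -- orbit values for y0 (needs r ≥ 1)
  have horb0 : 1 ≤ r → ∀ k, 1 ≤ k → k ≤ q + 1 →
      ((g ^ k) y0 : ℕ) = j - 1 - d * (k - 1) := by
    intro hr1 k h1 h2
    obtain ⟨k', rfl⟩ : ∃ k', k = k' + 1 := ⟨k - 1, by omega⟩
    have hk'q : k' ≤ q := by omega
    have hmle : d * k' ≤ d * q := Nat.mul_le_mul_left d hk'q
    have h := hup1 k' y0 (by omega) (by omega)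
    simpa [hy0v] using h
  -- distinctness for y0; L0 = 2(q+1) when r ≥ 2
  have hne0A : 2 ≤ r → ∀ k, 0 < k → k < 2 * (q + 1) → (g ^ k) y0 ≠ y0 := by
    intro hr2 k hk1 hk2 heq
    have heqv : ((g ^ k) y0 : ℕ) = 0 := by rw [heq]
    by_cases hkq : k ≤ q + 1
    · have h := horb0 (by omega) k hk1 hkq
      have hmle : d * (k - 1) ≤ d * q := Nat.mul_le_mul_left d (by omega)
      omega
    · obtain ⟨s, hs⟩ : ∃ s, k = s + (q + 1) := ⟨k - (q + 1), by omega⟩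
      have hs1 : 1 ≤ s := by omega
      have hsq : s ≤ q := by omega
      have hz := hC' y0 (by omega)
      have hsplit : (g ^ k) y0 = (g ^ s) ((g ^ (q + 1)) y0) := by
        rw [hs, pow_add, Equiv.Perm.mul_apply]
      obtain ⟨s', rfl⟩ : ∃ s', s = s' + 1 := ⟨s - 1, by omega⟩
      have hs'q : s' ≤ q - 1 := by omega
      have hmle : d * s' ≤ d * (q - 1) := Nat.mul_le_mul_left d hs'q
      have e1 : d * (q - 1) + d = d * q := by
        have : q - 1 + 1 = q := by omega
        calc d * (q - 1) + d = d * (q - 1 + 1) := by ring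
          _ = d * q := by rw [this]
      have h := hup1 s' ((g ^ (q + 1)) y0) (by omega) (by omega)
      rw [← hsplit] at h
      omega
  -- distinctness for y0 when r = 1; L0 = q+1
  have hne0B : r = 1 → ∀ k, 0 < k → k < q + 1 → (g ^ k) y0 ≠ y0 := by
    intro hr1 k hk1 hk2 heq
    have heqv : ((g ^ k) y0 : ℕ) = 0 := by rw [heq]
    have h := horb0 (by omega) k hk1 (by omega)
    have hmle : d * (k - 1) ≤ d * (q - 1) := Nat.mul_le_mul_left d (by omega)
    have e1 : d * (q - 1) + d = d * q := by
      have : q - 1 + 1 = q := by omega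
      calc d * (q - 1) + d = d * (q - 1 + 1) := by ring
        _ = d * q := by rw [this]
    omega
  -- orbit values for yr
  have horbr : ∀ k, 1 ≤ k → k ≤ q → ((g ^ k) yr : ℕ) = j - 1 - r - d * (k - 1) := by
    intro k h1 h2
    obtain ⟨k', rfl⟩ : ∃ k', k = k' + 1 := ⟨k - 1, by omega⟩
    have hmle : d * k' ≤ d * (q - 1) := Nat.mul_le_mul_left d (by omega)
    have e1 : d * (q - 1) + d = d * q := by
      have : q - 1 + 1 = q := by omega
      calc d * (q - 1) + d = d * (q - 1 + 1) := by ring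
        _ = d * q := by rw [this]
    have h := hup1 k' yr (by omega) (by omega)
    simpa using h
  -- distinctness for yr; L1 = 2q when t ≥ 2
  have hnerA : 2 ≤ t → ∀ k, 0 < k → k < 2 * q → (g ^ k) yr ≠ yr := by
    intro ht2 k hk1 hk2 heq
    have heqv : ((g ^ k) yr : ℕ) = r := by rw [heq]
    by_cases hkq : k ≤ q
    · have h := horbr k hk1 hkq
      have hmle : d * (k - 1) ≤ d * (q - 1) := Nat.mul_le_mul_left d (by omega)
      have e1 : d * (q - 1) + d = d * q := by
        have : q - 1 + 1 = q := by omega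
        calc d * (q - 1) + d = d * (q - 1 + 1) := by ring
          _ = d * q := by rw [this]
      omega
    · obtain ⟨s, hs⟩ : ∃ s, k = s + q := ⟨k - q, by omega⟩
      have hs1 : 1 ≤ s := by omega
      have hsq : s ≤ q - 1 := by omega
      have hz := hC yr (by omega) (by omega)
      have hzv : ((g ^ q) yr : ℕ) = d - 1 := by omega
      have hsplit : (g ^ k) yr = (g ^ s) ((g ^ q) yr) := by
        rw [hs, pow_add, Equiv.Perm.mul_apply]
      obtain ⟨s', rfl⟩ : ∃ s', s = s' + 1 := ⟨s - 1, by omega⟩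
      have hs'q : s' ≤ q - 2 := by omega
      have hmle : d * s' ≤ d * (q - 2) := Nat.mul_le_mul_left d hs'q
      have e1 : d * (q - 2) + 2 * d = d * q := by
        have hq2 : 2 ≤ q := by omega
        have : q - 2 + 2 = q := by omega
        calc d * (q - 2) + 2 * d = d * (q - 2 + 2) := by ring
          _ = d * q := by rw [this]
      have h := hup1 s' ((g ^ q) yr) (by omega) (by omega)
      rw [← hsplit] at h
      omega
  -- distinctness for yr when t = 1; L1 = q
  have hnerB : t = 1 → ∀ k, 0 < k → k < q → (g ^ k) yr ≠ yr := by
    intro ht1 k hk1 hk2 heq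
    have heqv : ((g ^ k) yr : ℕ) = r := by rw [heq]
    have h := horbr k hk1 (by omega)
    have hmle : d * (k - 1) ≤ d * (q - 2) := Nat.mul_le_mul_left d (by omega)
    have e1 : d * (q - 2) + 2 * d = d * q := by
      have : q - 2 + 2 = q := by omega
      calc d * (q - 2) + 2 * d = d * (q - 2 + 2) := by ring
        _ = d * q := by rw [this]
    omega
  -- fixed-period facts
  have hfixA : r = 1 → (g ^ (q + 1)) y0 = y0 := by
    intro hr1
    have h := hC' y0 (by omega)
    apply Fin.ext; rw [h]; omega
  have hfixB : t = 1 → (g ^ q) yr = yr := by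
    intro ht1
    have h := hC yr (by omega) (by omega)
    apply Fin.ext; rw [h]; omega
  have hPA0 : 1 ≤ r → (g ^ (2 * (q + 1))) y0 = y0 := fun h => hPA y0 (by omega)
  have hPBr : (g ^ (2 * q)) yr = yr := hPB yr (by omega) (by omega)
  have hM : ∀ y : Fin n, (g ^ orderOf g) y = y := by
    intro y; rw [pow_orderOf_eq_one]; rfl
  have hcop : Nat.Coprime q (q + 1) := by simp [Nat.Coprime]
  constructor
  · -- case N = 2q(q+1)
    intro hcase
    have hup : g ^ (2 * q * (q + 1)) = 1 := by
      apply hone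
      intro y hyd
      by_cases hy : (y : ℕ) < r
      · exact hdvd_fix y (2 * (q + 1)) _ ⟨q, by ring⟩ (hPA y hy)
      · exact hdvd_fix y (2 * q) _ ⟨q + 1, by ring⟩ (hPB y (by omega) hyd)
    have hMd : orderOf g ∣ 2 * q * (q + 1) := orderOf_dvd_of_pow_eq_one hup
    have hdM : 2 * q * (q + 1) ∣ orderOf g := by
      rcases hcase with ⟨hr2, ht2⟩ | ⟨hr1, ht2, hqe⟩ | ⟨hr2, ht1, hqo⟩
      · have hL0 : 2 * (q + 1) ∣ orderOf g :=
          hmin y0 _ (by omega) (hPA0 (by omega)) (hne0A hr2) _ (hM y0)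
        have hL1 : 2 * q ∣ orderOf g :=
          hmin yr _ (by omega) hPBr (hnerA ht2) _ (hM yr)
        rcases Nat.even_or_odd q with hqe | hqo
        · have hcop2 : Nat.Coprime (2 * q) (q + 1) := by
            refine Nat.coprime_mul_iff_left.mpr ⟨?_, ?_⟩
            · exact (Nat.coprime_two_left).mpr (by rcases hqe with ⟨c, hc⟩; exact ⟨c, by omega⟩)
            · exact hcop
          exact hcop2.mul_dvd_of_dvd_of_dvd hL1 (dvd_trans ⟨2, by ring⟩ hL0)
        · have hcop2 : Nat.Coprime (2 * (q + 1)) q := by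
            refine Nat.coprime_mul_iff_left.mpr ⟨?_, ?_⟩
            · exact (Nat.coprime_two_left).mpr hqo
            · exact hcop.symm
          have := hcop2.mul_dvd_of_dvd_of_dvd hL0 (dvd_trans ⟨2, by ring⟩ hL1)
          have e : 2 * (q + 1) * q = 2 * q * (q + 1) := by ring
          rwa [e] at this
      · have hL0 : (q + 1) ∣ orderOf g :=
          hmin y0 _ (by omega) (hfixA hr1) (hne0B hr1) _ (hM y0)
        have hL1 : 2 * q ∣ orderOf g :=
          hmin yr _ (by omega) hPBr (hnerA ht2) _ (hM yr)
        have hcop2 : Nat.Coprime (2 * q) (q + 1) := by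
          refine Nat.coprime_mul_iff_left.mpr ⟨?_, ?_⟩
          · exact (Nat.coprime_two_left).mpr (by rcases hqe with ⟨c, hc⟩; exact ⟨c, by omega⟩)
          · exact hcop
        exact hcop2.mul_dvd_of_dvd_of_dvd hL1 hL0
      · have hL0 : 2 * (q + 1) ∣ orderOf g :=
          hmin y0 _ (by omega) (hPA0 (by omega)) (hne0A hr2) _ (hM y0)
        have hL1 : q ∣ orderOf g :=
          hmin yr _ (by omega) (hfixB ht1) (hnerB ht1) _ (hM yr)
        have hcop2 : Nat.Coprime (2 * (q + 1)) q := by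
          refine Nat.coprime_mul_iff_left.mpr ⟨?_, ?_⟩
          · exact (Nat.coprime_two_left).mpr hqo
          · exact hcop.symm
        have := hcop2.mul_dvd_of_dvd_of_dvd hL0 hL1
        have e : 2 * (q + 1) * q = 2 * q * (q + 1) := by ring
        rwa [e] at this
    exact Nat.dvd_antisymm hMd hdM
  constructor
  · -- case N = q(q+1)
    intro hcase
    have hup : g ^ (q * (q + 1)) = 1 := by
      apply hone
      intro y hyd
      rcases hcase with ⟨hr1, ht2, hqo⟩ | ⟨hr2, ht1, hqe⟩ | ⟨hr1, ht1⟩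
      · by_cases hy : (y : ℕ) < r
        · have hy0' : y = y0 := by apply Fin.ext; omega
          rw [hy0']
          exact hdvd_fix y0 (q + 1) _ ⟨q, by ring⟩ (hfixA hr1)
        · obtain ⟨c, hc⟩ := hqo
          exact hdvd_fix y (2 * q) _ ⟨c + 1, by rw [hc]; ring⟩ (hPB y (by omega) hyd)
      · by_cases hy : (y : ℕ) < r
        · obtain ⟨c, hc⟩ := hqe
          exact hdvd_fix y (2 * (q + 1)) _ ⟨c, by rw [hc]; ring⟩ (hPA y hy)
        · have hy' : y = yr := by apply Fin.ext; omega
          rw [hy']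
          exact hdvd_fix yr q _ ⟨q + 1, by ring⟩ (hfixB ht1)
      · by_cases hy : (y : ℕ) < r
        · have hy0' : y = y0 := by apply Fin.ext; omega
          rw [hy0']
          exact hdvd_fix y0 (q + 1) _ ⟨q, by ring⟩ (hfixA hr1)
        · have hy' : y = yr := by apply Fin.ext; omega
          rw [hy']
          exact hdvd_fix yr q _ ⟨q + 1, by ring⟩ (hfixB ht1)
    have hMd : orderOf g ∣ q * (q + 1) := orderOf_dvd_of_pow_eq_one hup
    have hdM : q * (q + 1) ∣ orderOf g := by
      have hparts : q ∣ orderOf g ∧ (q + 1) ∣ orderOf g := by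
        rcases hcase with ⟨hr1, ht2, hqo⟩ | ⟨hr2, ht1, hqe⟩ | ⟨hr1, ht1⟩
        · have hL0 : (q + 1) ∣ orderOf g :=
            hmin y0 _ (by omega) (hfixA hr1) (hne0B hr1) _ (hM y0)
          have hL1 : 2 * q ∣ orderOf g :=
            hmin yr _ (by omega) hPBr (hnerA ht2) _ (hM yr)
          exact ⟨dvd_trans ⟨2, by ring⟩ hL1, hL0⟩
        · have hL0 : 2 * (q + 1) ∣ orderOf g :=
            hmin y0 _ (by omega) (hPA0 (by omega)) (hne0A hr2) _ (hM y0)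
          have hL1 : q ∣ orderOf g :=
            hmin yr _ (by omega) (hfixB ht1) (hnerB ht1) _ (hM yr)
          exact ⟨hL1, dvd_trans ⟨2, by ring⟩ hL0⟩
        · have hL0 : (q + 1) ∣ orderOf g :=
            hmin y0 _ (by omega) (hfixA hr1) (hne0B hr1) _ (hM y0)
          have hL1 : q ∣ orderOf g :=
            hmin yr _ (by omega) (hfixB ht1) (hnerB ht1) _ (hM yr)
          exact ⟨hL1, hL0⟩
      exact hcop.mul_dvd_of_dvd_of_dvd hparts.1 hparts.2
    exact Nat.dvd_antisymm hMd hdM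
  · -- case N = 2q
    intro hr0
    have hup : g ^ (2 * q) = 1 := by
      apply hone
      intro y hyd
      exact hPB y (by omega) hyd
    have hMd : orderOf g ∣ 2 * q := orderOf_dvd_of_pow_eq_one hup
    have hdM : 2 * q ∣ orderOf g :=
      hmin yr _ (by omega) hPBr (hnerA (by omega)) _ (hM yr)
    exact Nat.dvd_antisymm hMd hdM
end

section
/- For every j with 4 ≤ j ≤ n, the order of the product f_{j−2} f_{j−1} of consecutive pancake generators in the symmetric group S_n is j. -/
lemma pancake_apply_of_le (n m : ℕ) (a : Fin n) (h1 : (a : ℕ) ≤ m) (h2 : m < n) :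
    pancake n m a = ⟨m - (a : ℕ), Nat.lt_of_le_of_lt (Nat.sub_le m a) h2⟩ :=
  dif_pos ⟨h1, h2⟩

lemma pancake_apply_of_gt (n m : ℕ) (a : Fin n) (h1 : m < (a : ℕ)) :
    pancake n m a = a :=
  dif_neg (by omega)

/-- For every `j` with `4 ≤ j ≤ n`, the order of the product `f_{j-2} f_{j-1}` of
consecutive pancake generators in `S_n` is `j`. -/
theorem order_pancake_mul_consecutive (n j : ℕ) (hj4 : 4 ≤ j) (hjn : j ≤ n) :
    orderOf (pancake n (j - 2) * pancake n (j - 1)) = j := by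
  have hn : 0 < n := by omega
  set g := pancake n (j - 2) * pancake n (j - 1) with hg
  have hstep : ∀ k (hk : k < j) (hk0 : 0 < k),
      g ⟨k, by omega⟩ = ⟨k - 1, by omega⟩ := by
    intro k hk hk0
    rw [hg, Equiv.Perm.mul_apply,
      pancake_apply_of_le n (j - 1) _ (show k ≤ j - 1 by omega) (by omega),
      pancake_apply_of_le n (j - 2) _ (show j - 1 - k ≤ j - 2 by omega) (by omega)]
    exact Fin.ext (show j - 2 - (j - 1 - k) = k - 1 by omega)
  have hzero : g ⟨0, hn⟩ = ⟨j - 1, by omega⟩ := by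
    rw [hg, Equiv.Perm.mul_apply,
      pancake_apply_of_le n (j - 1) _ (show 0 ≤ j - 1 by omega) (by omega),
      pancake_apply_of_gt n (j - 2) _ (show j - 2 < j - 1 - 0 by omega)]
    exact Fin.ext (show j - 1 - 0 = j - 1 by omega)
  have hfix : ∀ x : Fin n, j ≤ (x : ℕ) → g x = x := by
    intro x hx
    rw [hg, Equiv.Perm.mul_apply,
      pancake_apply_of_gt n (j - 1) x (by omega),
      pancake_apply_of_gt n (j - 2) x (by omega)]
  have hpow : ∀ d (hd1 : 1 ≤ d) (hd2 : d ≤ j), (g ^ d) ⟨0, hn⟩ = ⟨j - d, by omega⟩ := by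
    intro d
    induction d with
    | zero => omega
    | succ d ih =>
      intro _ hdj
      rcases Nat.eq_zero_or_pos d with h0 | hd0
      · subst h0
        simpa using hzero
      · rw [pow_succ', Equiv.Perm.mul_apply, ih hd0 (by omega),
          hstep (j - d) (by omega) (by omega)]
        exact Fin.ext (show j - d - 1 = j - (d + 1) by omega)
  have hpt : ∀ x : Fin n, (g ^ j) x = x := by
    intro x
    rcases lt_or_ge (x : ℕ) j with hx | hx
    · rcases Nat.eq_zero_or_pos (x : ℕ) with h0 | hx0
      · have hx0' : x = ⟨0, hn⟩ := Fin.ext h0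
        rw [hx0', hpow j (by omega) le_rfl]
        exact Fin.ext (show j - j = 0 by omega)
      · have hx' : x = (g ^ (j - (x : ℕ))) ⟨0, hn⟩ := by
          rw [hpow (j - x) (by omega) (by omega)]
          exact Fin.ext (show (x : ℕ) = j - (j - x) by omega)
        have hj0 : (g ^ j) ⟨0, hn⟩ = ⟨0, hn⟩ := by
          rw [hpow j (by omega) le_rfl]
          exact Fin.ext (show j - j = 0 by omega)
        calc (g ^ j) x = (g ^ j * g ^ (j - (x:ℕ))) ⟨0, hn⟩ := by
              rw [Equiv.Perm.mul_apply, ← hx']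
          _ = (g ^ (j - (x:ℕ)) * g ^ j) ⟨0, hn⟩ := by
              rw [← pow_add, ← pow_add, Nat.add_comm]
          _ = (g ^ (j - (x:ℕ))) ⟨0, hn⟩ := by rw [Equiv.Perm.mul_apply, hj0]
          _ = x := hx'.symm
    · have : ∀ m, (g ^ m) x = x := by
        intro m
        induction m with
        | zero => rfl
        | succ m ih => rw [pow_succ', Equiv.Perm.mul_apply, ih, hfix x hx]
      exact this j
  have hj1 : g ^ j = 1 := by
    ext x
    rw [hpt x, Equiv.Perm.one_apply]
  have hdvd : orderOf g ∣ j := orderOf_dvd_of_pow_eq_one hj1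
  have hpos : 0 < orderOf g := orderOf_pos g
  by_contra hne
  have hlt : orderOf g < j := lt_of_le_of_ne (Nat.le_of_dvd (by omega) hdvd) hne
  have h1 := hpow (orderOf g) hpos hlt.le
  rw [pow_orderOf_eq_one, Equiv.Perm.one_apply] at h1
  have : (0 : ℕ) = j - orderOf g := congrArg Fin.val h1
  omega
end

section
/- For every j with 6 ≤ j ≤ n, the order of the product f_1 f_2 f_{j−1} of pancake generators in the symmetric group S_n is 6. -/
set_option maxHeartbeats 1000000


lemma pancake_apply (n m : ℕ) (a : Fin n) :
    ((pancake n m a : Fin n) : ℕ) = if (a : ℕ) ≤ m ∧ m < n then m - (a : ℕ) else a := by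
  simp only [pancake, Function.Involutive.coe_toPerm]
  split_ifs with h <;> simp [Function.Involutive.toPerm, h]

lemma gval (n m : ℕ) (hm : 5 ≤ m) (hn : m < n) (x : Fin n) :
    (((pancake n 1 * pancake n 2 * pancake n m) x : Fin n) : ℕ) =
      if (x : ℕ) = m - 2 then 1
      else if (x : ℕ) = m - 1 then 0
      else if (x : ℕ) = m then 2
      else if (x : ℕ) ≤ m then m - (x : ℕ)
      else x := by
  have hx := x.isLt
  simp only [Equiv.Perm.mul_apply, pancake_apply]
  split_ifs <;> omega

/-- For every `j` with `6 ≤ j ≤ n`, the order of `f_1 f_2 f_{j-1}` in `S_n` is `6`. -/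
theorem order_pancake_one_two_mul (n j : ℕ) (hj6 : 6 ≤ j) (hjn : j ≤ n) :
    orderOf (pancake n 1 * pancake n 2 * pancake n (j - 1)) = 6 := by
  generalize hmdef : j - 1 = m
  have hm : 5 ≤ m := by omega
  have hn : m < n := by omega
  set g := pancake n 1 * pancake n 2 * pancake n m with hg
  have gv : ∀ x : Fin n, ((g x : Fin n) : ℕ) =
      if (x : ℕ) = m - 2 then 1
      else if (x : ℕ) = m - 1 then 0
      else if (x : ℕ) = m then 2
      else if (x : ℕ) ≤ m then m - (x : ℕ)
      else x := by
    rw [hg]; exact gval n m hm hn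
  clear_value g
  -- the six elements of the 6-cycle
  have c0 : g ⟨0, by omega⟩ = ⟨m, hn⟩ := by
    apply Fin.ext
    simp only [gv]
    split_ifs <;> omega
  have cm : g ⟨m, hn⟩ = (⟨2, by omega⟩ : Fin n) := by
    apply Fin.ext
    simp only [gv]
    split_ifs <;> omega
  have c2 : g ⟨2, by omega⟩ = (⟨m - 2, by omega⟩ : Fin n) := by
    apply Fin.ext
    simp only [gv]
    split_ifs <;> omega
  have cm2 : g ⟨m - 2, by omega⟩ = (⟨1, by omega⟩ : Fin n) := by
    apply Fin.ext
    simp only [gv]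
    split_ifs <;> omega
  have c1 : g ⟨1, by omega⟩ = (⟨m - 1, by omega⟩ : Fin n) := by
    apply Fin.ext
    simp only [gv]
    split_ifs <;> omega
  have cm1 : g ⟨m - 1, by omega⟩ = (⟨0, by omega⟩ : Fin n) := by
    apply Fin.ext
    simp only [gv]
    split_ifs <;> omega
  have hpow : ∀ (p : ℕ) (x : Fin n), (g ^ (p + 1)) x = (g ^ p) (g x) := by
    intro p x
    rw [pow_succ, Equiv.Perm.mul_apply]
  have h6 : ∀ x : Fin n, g (g (g (g (g (g x))))) = x := by
    intro x
    have hx := x.isLt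
    have hcases : (x : ℕ) = 0 ∨ (x : ℕ) = 1 ∨ (x : ℕ) = 2 ∨ (x : ℕ) = m - 2 ∨
        (x : ℕ) = m - 1 ∨ (x : ℕ) = m ∨ (3 ≤ (x : ℕ) ∧ (x : ℕ) ≤ m - 3) ∨ m < (x : ℕ) := by
      omega
    rcases hcases with h | h | h | h | h | h | h | h
    · have hx0 : x = ⟨0, by omega⟩ := Fin.ext h
      simp only [hx0, c0, cm, c2, cm2, c1, cm1]
    · have hx0 : x = ⟨1, by omega⟩ := Fin.ext h
      simp only [hx0, c1, cm1, c0, cm, c2, cm2]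
    · have hx0 : x = ⟨2, by omega⟩ := Fin.ext h
      simp only [hx0, c2, cm2, c1, cm1, c0, cm]
    · have hx0 : x = ⟨m - 2, by omega⟩ := Fin.ext h
      simp only [hx0, cm2, c1, cm1, c0, cm, c2]
    · have hx0 : x = ⟨m - 1, by omega⟩ := Fin.ext h
      simp only [hx0, cm1, c0, cm, c2, cm2, c1]
    · have hx0 : x = ⟨m, hn⟩ := Fin.ext h
      simp only [hx0, cm, c2, cm2, c1, cm1, c0]
    · have e1 : g x = ⟨m - (x : ℕ), by omega⟩ := by
        apply Fin.ext; simp only [gv]; split_ifs <;> omega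
      have e2 : g ⟨m - (x : ℕ), by omega⟩ = x := by
        apply Fin.ext; simp only [gv]; split_ifs <;> omega
      simp only [e1, e2]
    · have e1 : g x = x := by
        apply Fin.ext; simp only [gv]; split_ifs <;> omega
      simp only [e1]
  rw [orderOf_eq_iff (by norm_num)]
  constructor
  · ext x
    simp only [pow_succ, pow_zero, one_mul, Equiv.Perm.mul_apply, Equiv.Perm.one_apply]
    exact congrArg Fin.val (h6 x)
  · intro p hp hp0
    interval_cases p <;> intro hcontra <;>
      [ (have hc := Equiv.ext_iff.mp hcontra ⟨0, by omega⟩;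
         simp only [pow_succ, pow_zero, one_mul, Equiv.Perm.mul_apply,
           Equiv.Perm.one_apply, c0, cm, c2, cm2, c1, cm1] at hc;
         have := congrArg Fin.val hc; simp only [] at this; omega);
        (have hc := Equiv.ext_iff.mp hcontra ⟨0, by omega⟩;
         simp only [pow_succ, pow_zero, one_mul, Equiv.Perm.mul_apply,
           Equiv.Perm.one_apply, c0, cm, c2, cm2, c1, cm1] at hc;
         have := congrArg Fin.val hc; simp only [] at this; omega);
        (have hc := Equiv.ext_iff.mp hcontra ⟨0, by omega⟩;
         simp only [pow_succ, pow_zero, one_mul, Equiv.Perm.mul_apply,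
           Equiv.Perm.one_apply, c0, cm, c2, cm2, c1, cm1] at hc;
         have := congrArg Fin.val hc; simp only [] at this; omega);
        (have hc := Equiv.ext_iff.mp hcontra ⟨0, by omega⟩;
         simp only [pow_succ, pow_zero, one_mul, Equiv.Perm.mul_apply,
           Equiv.Perm.one_apply, c0, cm, c2, cm2, c1, cm1] at hc;
         have := congrArg Fin.val hc; simp only [] at this; omega);
        (have hc := Equiv.ext_iff.mp hcontra ⟨0, by omega⟩;
         simp only [pow_succ, pow_zero, one_mul, Equiv.Perm.mul_apply,
           Equiv.Perm.one_apply, c0, cm, c2, cm2, c1, cm1] at hc;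
         have := congrArg Fin.val hc; simp only [] at this; omega)]
end

section
/- For every k with 3 ≤ k ≤ n, the order of the product f_1 f_{k−2} f_{k−1} of pancake generators in the symmetric group S_n is k−1. -/
lemma pancake_val {n : ℕ} (m : ℕ) (hm : m < n) (a : Fin n) :
    ((pancake n m a : Fin n) : ℕ) = if (a : ℕ) ≤ m then m - (a : ℕ) else (a : ℕ) := by
  show ((dite _ _ _ : Fin n) : ℕ) = _
  by_cases h : (a : ℕ) ≤ m
  · rw [dif_pos ⟨h, hm⟩, if_pos h]
  · rw [dif_neg (fun hc => h hc.1), if_neg h]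

/-- For every `k` with `3 ≤ k ≤ n`, the order of `f_1 f_{k-2} f_{k-1}` in `S_n` is
`k - 1`. -/
theorem order_pancake_one_consecutive (n k : ℕ) (hk3 : 3 ≤ k) (hkn : k ≤ n) :
    orderOf (pancake n 1 * pancake n (k - 2) * pancake n (k - 1)) = k - 1 := by
  have h0 : 0 < n := by omega
  set g := pancake n 1 * pancake n (k - 2) * pancake n (k - 1) with hg
  have gval : ∀ a : Fin n, ((g a : Fin n) : ℕ) =
      if (a : ℕ) = 0 then k - 1 else if (a : ℕ) = 1 then 1 else if (a : ℕ) = 2 then 0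
      else if (a : ℕ) ≤ k - 1 then (a : ℕ) - 1 else (a : ℕ) := by
    intro a
    have := a.isLt
    show ((pancake n 1 (pancake n (k - 2) (pancake n (k - 1) a)) : Fin n) : ℕ) = _
    rw [pancake_val 1 (by omega), pancake_val (k - 2) (by omega),
      pancake_val (k - 1) (by omega)]
    split_ifs <;> omega
  have hpow0 : ∀ j, 1 ≤ j → j ≤ k - 2 →
      (((g ^ j) ⟨0, h0⟩ : Fin n) : ℕ) = k - j := by
    intro j
    induction j with
    | zero => omega
    | succ j ih =>
      intro _ h2
      by_cases hj : j = 0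
      · subst hj
        rw [pow_one, gval]
        simp
      · have hih := ih (by omega) (by omega)
        rw [pow_succ', Equiv.Perm.mul_apply, gval, hih]
        split_ifs <;> omega
  have hcyc : (((g ^ (k - 1)) ⟨0, h0⟩ : Fin n) : ℕ) = 0 := by
    have h2 := hpow0 (k - 2) (by omega) le_rfl
    have hk1 : k - 1 = (k - 2) + 1 := by omega
    rw [hk1, pow_succ', Equiv.Perm.mul_apply, gval, h2]
    split_ifs <;> omega
  have hcycF : (g ^ (k - 1)) ⟨0, h0⟩ = ⟨0, h0⟩ := Fin.ext hcyc
  have fixall : ∀ a : Fin n, (g ^ (k - 1)) a = a := by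
    intro a
    have hlt := a.isLt
    by_cases h0a : (a : ℕ) = 0
    · have ha : a = ⟨0, h0⟩ := Fin.ext h0a
      rw [ha]; exact hcycF
    · by_cases h1a : (a : ℕ) = 1
      · exact Equiv.Perm.pow_apply_eq_self_of_apply_eq_self
          (Fin.ext (by rw [gval]; split_ifs <;> omega)) _
      · by_cases hka : k ≤ (a : ℕ)
        · exact Equiv.Perm.pow_apply_eq_self_of_apply_eq_self
            (Fin.ext (by rw [gval]; split_ifs <;> omega)) _
        · -- 2 ≤ a ≤ k - 1
          have ha : (g ^ (k - (a : ℕ))) ⟨0, h0⟩ = a := by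
            refine Fin.ext ?_
            rw [hpow0 (k - (a : ℕ)) (by omega) (by omega)]
            omega
          rw [← ha]
          calc (g ^ (k - 1)) ((g ^ (k - (a : ℕ))) ⟨0, h0⟩)
              = (g ^ ((k - 1) + (k - (a : ℕ)))) ⟨0, h0⟩ := by
                rw [pow_add, Equiv.Perm.mul_apply]
            _ = (g ^ ((k - (a : ℕ)) + (k - 1))) ⟨0, h0⟩ := by rw [add_comm]
            _ = (g ^ (k - (a : ℕ))) ((g ^ (k - 1)) ⟨0, h0⟩) := by
                rw [pow_add, Equiv.Perm.mul_apply]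
            _ = (g ^ (k - (a : ℕ))) ⟨0, h0⟩ := by rw [hcycF]
  rw [orderOf_eq_iff (by omega : 0 < k - 1)]
  constructor
  · exact Equiv.ext fun a => (fixall a).trans (Equiv.Perm.one_apply a).symm
  · intro m hm hm0 hc
    have hv := hpow0 m hm0 (by omega)
    rw [hc] at hv
    simp at hv
    omega
end

section
/- Let 1 < j < k ≤ n. If j = k−2 and k is odd, then the order of f_1 f_{j−1} f_{k−1} in S_n is k. Likewise, if j = k−3 and k is not congruent to 2 modulo 3, then the order of f_1 f_{j−1} f_{k−1} in S_n is k. -/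
set_option maxHeartbeats 4000000

def pval (m x : ℕ) : ℕ := if x ≤ m then m - x else x

lemma pancake_val_s8 {n : ℕ} (m : ℕ) (h : m < n) (a : Fin n) :
    ((pancake n m a : Fin n) : ℕ) = pval m (a : ℕ) := by
  have he : pancake n m a = if h' : (a : ℕ) ≤ m ∧ m < n then
      ⟨m - (a : ℕ), Nat.lt_of_le_of_lt (Nat.sub_le m a) h'.2⟩ else a := rfl
  rw [he]; unfold pval
  by_cases hc : (a : ℕ) ≤ m
  · rw [dif_pos ⟨hc, h⟩, if_pos hc]
  · rw [dif_neg (by tauto), if_neg hc]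

lemma g_val {n : ℕ} (p q : ℕ) (h1 : 1 < n) (hp : p < n) (hq : q < n) (a : Fin n) :
    (((pancake n 1 * pancake n p * pancake n q) a : Fin n) : ℕ)
      = pval 1 (pval p (pval q (a : ℕ))) := by
  rw [Equiv.Perm.mul_apply, Equiv.Perm.mul_apply, pancake_val_s8 1 h1,
    pancake_val_s8 p hp, pancake_val_s8 q hq]

lemma orderOf_eq_of_traj {n k : ℕ} (hk1 : 0 < k) (hkn : k ≤ n)
    (g : Equiv.Perm (Fin n)) (T : ℕ → ℕ)
    (hT0 : T 0 = 0) (hTk : T k = 0)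
    (hTlt : ∀ i, i < k → T i < k)
    (hTne : ∀ i, 0 < i → i < k → T i ≠ 0)
    (hinj : ∀ i i', i < k → i' < k → T i = T i' → i = i')
    (hstep : ∀ i, i < k → ∀ a : Fin n, (a : ℕ) = T i → ((g a : Fin n) : ℕ) = T (i + 1))
    (hfix : ∀ a : Fin n, k ≤ (a : ℕ) → g a = a) :
    orderOf g = k := by
  have h0n : 0 < n := lt_of_lt_of_le hk1 hkn
  have traj : ∀ i, i ≤ k → (((g ^ i) ⟨0, h0n⟩ : Fin n) : ℕ) = T i := by
    intro i
    induction i with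
    | zero => intro _; simpa using hT0.symm
    | succ i ih =>
      intro h
      have hik : i < k := h
      rw [pow_succ', Equiv.Perm.mul_apply]
      exact hstep i hik _ (ih (le_of_lt hik))
  have fixpow : ∀ (m : ℕ) (a : Fin n), k ≤ (a : ℕ) → (g ^ m) a = a := by
    intro m; induction m with
    | zero => intro a _; simp
    | succ m ih => intro a ha; rw [pow_succ', Equiv.Perm.mul_apply, ih a ha, hfix a ha]
  have hsurj : ∀ v, v < k → ∃ i, i < k ∧ T i = v := by
    have hs : Function.Surjective (fun i : Fin k => (⟨T i, hTlt i i.isLt⟩ : Fin k)) := by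
      apply Finite.surjective_of_injective
      intro i i' h
      exact Fin.ext (hinj i i' i.isLt i'.isLt (by simpa using congrArg Fin.val h))
    intro v hv
    obtain ⟨i, hi⟩ := hs ⟨v, hv⟩
    exact ⟨i, i.isLt, by simpa using congrArg Fin.val hi⟩
  have hzk : (g ^ k) ⟨0, h0n⟩ = ⟨0, h0n⟩ := Fin.ext (by rw [traj k le_rfl, hTk])
  have gk : g ^ k = 1 := by
    apply Equiv.ext
    intro a
    simp only [Equiv.Perm.coe_one, id_eq]
    rcases le_or_gt k (a : ℕ) with h | h
    · exact fixpow k a h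
    · obtain ⟨i, hi, hTi⟩ := hsurj a h
      have ha : a = (g ^ i) ⟨0, h0n⟩ := Fin.ext (by rw [traj i (le_of_lt hi), hTi])
      rw [ha, ← Equiv.Perm.mul_apply, ← pow_add, Nat.add_comm, pow_add,
        Equiv.Perm.mul_apply, hzk]
  rw [orderOf_eq_iff hk1]
  refine ⟨gk, ?_⟩
  intro m hm hm0 he
  have h2 : (((g ^ m) ⟨0, h0n⟩ : Fin n) : ℕ) = T m := traj m (le_of_lt hm)
  rw [he] at h2
  exact hTne m hm0 hm (by simpa using h2.symm)

def TA (k i : ℕ) : ℕ :=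
  if i = 0 then 0
  else if k ≤ i then 0
  else if i ≤ (k-1)/2 then k+1-2*i
  else if i = (k-1)/2 + 1 then 1
  else 2*k+1-2*i

lemma caseA {n k : ℕ} (h5 : 5 ≤ k) (hodd : k % 2 = 1) (hkn : k ≤ n) :
    orderOf (pancake n 1 * pancake n (k-3) * pancake n (k-1)) = k := by
  have h1n : 1 < n := by omega
  have hp : k - 3 < n := by omega
  have hq : k - 1 < n := by omega
  refine orderOf_eq_of_traj (by omega) hkn _ (TA k) ?_ ?_ ?_ ?_ ?_ ?_ ?_
  · unfold TA; split_ifs <;> omega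
  · unfold TA; split_ifs <;> omega
  · intro i hi; unfold TA; split_ifs <;> omega
  · intro i h0 hik; unfold TA; split_ifs <;> omega
  · intro i i' hi hi' h; unfold TA at h; split_ifs at h <;> omega
  · intro i hi a ha
    rw [g_val (k-3) (k-1) h1n hp hq]
    unfold TA at ha ⊢
    unfold pval
    split_ifs at ha ⊢ <;> first | contradiction | omega
  · intro a ha
    apply Fin.ext
    rw [g_val (k-3) (k-1) h1n hp hq]
    unfold pval; split_ifs <;> omega

def TB0 (k i : ℕ) : ℕ :=
  if i = 0 then 0
  else if k ≤ i then 0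
  else if i ≤ k/3 then k+2-3*i
  else if i ≤ 2*(k/3) - 1 then 2*k - 3*i
  else if i = 2*(k/3) then 1
  else 3*k+1-3*i

def TB1 (k i : ℕ) : ℕ :=
  if i = 0 then 0
  else if k ≤ i then 0
  else if i ≤ k/3 then k+2-3*i
  else if i = k/3 + 1 then 1
  else if i ≤ 2*(k/3) + 1 then 2*k+3-3*i
  else 3*k+1-3*i

lemma caseB0 {n k : ℕ} (h5 : 5 ≤ k) (h3 : k % 3 = 0) (hkn : k ≤ n) :
    orderOf (pancake n 1 * pancake n (k-4) * pancake n (k-1)) = k := by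
  have h1n : 1 < n := by omega
  have hp : k - 4 < n := by omega
  have hq : k - 1 < n := by omega
  refine orderOf_eq_of_traj (by omega) hkn _ (TB0 k) ?_ ?_ ?_ ?_ ?_ ?_ ?_
  · unfold TB0; split_ifs <;> omega
  · unfold TB0; split_ifs <;> omega
  · intro i hi; unfold TB0; split_ifs <;> omega
  · intro i h0 hik; unfold TB0; split_ifs <;> omega
  · intro i i' hi hi' h; unfold TB0 at h; split_ifs at h <;> omega
  · intro i hi a ha
    rw [g_val (k-4) (k-1) h1n hp hq]
    unfold TB0 at ha ⊢
    unfold pval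
    split_ifs at ha ⊢ <;> first | contradiction | omega
  · intro a ha
    apply Fin.ext
    rw [g_val (k-4) (k-1) h1n hp hq]
    unfold pval; split_ifs <;> omega

lemma caseB1 {n k : ℕ} (h5 : 5 ≤ k) (h3 : k % 3 = 1) (hkn : k ≤ n) :
    orderOf (pancake n 1 * pancake n (k-4) * pancake n (k-1)) = k := by
  have h1n : 1 < n := by omega
  have hp : k - 4 < n := by omega
  have hq : k - 1 < n := by omega
  refine orderOf_eq_of_traj (by omega) hkn _ (TB1 k) ?_ ?_ ?_ ?_ ?_ ?_ ?_
  · unfold TB1; split_ifs <;> omega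
  · unfold TB1; split_ifs <;> omega
  · intro i hi; unfold TB1; split_ifs <;> omega
  · intro i h0 hik; unfold TB1; split_ifs <;> omega
  · intro i i' hi hi' h; unfold TB1 at h; split_ifs at h <;> omega
  · intro i hi a ha
    rw [g_val (k-4) (k-1) h1n hp hq]
    unfold TB1 at ha ⊢
    unfold pval
    split_ifs at ha ⊢ <;> first | contradiction | omega
  · intro a ha
    apply Fin.ext
    rw [g_val (k-4) (k-1) h1n hp hq]
    unfold pval; split_ifs <;> omega

/-- Let `1 < j < k ≤ n`.  If `j = k - 2` and `k` is odd, then the order of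
`f_1 f_{j-1} f_{k-1}` in `S_n` is `k`; likewise if `j = k - 3` and `k` is not congruent
to `2` modulo `3`, then the order of `f_1 f_{j-1} f_{k-1}` in `S_n` is `k`. -/
theorem order_pancake_one_diff_two_three (n j k : ℕ) (hj : 1 < j) (hjk : j < k)
    (hkn : k ≤ n) :
    (j = k - 2 → Odd k →
      orderOf (pancake n 1 * pancake n (j - 1) * pancake n (k - 1)) = k) ∧
    (j = k - 3 → k % 3 ≠ 2 →
      orderOf (pancake n 1 * pancake n (j - 1) * pancake n (k - 1)) = k) := by
  constructor
  · intro hA hodd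
    have hodd' : k % 2 = 1 := Nat.odd_iff.mp hodd
    subst hA
    rw [show k - 2 - 1 = k - 3 from by omega]
    exact caseA (by omega) hodd' hkn
  · intro hB h3
    subst hB
    rw [show k - 3 - 1 = k - 4 from by omega]
    rcases (by omega : k % 3 = 0 ∨ k % 3 = 1) with h | h
    · exact caseB0 (by omega) h hkn
    · exact caseB1 (by omega) h hkn
end

section
/- Let 1 < j < k ≤ n with k ≥ 5, and set d = k−j, q = ⌊k/d⌋, r = k mod d. If r = 0 and d ≥ 4, then the order of f_1 f_{j−1} f_{k−1} in S_n equals 4q. -/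
namespace PancakeAux

/-- The one-step action on positions (as natural numbers) of `f_1 f_{j-1} f_{k-1}`,
where `d = k - j`. -/
def pstep (d k a : ℕ) : ℕ :=
  if a < d then k - 1 - a
  else if a = d then 1
  else if a = d + 1 then 0
  else if a < k then a - d
  else a

lemma pstep_big {d k a : ℕ} (hd : 2 ≤ d) (hk : d + 2 ≤ k) (h : k ≤ a) : pstep d k a = a := by
  unfold pstep
  rw [if_neg (by omega), if_neg (by omega), if_neg (by omega), if_neg (by omega)]

lemma pstep_mid {d k a : ℕ} (h1 : d + 2 ≤ a) (h2 : a < k) : pstep d k a = a - d := by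
  unfold pstep
  rw [if_neg (by omega), if_neg (by omega), if_neg (by omega), if_pos h2]

lemma pstep_low {d k a : ℕ} (h1 : a < d) : pstep d k a = k - 1 - a := by
  unfold pstep; rw [if_pos h1]

lemma pstep_d {d k : ℕ} : pstep d k d = 1 := by
  unfold pstep; rw [if_neg (by omega), if_pos rfl]

lemma pstep_d1 {d k : ℕ} : pstep d k (d + 1) = 0 := by
  unfold pstep; rw [if_neg (by omega), if_neg (by omega), if_pos rfl]

/-- Descent: repeatedly subtracting `d`. -/
lemma desc {d k : ℕ} (hd : 2 ≤ d) :
    ∀ (i m c : ℕ), 2 ≤ c → c + (m + i) * d < k →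
      (pstep d k)^[i] (c + (m + i) * d) = c + m * d := by
  intro i
  induction i with
  | zero => intro m c _ _; simp
  | succ i ih =>
    intro m c hc hlt
    rw [Function.iterate_succ_apply]
    have h1 : c + (m + (i + 1)) * d = (c + (m + i) * d) + d := by ring
    rw [h1] at hlt ⊢
    rw [pstep_mid (by omega) hlt, Nat.add_sub_cancel]
    exact ih m c hc (by omega)

lemma stepA {d k q : ℕ} (hd : 4 ≤ d) (hk : k = q * d) (c s m : ℕ)
    (hc : c + 3 ≤ d) (hsm : s + 1 + m = q) :
    (pstep d k)^[s + 1] c = (d - 1 - c) + m * d := by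
  rw [Function.iterate_succ_apply, pstep_low (by omega)]
  have hq : k = (m + s) * d + d := by rw [hk, ← hsm]; ring
  have h1 : k - 1 - c = (d - 1 - c) + (m + s) * d := by omega
  rw [h1]
  exact desc (by omega) s m (d - 1 - c) (by omega) (by omega)

lemma s1 {d k q : ℕ} (hd : 4 ≤ d) (hk : k = q * d) (s m : ℕ) (hsm : s + 1 + m = q) :
    (pstep d k)^[s + 1] 0 = (d - 1) + m * d := by
  have h := stepA hd hk 0 s m (by omega) hsm
  simpa using h

lemma sq {d k q : ℕ} (hd : 4 ≤ d) (hq : 2 ≤ q) (hk : k = q * d) :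
    (pstep d k)^[q] 0 = d - 1 := by
  have h := s1 hd hk (q - 1) 0 (by omega)
  rw [show q - 1 + 1 = q by omega] at h
  simpa using h

lemma s2 {d k q : ℕ} (hd : 4 ≤ d) (hq : 2 ≤ q) (hk : k = q * d) (s m : ℕ)
    (hsm : s + 2 + m = q) :
    (pstep d k)^[(s + 1) + q] 0 = d + m * d := by
  rw [Function.iterate_add_apply, sq hd hq hk, Function.iterate_succ_apply,
    pstep_low (by omega)]
  have hq2 : k = (m + s) * d + d + d := by rw [hk, ← hsm]; ring
  have h1 : k - 1 - (d - 1) = d + (m + s) * d := by omega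
  rw [h1]
  exact desc (by omega) s m d (by omega) (by omega)

lemma s3 {d k q : ℕ} (hd : 4 ≤ d) (hq : 2 ≤ q) (hk : k = q * d) :
    (pstep d k)^[2 * q] 0 = 1 := by
  have h := s2 hd hq hk (q - 2) 0 (by omega)
  rw [show (q - 2 + 1) + q = 2 * q - 1 by omega] at h
  simp only [Nat.zero_mul, Nat.add_zero] at h
  rw [show 2 * q = 1 + (2 * q - 1) by omega, Function.iterate_add_apply, h,
    Function.iterate_one, pstep_d]

lemma s4 {d k q : ℕ} (hd : 4 ≤ d) (hq : 2 ≤ q) (hk : k = q * d) (s m : ℕ)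
    (hsm : s + 1 + m = q) :
    (pstep d k)^[(s + 1) + 2 * q] 0 = (d - 2) + m * d := by
  rw [Function.iterate_add_apply, s3 hd hq hk]
  have h := stepA hd hk 1 s m (by omega) hsm
  rw [h]
  omega

lemma s3q {d k q : ℕ} (hd : 4 ≤ d) (hq : 2 ≤ q) (hk : k = q * d) :
    (pstep d k)^[3 * q] 0 = d - 2 := by
  have h := s4 hd hq hk (q - 1) 0 (by omega)
  rw [show (q - 1 + 1) + 2 * q = 3 * q by omega] at h
  simpa using h

lemma s5 {d k q : ℕ} (hd : 4 ≤ d) (hq : 2 ≤ q) (hk : k = q * d) (s m : ℕ)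
    (hsm : s + 2 + m = q) :
    (pstep d k)^[(s + 1) + 3 * q] 0 = (d + 1) + m * d := by
  rw [Function.iterate_add_apply, s3q hd hq hk, Function.iterate_succ_apply,
    pstep_low (by omega)]
  have hq2 : k = (m + s) * d + d + d := by rw [hk, ← hsm]; ring
  have h1 : k - 1 - (d - 2) = (d + 1) + (m + s) * d := by omega
  rw [h1]
  exact desc (by omega) s m (d + 1) (by omega) (by omega)

lemma s6 {d k q : ℕ} (hd : 4 ≤ d) (hq : 2 ≤ q) (hk : k = q * d) :
    (pstep d k)^[4 * q] 0 = 0 := by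
  have h := s5 hd hq hk (q - 2) 0 (by omega)
  rw [show (q - 2 + 1) + 3 * q = 4 * q - 1 by omega] at h
  simp only [Nat.zero_mul, Nat.add_zero] at h
  rw [show 4 * q = 1 + (4 * q - 1) by omega, Function.iterate_add_apply, h,
    Function.iterate_one, pstep_d1]

lemma ne0 {d k q : ℕ} (hd : 4 ≤ d) (hq : 2 ≤ q) (hk : k = q * d) (t : ℕ)
    (h0 : 0 < t) (h4 : t < 4 * q) : (pstep d k)^[t] 0 ≠ 0 := by
  rcases Nat.lt_or_ge t (q + 1) with h | h
  · rw [show t = (t - 1) + 1 by omega, s1 hd hk (t - 1) (q - t) (by omega)]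
    omega
  rcases Nat.lt_or_ge t (2 * q) with h2 | h2
  · rw [show t = ((t - q - 1) + 1) + q by omega,
      s2 hd hq hk (t - q - 1) (2 * q - 1 - t) (by omega)]
    omega
  rcases Nat.lt_or_ge t (2 * q + 1) with h3 | h3
  · rw [show t = 2 * q by omega, s3 hd hq hk]; omega
  rcases Nat.lt_or_ge t (3 * q + 1) with h5 | h5
  · rw [show t = ((t - 2 * q - 1) + 1) + 2 * q by omega,
      s4 hd hq hk (t - 2 * q - 1) (3 * q - t) (by omega)]
    omega
  · rw [show t = ((t - 3 * q - 1) + 1) + 3 * q by omega,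
      s5 hd hq hk (t - 3 * q - 1) (4 * q - 1 - t) (by omega)]
    omega

lemma sideq {d k q : ℕ} (hd : 4 ≤ d) (hq : 2 ≤ q) (hk : k = q * d) (c : ℕ)
    (hc2 : 2 ≤ c) (hc3 : c + 3 ≤ d) :
    (pstep d k)^[q] c = d - 1 - c := by
  have h := stepA hd hk c (q - 1) 0 hc3 (by omega)
  rw [show q - 1 + 1 = q by omega] at h
  simpa using h

lemma side2 {d k q : ℕ} (hd : 4 ≤ d) (hq : 2 ≤ q) (hk : k = q * d) (c : ℕ)
    (hc2 : 2 ≤ c) (hc3 : c + 3 ≤ d) :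
    (pstep d k)^[2 * q] c = c := by
  rw [show 2 * q = q + q by omega, Function.iterate_add_apply, sideq hd hq hk c hc2 hc3,
    sideq hd hq hk (d - 1 - c) (by omega) (by omega)]
  omega

lemma side4 {d k q : ℕ} (hd : 4 ≤ d) (hq : 2 ≤ q) (hk : k = q * d) (c : ℕ)
    (hc2 : 2 ≤ c) (hc3 : c + 3 ≤ d) :
    (pstep d k)^[4 * q] c = c := by
  rw [show 4 * q = 2 * q + 2 * q by omega, Function.iterate_add_apply,
    side2 hd hq hk c hc2 hc3, side2 hd hq hk c hc2 hc3]

lemma all_fixed {d k q : ℕ} (hd : 4 ≤ d) (hq : 2 ≤ q) (hk : k = q * d) (a : ℕ) :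
    (pstep d k)^[4 * q] a = a := by
  have h2d : 2 * d ≤ q * d := Nat.mul_le_mul_right d hq
  have hk2d : d + d ≤ k := by omega
  by_cases ha : a < k
  swap
  · exact Function.iterate_fixed (pstep_big (by omega) (by omega) (le_of_not_gt ha)) _
  -- key: if a is in the forward orbit of a 4q-periodic point, then a is 4q-periodic
  have key : ∀ t x, (pstep d k)^[4 * q] x = x → (pstep d k)^[t] x = a →
      (pstep d k)^[4 * q] a = a := by
    intro t x hx hta
    have h1 : (pstep d k)^[t + 4 * q] x = a := by
      rw [Function.iterate_add_apply, hx, hta]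
    have h2 : (pstep d k)^[4 * q + t] x = (pstep d k)^[4 * q] a := by
      rw [Function.iterate_add_apply, hta]
    rw [← h2, show 4 * q + t = t + 4 * q by omega, h1]
  obtain ⟨c, m, hcd, hmq, rfl⟩ : ∃ c m, c < d ∧ m < q ∧ a = c + m * d := by
    refine ⟨a % d, a / d, Nat.mod_lt _ (by omega), ?_, by rw [Nat.mod_add_div']⟩
    rw [Nat.div_lt_iff_lt_mul (by omega : 0 < d)]
    omega
  by_cases hc0 : c = 0
  · subst hc0
    rcases m with _ | m'
    · simpa using s6 hd hq hk
    · refine key (((q - m' - 2) + 1) + q) 0 (s6 hd hq hk) ?_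
      rw [s2 hd hq hk (q - m' - 2) m' (by omega)]
      have : d + m' * d = 0 + (m' + 1) * d := by ring
      omega
  by_cases hc1 : c = 1
  · subst hc1
    rcases m with _ | m'
    · refine key (2 * q) 0 (s6 hd hq hk) ?_
      rw [s3 hd hq hk]; omega
    · refine key (((q - m' - 2) + 1) + 3 * q) 0 (s6 hd hq hk) ?_
      rw [s5 hd hq hk (q - m' - 2) m' (by omega)]
      have : (d + 1) + m' * d = 1 + (m' + 1) * d := by ring
      omega
  by_cases hcd1 : c = d - 1
  · subst hcd1
    refine key ((q - m - 1) + 1) 0 (s6 hd hq hk) ?_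
    rw [s1 hd hk (q - m - 1) m (by omega)]
  by_cases hcd2 : c = d - 2
  · subst hcd2
    refine key (((q - m - 1) + 1) + 2 * q) 0 (s6 hd hq hk) ?_
    rw [s4 hd hq hk (q - m - 1) m (by omega)]
  -- remaining: 2 ≤ c ≤ d - 3
  have hc2 : 2 ≤ c := by omega
  have hc3 : c + 3 ≤ d := by omega
  rcases m with _ | m'
  · refine key 0 (c + 0 * d) ?_ rfl
    simpa using side4 hd hq hk c hc2 hc3
  · refine key ((q - m' - 2) + 1) (d - 1 - c) (side4 hd hq hk (d - 1 - c) (by omega) (by omega)) ?_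
    rw [stepA hd hk (d - 1 - c) (q - m' - 2) (m' + 1) (by omega) (by omega)]
    congr 1
    omega

lemma pancake_lt' {n m v : ℕ} (hv : v < n) (h1 : v ≤ m) (h2 : m < n) :
    pancake n m ⟨v, hv⟩ = ⟨m - v, Nat.lt_of_le_of_lt (Nat.sub_le m v) h2⟩ := by
  show (Function.Involutive.toPerm _ _) _ = _
  exact dif_pos ⟨h1, h2⟩

lemma pancake_gt' {n m v : ℕ} (hv : v < n) (h1 : m < v) :
    pancake n m ⟨v, hv⟩ = ⟨v, hv⟩ := by
  show (Function.Involutive.toPerm _ _) _ = _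
  exact dif_neg (fun h => absurd h.1 (Nat.not_le.mpr h1))

lemma triple_val {n j k d : ℕ} (hj : 1 < j) (hjk : j < k) (hkn : k ≤ n)
    (hd : d = k - j) (hd4 : 4 ≤ d) (a : Fin n) :
    (((pancake n 1 * pancake n (j - 1) * pancake n (k - 1)) a : Fin n) : ℕ)
      = pstep d k (a : ℕ) := by
  obtain ⟨v, hv⟩ := a
  have hjd : j = k - d := by omega
  simp only [Equiv.Perm.mul_apply]
  by_cases h1 : v < k
  · rw [pancake_lt' hv (by omega) (by omega)]
    by_cases h2 : v < d
    · rw [pancake_gt' _ (by omega : j - 1 < k - 1 - v),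
        pancake_gt' _ (by omega : (1 : ℕ) < k - 1 - v)]
      show k - 1 - v = pstep d k v
      rw [pstep_low h2]
    · rw [pancake_lt' _ (by omega : k - 1 - v ≤ j - 1) (by omega)]
      by_cases h3 : v < d + 2
      · rw [pancake_lt' _ (by omega : j - 1 - (k - 1 - v) ≤ 1) (by omega)]
        show 1 - (j - 1 - (k - 1 - v)) = pstep d k v
        rcases (by omega : v = d ∨ v = d + 1) with h | h
        · subst h; rw [pstep_d]; omega
        · subst h; rw [pstep_d1]; omega
      · rw [pancake_gt' _ (by omega : 1 < j - 1 - (k - 1 - v))]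
        show j - 1 - (k - 1 - v) = pstep d k v
        rw [pstep_mid (by omega) h1]
        omega
  · rw [pancake_gt' hv (by omega), pancake_gt' hv (by omega), pancake_gt' hv (by omega)]
    show v = pstep d k v
    rw [pstep_big (by omega) (by omega) (by omega)]

lemma triple_pow_val {n j k d : ℕ} (hj : 1 < j) (hjk : j < k) (hkn : k ≤ n)
    (hd : d = k - j) (hd4 : 4 ≤ d) (t : ℕ) (a : Fin n) :
    ((((pancake n 1 * pancake n (j - 1) * pancake n (k - 1)) ^ t) a : Fin n) : ℕ)
      = (pstep d k)^[t] (a : ℕ) := by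
  induction t generalizing a with
  | zero => simp
  | succ t ih =>
    rw [pow_succ, Equiv.Perm.mul_apply, ih, Function.iterate_succ_apply,
      triple_val hj hjk hkn hd hd4]

end PancakeAux

/-- Let `1 < j < k ≤ n` with `k ≥ 5`, and set `d = k - j`, `q = ⌊k/d⌋`, `r = k mod d`.
If `r = 0` and `d ≥ 4`, then the order of `f_1 f_{j-1} f_{k-1}` in `S_n` is `4q`. -/
theorem order_pancake_one_triple_r_zero (n j k d q r : ℕ) (hj : 1 < j) (hjk : j < k)
    (hkn : k ≤ n) (hk5 : 5 ≤ k) (hd : d = k - j) (hq : q = k / d) (hr : r = k % d)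
    (hr0 : r = 0) (hd4 : 4 ≤ d) :
    orderOf (pancake n 1 * pancake n (j - 1) * pancake n (k - 1)) = 4 * q := by
  open PancakeAux in
  have hdvd : d ∣ k := Nat.dvd_of_mod_eq_zero (by omega)
  have hk : k = q * d := by rw [hq]; exact (Nat.div_mul_cancel hdvd).symm
  have hq2 : 2 ≤ q := by
    rcases Nat.lt_or_ge q 2 with h | h
    · interval_cases q <;> omega
    · exact h
  set g := pancake n 1 * pancake n (j - 1) * pancake n (k - 1) with hg
  have hn5 : 5 ≤ n := le_trans hk5 hkn
  have hpow : ∀ (t : ℕ) (a : Fin n), (((g ^ t) a : Fin n) : ℕ) = (pstep d k)^[t] (a : ℕ) :=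
    fun t a => triple_pow_val hj hjk hkn hd hd4 t a
  have h1 : g ^ (4 * q) = 1 := by
    refine Equiv.ext fun a => Fin.val_injective ?_
    rw [hpow]
    simp only [Equiv.Perm.one_apply]
    exact all_fixed hd4 hq2 hk (a : ℕ)
  have hordvd : orderOf g ∣ 4 * q := orderOf_dvd_of_pow_eq_one h1
  have hpos : 0 < orderOf g := orderOf_pos g
  have hzero : (pstep d k)^[orderOf g] 0 = 0 := by
    have h := hpow (orderOf g) ⟨0, by omega⟩
    rw [pow_orderOf_eq_one] at h
    simpa using h.symm
  have hlt : ¬ orderOf g < 4 * q := fun hlt => ne0 hd4 hq2 hk (orderOf g) hpos hlt hzero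
  have hle : orderOf g ≤ 4 * q := Nat.le_of_dvd (by omega) hordvd
  omega
end

section
/- Let 1 < j < k ≤ n with k ≥ 5, and set d = k−j, q = ⌊k/d⌋, r = k mod d. Suppose r = 1. Then the order of f_1 f_{j−1} f_{k−1} in S_n equals: 2q+1 if d = 2; q(3q+1) if d = 4, or if d ≥ 5 and q is odd; and 2q(3q+1) if d ≥ 5 and q is even. -/
namespace PancakeOrder

def F (d q : ℕ) (a : ℕ) : ℕ :=
  if a < d then q * d - a
  else if a = d then 1
  else if a = d + 1 then 0
  else if a ≤ q * d then a - d
  else a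

variable {d q : ℕ}

lemma F_lo {a : ℕ} (h : a < d) : F d q a = q * d - a := by simp [F, h]
lemma F_d : F d q d = 1 := by simp [F, Nat.lt_irrefl]
lemma F_d1 : F d q (d + 1) = 0 := by
  have : ¬ (d + 1 < d) := by omega
  simp [F, this]
lemma F_mid {a : ℕ} (h1 : d + 2 ≤ a) (h2 : a ≤ q * d) : F d q a = a - d := by
  have : ¬ (a < d) := by omega
  have h3 : a ≠ d := by omega
  have h4 : a ≠ d + 1 := by omega
  simp [F, this, h3, h4, h2]

lemma F_hi {a : ℕ} (hd : 2 ≤ d) (hq : 2 ≤ q) (h : q * d < a) : F d q a = a := by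
  have hdd : 2 * d ≤ q * d := Nat.mul_le_mul_right d hq
  have h2 : ¬ (a < d) := by omega
  have h3 : a ≠ d := by omega
  have h4 : a ≠ d + 1 := by omega
  have h5 : ¬ (a ≤ q * d) := by omega
  simp [F, h2, h3, h4, h5]

lemma F_iter_desc : ∀ t a, d + 2 + t * d ≤ a → a ≤ q * d → (F d q)^[t] a = a - t * d := by
  intro t
  induction t with
  | zero => intro a _ _; simp
  | succ t ih =>
    intro a h1 h2
    have hs : (t + 1) * d = t * d + d := by ring
    rw [Function.iterate_succ_apply, F_mid (by omega) h2, ih (a - d) (by omega) (by omega)]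
    omega

lemma F_iter_hi {a : ℕ} (hd : 2 ≤ d) (hq : 2 ≤ q) (h : q * d < a) : ∀ s, (F d q)^[s] a = a :=
  Function.iterate_fixed (F_hi hd hq h)

/-- Orbit of `0` under `F` (for `d ≥ 3`). -/
def O (d q s : ℕ) : ℕ :=
  if s = 0 then 0
  else if s ≤ q then (q + 1 - s) * d
  else if s = q + 1 then 1
  else if s ≤ 2 * q + 1 then (2 * q + 2 - s) * d - 1
  else (3 * q + 1 - s) * d + 1

lemma O_step (hd : 3 ≤ d) (hq : 2 ≤ q) {s : ℕ} (hs : s < 3 * q) :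
    F d q (O d q s) = O d q (s + 1) := by
  rcases Nat.lt_or_ge s 1 with h | h
  · -- s = 0
    have hs0 : s = 0 := by omega
    subst hs0
    have hOs : O d q 0 = 0 := by simp [O]
    have hOs1 : O d q 1 = q * d := by
      simp only [O, if_neg (by omega : (1:ℕ) ≠ 0), if_pos (by omega : 1 ≤ q)]
      rw [show q + 1 - 1 = q by omega]
    rw [hOs, hOs1, F_lo (by omega)]
    omega
  rcases Nat.lt_or_ge s q with h2 | h2
  · -- 1 ≤ s < q : O s = m*d with m = q+1-s ∈ [2,q]
    set m := q + 1 - s with hm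
    have hOs : O d q s = m * d := by
      simp only [O, if_neg (by omega : s ≠ 0), if_pos (by omega : s ≤ q)]
      rfl
    have hOs1 : O d q (s+1) = (m - 1) * d := by
      simp only [O, if_neg (by omega : s + 1 ≠ 0), if_pos (by omega : s + 1 ≤ q)]
      rw [show q + 1 - (s + 1) = m - 1 by omega]
    have h2d : 2 * d ≤ m * d := Nat.mul_le_mul_right d (by omega)
    have hqd : m * d ≤ q * d := Nat.mul_le_mul_right d (by omega)
    rw [hOs, hOs1, F_mid (by omega) hqd, Nat.sub_one_mul]
  rcases Nat.eq_or_lt_of_le h2 with h3 | h3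
  · -- s = q : O s = d
    have hOs : O d q s = d := by
      simp only [O, if_neg (by omega : s ≠ 0), if_pos (le_of_eq h3.symm)]
      rw [show q + 1 - s = 1 by omega, one_mul]
    have hOs1 : O d q (s+1) = 1 := by
      simp only [O, if_neg (by omega : s + 1 ≠ 0), if_neg (by omega : ¬ (s + 1 ≤ q)),
        if_pos (by omega : s + 1 = q + 1)]
    rw [hOs, hOs1, F_d]
  rcases Nat.lt_or_ge s (q + 2) with h4 | h4
  · -- s = q + 1 : O s = 1
    have hs' : s = q + 1 := by omega
    have hOs : O d q s = 1 := by
      simp only [O, if_neg (by omega : s ≠ 0), if_neg (by omega : ¬ (s ≤ q)), if_pos hs']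
    have hOs1 : O d q (s+1) = q * d - 1 := by
      simp only [O, if_neg (by omega : s + 1 ≠ 0), if_neg (by omega : ¬ (s + 1 ≤ q)),
        if_neg (by omega : ¬ (s + 1 = q + 1)), if_pos (by omega : s + 1 ≤ 2 * q + 1)]
      rw [show 2 * q + 2 - (s + 1) = q by omega]
    rw [hOs, hOs1, F_lo (by omega)]
  rcases Nat.lt_or_ge s (2 * q + 1) with h5 | h5
  · -- q+2 ≤ s ≤ 2q : O s = m*d - 1 with m = 2q+2-s ∈ [2,q]
    set m := 2 * q + 2 - s with hm
    have hOs : O d q s = m * d - 1 := by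
      simp only [O, if_neg (by omega : s ≠ 0), if_neg (by omega : ¬ (s ≤ q)),
        if_neg (by omega : ¬ (s = q + 1)), if_pos (by omega : s ≤ 2 * q + 1)]
      rfl
    have hOs1 : O d q (s+1) = (m - 1) * d - 1 := by
      simp only [O, if_neg (by omega : s + 1 ≠ 0), if_neg (by omega : ¬ (s + 1 ≤ q)),
        if_neg (by omega : ¬ (s + 1 = q + 1)), if_pos (by omega : s + 1 ≤ 2 * q + 1)]
      rw [show 2 * q + 2 - (s + 1) = m - 1 by omega]
    have h2d : 2 * d ≤ m * d := Nat.mul_le_mul_right d (by omega)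
    have hqd : m * d ≤ q * d := Nat.mul_le_mul_right d (by omega)
    rw [hOs, hOs1, F_mid (by omega) (by omega), Nat.sub_one_mul]
    omega
  rcases Nat.lt_or_ge s (2 * q + 2) with h6 | h6
  · -- s = 2q+1 : O s = d - 1
    have hOs : O d q s = d - 1 := by
      simp only [O, if_neg (by omega : s ≠ 0), if_neg (by omega : ¬ (s ≤ q)),
        if_neg (by omega : ¬ (s = q + 1)), if_pos (by omega : s ≤ 2 * q + 1)]
      rw [show 2 * q + 2 - s = 1 by omega, one_mul]
    have hOs1 : O d q (s+1) = (q - 1) * d + 1 := by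
      simp only [O, if_neg (by omega : s + 1 ≠ 0), if_neg (by omega : ¬ (s + 1 ≤ q)),
        if_neg (by omega : ¬ (s + 1 = q + 1)), if_neg (by omega : ¬ (s + 1 ≤ 2 * q + 1))]
      rw [show 3 * q + 1 - (s + 1) = q - 1 by omega]
    have h2d : 2 * d ≤ q * d := Nat.mul_le_mul_right d (by omega)
    rw [hOs, hOs1, F_lo (by omega), Nat.sub_one_mul]
    omega
  · -- 2q+2 ≤ s ≤ 3q-1 : O s = m*d + 1 with m = 3q+1-s ∈ [2, q-1]
    set m := 3 * q + 1 - s with hm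
    have hOs : O d q s = m * d + 1 := by
      simp only [O, if_neg (by omega : s ≠ 0), if_neg (by omega : ¬ (s ≤ q)),
        if_neg (by omega : ¬ (s = q + 1)), if_neg (by omega : ¬ (s ≤ 2 * q + 1))]
      rfl
    have hOs1 : O d q (s+1) = (m - 1) * d + 1 := by
      simp only [O, if_neg (by omega : s + 1 ≠ 0), if_neg (by omega : ¬ (s + 1 ≤ q)),
        if_neg (by omega : ¬ (s + 1 = q + 1)), if_neg (by omega : ¬ (s + 1 ≤ 2 * q + 1))]
      rw [show 3 * q + 1 - (s + 1) = m - 1 by omega]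
    have h2d : 2 * d ≤ m * d := Nat.mul_le_mul_right d (by omega)
    have hqd : m * d + d ≤ q * d := by
      have := Nat.mul_le_mul_right d (by omega : m + 1 ≤ q)
      rw [add_one_mul] at this
      omega
    rw [hOs, hOs1, F_mid (by omega) (by omega), Nat.sub_one_mul]
    omega

lemma O_iter (hd : 3 ≤ d) (hq : 2 ≤ q) : ∀ s, s ≤ 3 * q → (F d q)^[s] 0 = O d q s := by
  intro s
  induction s with
  | zero => intro _; simp [O]
  | succ s ih =>
    intro hs
    rw [Function.iterate_succ_apply', ih (by omega), O_step hd hq (by omega)]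

lemma F_per0 (hd : 3 ≤ d) (hq : 2 ≤ q) : (F d q)^[3 * q + 1] 0 = 0 := by
  rw [Function.iterate_succ_apply', O_iter hd hq (3 * q) le_rfl]
  have : O d q (3 * q) = d + 1 := by
    simp only [O, if_neg (by omega : 3 * q ≠ 0), if_neg (by omega : ¬ (3 * q ≤ q)),
      if_neg (by omega : ¬ (3 * q = q + 1)), if_neg (by omega : ¬ (3 * q ≤ 2 * q + 1))]
    rw [show 3 * q + 1 - 3 * q = 1 by omega, one_mul]
  rw [this, F_d1]

lemma O_ne (hd : 3 ≤ d) {s : ℕ} (h1 : 1 ≤ s) (h2 : s ≤ 3 * q) : O d q s ≠ 0 := by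
  simp only [O, if_neg (by omega : s ≠ 0)]
  split_ifs with c1 c2 c3
  · have : 1 * d ≤ (q + 1 - s) * d := Nat.mul_le_mul_right d (by omega)
    omega
  · omega
  · have : 1 * d ≤ (2 * q + 2 - s) * d := Nat.mul_le_mul_right d (by omega)
    omega
  · omega

lemma O_cover (hd : 3 ≤ d) (hq : 2 ≤ q) {x : ℕ} (hx : x ≤ q * d)
    (hc : x % d = 0 ∨ x % d = 1 ∨ x % d = d - 1) : ∃ s ≤ 3 * q, O d q s = x := by
  have hd0 : 0 < d := by omega
  obtain ⟨m, hdm⟩ : ∃ m, d * m + x % d = x := ⟨x / d, Nat.div_add_mod x d⟩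
  have hcm : d * m = m * d := Nat.mul_comm d m
  rcases hc with hc | hc | hc
  · -- x = m * d
    have hxm : x = m * d := by omega
    have hmq : m ≤ q := by
      by_contra h
      have h1 : (q + 1) * d ≤ m * d := Nat.mul_le_mul_right d (by omega)
      rw [add_one_mul] at h1
      omega
    rcases Nat.eq_zero_or_pos m with h0 | h0
    · exact ⟨0, by omega, by simp [O, hxm, h0]⟩
    · refine ⟨q + 1 - m, by omega, ?_⟩
      simp only [O, if_neg (by omega : q + 1 - m ≠ 0), if_pos (by omega : q + 1 - m ≤ q)]
      rw [show q + 1 - (q + 1 - m) = m by omega, hxm]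
  · -- x = m*d + 1
    have hxm : x = m * d + 1 := by omega
    have hmq : m + 1 ≤ q := by
      by_contra h
      have h1 : q * d ≤ m * d := Nat.mul_le_mul_right d (by omega)
      omega
    rcases Nat.eq_zero_or_pos m with h0 | h0
    · refine ⟨q + 1, by omega, ?_⟩
      simp only [O, if_neg (by omega : q + 1 ≠ 0), if_neg (by omega : ¬ (q + 1 ≤ q)), if_pos rfl]
      simp [hxm, h0]
    · refine ⟨3 * q + 1 - m, by omega, ?_⟩
      simp only [O, if_neg (by omega : 3 * q + 1 - m ≠ 0),
        if_neg (by omega : ¬ (3 * q + 1 - m ≤ q)),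
        if_neg (by omega : ¬ (3 * q + 1 - m = q + 1)),
        if_neg (by omega : ¬ (3 * q + 1 - m ≤ 2 * q + 1))]
      rw [show 3 * q + 1 - (3 * q + 1 - m) = m by omega, hxm]
  · -- x = m*d + (d-1) = (m+1)*d - 1
    have e1 : (m + 1) * d = m * d + d := by ring
    have hxm : x = (m + 1) * d - 1 := by omega
    have hmq : m + 1 ≤ q := by
      by_contra h
      have h1 : (q + 1) * d ≤ (m + 1) * d := Nat.mul_le_mul_right d (by omega)
      rw [add_one_mul] at h1
      omega
    refine ⟨2 * q + 2 - (m + 1), by omega, ?_⟩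
    simp only [O, if_neg (by omega : 2 * q + 2 - (m + 1) ≠ 0),
      if_neg (by omega : ¬ (2 * q + 2 - (m + 1) ≤ q)),
      if_neg (by omega : ¬ (2 * q + 2 - (m + 1) = q + 1)),
      if_pos (by omega : 2 * q + 2 - (m + 1) ≤ 2 * q + 1)]
    rw [show 2 * q + 2 - (2 * q + 2 - (m + 1)) = m + 1 by omega, hxm]

/-- Side orbit of `c` (for `2 ≤ c ≤ d - 2`). -/
def Oc (d q c s : ℕ) : ℕ :=
  if s = 0 then c
  else if s ≤ q then (q + 1 - s) * d - c
  else (2 * q - s) * d + c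

lemma Oc_step (hq : 2 ≤ q) {c : ℕ} (hc2 : 2 ≤ c) (hcd : c + 2 ≤ d) {s : ℕ}
    (hs : s < 2 * q - 1) : F d q (Oc d q c s) = Oc d q c (s + 1) := by
  have hd : 4 ≤ d := by omega
  rcases Nat.lt_or_ge s 1 with h | h
  · have hs0 : s = 0 := by omega
    subst hs0
    have hOs : Oc d q c 0 = c := by simp [Oc]
    have hOs1 : Oc d q c 1 = q * d - c := by
      simp only [Oc, if_neg (by omega : (1:ℕ) ≠ 0), if_pos (by omega : 1 ≤ q)]
      rw [show q + 1 - 1 = q by omega]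
    rw [hOs, hOs1, F_lo (by omega)]
  rcases Nat.lt_or_ge s q with h2 | h2
  · -- 1 ≤ s < q : Oc s = m*d - c with m = q+1-s ∈ [2,q]
    set m := q + 1 - s with hm
    have hOs : Oc d q c s = m * d - c := by
      simp only [Oc, if_neg (by omega : s ≠ 0), if_pos (by omega : s ≤ q)]
      rfl
    have hOs1 : Oc d q c (s+1) = (m - 1) * d - c := by
      simp only [Oc, if_neg (by omega : s + 1 ≠ 0), if_pos (by omega : s + 1 ≤ q)]
      rw [show q + 1 - (s + 1) = m - 1 by omega]
    have h2d : 2 * d ≤ m * d := Nat.mul_le_mul_right d (by omega)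
    have hqd : m * d ≤ q * d := Nat.mul_le_mul_right d (by omega)
    rw [hOs, hOs1, F_mid (by omega) (by omega), Nat.sub_one_mul]
    omega
  rcases Nat.eq_or_lt_of_le h2 with h3 | h3
  · -- s = q : Oc s = d - c
    have hOs : Oc d q c s = d - c := by
      simp only [Oc, if_neg (by omega : s ≠ 0), if_pos (le_of_eq h3.symm)]
      rw [show q + 1 - s = 1 by omega, one_mul]
    have hOs1 : Oc d q c (s+1) = (q - 1) * d + c := by
      simp only [Oc, if_neg (by omega : s + 1 ≠ 0), if_neg (by omega : ¬ (s + 1 ≤ q))]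
      rw [show 2 * q - (s + 1) = q - 1 by omega]
    have h2d : 2 * d ≤ q * d := Nat.mul_le_mul_right d (by omega)
    rw [hOs, hOs1, F_lo (by omega), Nat.sub_one_mul]
    omega
  · -- q+1 ≤ s ≤ 2q-2 : Oc s = m*d + c with m = 2q-s ∈ [2, q-1]
    set m := 2 * q - s with hm
    have hOs : Oc d q c s = m * d + c := by
      simp only [Oc, if_neg (by omega : s ≠ 0), if_neg (by omega : ¬ (s ≤ q))]
      rfl
    have hOs1 : Oc d q c (s+1) = (m - 1) * d + c := by
      simp only [Oc, if_neg (by omega : s + 1 ≠ 0), if_neg (by omega : ¬ (s + 1 ≤ q))]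
      rw [show 2 * q - (s + 1) = m - 1 by omega]
    have h2d : 2 * d ≤ m * d := Nat.mul_le_mul_right d (by omega)
    have hqd : m * d + d ≤ q * d := by
      have := Nat.mul_le_mul_right d (by omega : m + 1 ≤ q)
      rw [add_one_mul] at this
      omega
    rw [hOs, hOs1, F_mid (by omega) (by omega), Nat.sub_one_mul]
    omega

lemma Oc_iter (hq : 2 ≤ q) {c : ℕ} (hc2 : 2 ≤ c) (hcd : c + 2 ≤ d) :
    ∀ s, s ≤ 2 * q - 1 → (F d q)^[s] c = Oc d q c s := by
  intro s
  induction s with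
  | zero => intro _; simp [Oc]
  | succ s ih =>
    intro hs
    rw [Function.iterate_succ_apply', ih (by omega), Oc_step hq hc2 hcd (by omega)]

lemma F_perc (hq : 2 ≤ q) {c : ℕ} (hc2 : 2 ≤ c) (hcd : c + 2 ≤ d) :
    (F d q)^[2 * q] c = c := by
  rw [show 2 * q = (2 * q - 1) + 1 by omega, Function.iterate_succ_apply',
    Oc_iter hq hc2 hcd (2 * q - 1) le_rfl]
  have : Oc d q c (2 * q - 1) = d + c := by
    simp only [Oc, if_neg (by omega : 2 * q - 1 ≠ 0), if_neg (by omega : ¬ (2 * q - 1 ≤ q))]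
    rw [show 2 * q - (2 * q - 1) = 1 by omega, one_mul]
  have h2d : 2 * d ≤ q * d := Nat.mul_le_mul_right d hq
  rw [this, F_mid (by omega) (by omega)]
  omega

lemma Oc_cover (hq : 2 ≤ q) {c : ℕ} (hc2 : 2 ≤ c) (hcd : c + 2 ≤ d) {x : ℕ} (hx : x ≤ q * d)
    (hc : x % d = c ∨ x % d = d - c) : ∃ s ≤ 2 * q - 1, Oc d q c s = x := by
  have hd0 : 0 < d := by omega
  obtain ⟨m, hdm⟩ : ∃ m, d * m + x % d = x := ⟨x / d, Nat.div_add_mod x d⟩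
  have hcm : d * m = m * d := Nat.mul_comm d m
  rcases hc with hc | hc
  · -- x = m*d + c
    have hxm : x = m * d + c := by omega
    have hmq : m + 1 ≤ q := by
      by_contra h
      have h1 : q * d ≤ m * d := Nat.mul_le_mul_right d (by omega)
      omega
    rcases Nat.eq_zero_or_pos m with h0 | h0
    · exact ⟨0, by omega, by simp [Oc, hxm, h0]⟩
    · refine ⟨2 * q - m, by omega, ?_⟩
      simp only [Oc, if_neg (by omega : 2 * q - m ≠ 0), if_neg (by omega : ¬ (2 * q - m ≤ q))]
      rw [show 2 * q - (2 * q - m) = m by omega, hxm]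
  · -- x = m*d + (d - c) = (m+1)*d - c
    have e1 : (m + 1) * d = m * d + d := by ring
    have hxm : x = (m + 1) * d - c := by omega
    have hmq : m + 1 ≤ q := by
      by_contra h
      have h1 : (q + 1) * d ≤ (m + 1) * d := Nat.mul_le_mul_right d (by omega)
      rw [add_one_mul] at h1
      omega
    refine ⟨q - m, by omega, ?_⟩
    simp only [Oc, if_neg (by omega : q - m ≠ 0), if_pos (by omega : q - m ≤ q)]
    rw [show q + 1 - (q - m) = m + 1 by omega, hxm]

/-- No early return for the point `2` when `d ≥ 5` (values of `Oc` stay away from `2`). -/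
lemma Oc_ne_two (hd : 5 ≤ d) {s : ℕ} (h1 : 1 ≤ s) (h2 : s ≤ 2 * q - 1) :
    Oc d q 2 s ≠ 2 := by
  simp only [Oc, if_neg (by omega : s ≠ 0)]
  split_ifs with c1
  · have : 1 * d ≤ (q + 1 - s) * d := Nat.mul_le_mul_right d (by omega)
    omega
  · have : 1 * d ≤ (2 * q - s) * d := Nat.mul_le_mul_right d (by omega)
    omega

/-- `d = 4`: the point `2` has period `q`. -/
lemma F_per2_d4 (hq : 2 ≤ q) : (F 4 q)^[q] 2 = 2 := by
  obtain ⟨t, rfl⟩ : ∃ t, q = t + 2 := ⟨q - 2, by omega⟩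
  have h1 : (F 4 (t + 2)) 2 = (t + 2) * 4 - 2 := F_lo (by omega)
  have h2 : (F 4 (t + 2))^[t] ((t + 2) * 4 - 2) = 6 := by
    have := F_iter_desc (d := 4) (q := t + 2) t ((t + 2) * 4 - 2) (by omega) (by omega)
    rw [this]
    omega
  rw [show t + 2 = (t + 1) + 1 by omega, Function.iterate_succ_apply,
    Function.iterate_succ_apply', h1, h2, F_mid (by omega) (by omega)]

/-- `d = 4`: no early return for the point `2`. -/
lemma F_ne_two_d4 (hq : 2 ≤ q) {s : ℕ} (h1 : 1 ≤ s) (h2 : s ≤ q - 1) :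
    (F 4 q)^[s] 2 ≠ 2 := by
  rw [Oc_iter hq (by omega) (by omega) s (by omega)]
  simp only [Oc, if_neg (by omega : s ≠ 0), if_pos (by omega : s ≤ q)]
  have : 2 * 4 ≤ (q + 1 - s) * 4 := Nat.mul_le_mul_right 4 (by omega)
  omega

/-- `d = 4`: coverage of residue-2 points by the orbit of `2`. -/
lemma cover2_d4 (hq : 2 ≤ q) {x : ℕ} (hx : x ≤ q * 4) (hc : x % 4 = 2) :
    ∃ s ≤ q - 1, (F 4 q)^[s] 2 = x := by
  obtain ⟨m, hdm⟩ : ∃ m, 4 * m + x % 4 = x := ⟨x / 4, Nat.div_add_mod x 4⟩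
  have hxm : x = m * 4 + 2 := by omega
  have hmq : m + 1 ≤ q := by omega
  rcases Nat.eq_zero_or_pos m with h0 | h0
  · exact ⟨0, by omega, by simp [hxm, h0]⟩
  · refine ⟨q - m, by omega, ?_⟩
    rw [Oc_iter hq (by omega) (by omega) (q - m) (by omega)]
    simp only [Oc, if_neg (by omega : q - m ≠ 0), if_pos (by omega : q - m ≤ q)]
    rw [show q + 1 - (q - m) = m + 1 by omega]
    omega

/-- Orbit of `0` for `d = 2`. -/
def O2 (q s : ℕ) : ℕ :=
  if s = 0 then 0
  else if s ≤ q then (q + 1 - s) * 2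
  else if s = q + 1 then 1
  else (2 * q + 2 - s) * 2 - 1

lemma O2_step (hq : 2 ≤ q) {s : ℕ} (hs : s < 2 * q) : F 2 q (O2 q s) = O2 q (s + 1) := by
  rcases Nat.lt_or_ge s 1 with h | h
  · have hs0 : s = 0 := by omega
    subst hs0
    have hOs1 : O2 q 1 = q * 2 := by
      simp only [O2, if_neg (by omega : (1:ℕ) ≠ 0), if_pos (by omega : 1 ≤ q)]
      rw [show q + 1 - 1 = q by omega]
    rw [show O2 q 0 = 0 by simp [O2], hOs1, F_lo (by omega)]
    omega
  rcases Nat.lt_or_ge s q with h2 | h2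
  · set m := q + 1 - s with hm
    have hOs : O2 q s = m * 2 := by
      simp only [O2, if_neg (by omega : s ≠ 0), if_pos (by omega : s ≤ q)]
      rfl
    have hOs1 : O2 q (s+1) = (m - 1) * 2 := by
      simp only [O2, if_neg (by omega : s + 1 ≠ 0), if_pos (by omega : s + 1 ≤ q)]
      rw [show q + 1 - (s + 1) = m - 1 by omega]
    rw [hOs, hOs1, F_mid (by omega) (by omega)]
    omega
  rcases Nat.eq_or_lt_of_le h2 with h3 | h3
  · -- s = q : O2 s = 2
    have hOs : O2 q s = 2 := by
      simp only [O2, if_neg (by omega : s ≠ 0), if_pos (le_of_eq h3.symm)]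
      rw [show q + 1 - s = 1 by omega]
    have hOs1 : O2 q (s+1) = 1 := by
      simp only [O2, if_neg (by omega : s + 1 ≠ 0), if_neg (by omega : ¬ (s + 1 ≤ q)),
        if_pos (by omega : s + 1 = q + 1)]
    rw [hOs, hOs1]
    exact F_d (d := 2)
  rcases Nat.lt_or_ge s (q + 2) with h4 | h4
  · -- s = q+1 : O2 s = 1
    have hOs : O2 q s = 1 := by
      simp only [O2, if_neg (by omega : s ≠ 0), if_neg (by omega : ¬ (s ≤ q)),
        if_pos (by omega : s = q + 1)]
    have hOs1 : O2 q (s+1) = q * 2 - 1 := by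
      simp only [O2, if_neg (by omega : s + 1 ≠ 0), if_neg (by omega : ¬ (s + 1 ≤ q)),
        if_neg (by omega : ¬ (s + 1 = q + 1))]
      rw [show 2 * q + 2 - (s + 1) = q by omega]
    rw [hOs, hOs1, F_lo (by omega)]
  · -- q+2 ≤ s ≤ 2q-1 : O2 s = m*2 - 1, m = 2q+2-s ∈ [3, q]
    set m := 2 * q + 2 - s with hm
    have hOs : O2 q s = m * 2 - 1 := by
      simp only [O2, if_neg (by omega : s ≠ 0), if_neg (by omega : ¬ (s ≤ q)),
        if_neg (by omega : ¬ (s = q + 1))]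
      rfl
    have hOs1 : O2 q (s+1) = (m - 1) * 2 - 1 := by
      simp only [O2, if_neg (by omega : s + 1 ≠ 0), if_neg (by omega : ¬ (s + 1 ≤ q)),
        if_neg (by omega : ¬ (s + 1 = q + 1))]
      rw [show 2 * q + 2 - (s + 1) = m - 1 by omega]
    have h3m : 3 ≤ m := by omega
    have hqm : m ≤ q := by omega
    rw [hOs, hOs1, F_mid (by omega) (by omega)]
    omega

lemma O2_iter (hq : 2 ≤ q) : ∀ s, s ≤ 2 * q → (F 2 q)^[s] 0 = O2 q s := by
  intro s
  induction s with
  | zero => intro _; simp [O2]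
  | succ s ih =>
    intro hs
    rw [Function.iterate_succ_apply', ih (by omega), O2_step hq (by omega)]

lemma F_per0_d2 (hq : 2 ≤ q) : (F 2 q)^[2 * q + 1] 0 = 0 := by
  rw [Function.iterate_succ_apply', O2_iter hq (2 * q) le_rfl]
  have : O2 q (2 * q) = 3 := by
    simp only [O2, if_neg (by omega : 2 * q ≠ 0), if_neg (by omega : ¬ (2 * q ≤ q)),
      if_neg (by omega : ¬ (2 * q = q + 1))]
    rw [show 2 * q + 2 - 2 * q = 2 by omega]
  rw [this]
  exact F_d1 (d := 2)

lemma O2_ne (hq : 2 ≤ q) {s : ℕ} (h1 : 1 ≤ s) (h2 : s ≤ 2 * q) : O2 q s ≠ 0 := by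
  simp only [O2, if_neg (by omega : s ≠ 0)]
  split_ifs with c1 c2
  · have : 1 * 2 ≤ (q + 1 - s) * 2 := Nat.mul_le_mul_right 2 (by omega)
    omega
  · omega
  · have : 1 * 2 ≤ (2 * q + 2 - s) * 2 := Nat.mul_le_mul_right 2 (by omega)
    omega

lemma O2_cover (hq : 2 ≤ q) {x : ℕ} (hx : x ≤ q * 2) : ∃ s ≤ 2 * q, O2 q s = x := by
  obtain ⟨m, hdm⟩ : ∃ m, 2 * m + x % 2 = x := ⟨x / 2, Nat.div_add_mod x 2⟩
  have hx2 : x % 2 = 0 ∨ x % 2 = 1 := by omega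
  rcases hx2 with hc | hc
  · have hxm : x = m * 2 := by omega
    have hmq : m ≤ q := by omega
    rcases Nat.eq_zero_or_pos m with h0 | h0
    · exact ⟨0, by omega, by simp [O2, hxm, h0]⟩
    · refine ⟨q + 1 - m, by omega, ?_⟩
      simp only [O2, if_neg (by omega : q + 1 - m ≠ 0), if_pos (by omega : q + 1 - m ≤ q)]
      rw [show q + 1 - (q + 1 - m) = m by omega, hxm]
  · have hxm : x = m * 2 + 1 := by omega
    have hmq : m + 1 ≤ q := by omega
    rcases Nat.eq_zero_or_pos m with h0 | h0
    · refine ⟨q + 1, by omega, ?_⟩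
      simp only [O2, if_neg (by omega : q + 1 ≠ 0), if_neg (by omega : ¬ (q + 1 ≤ q)),
        if_pos rfl, if_true, eq_self_iff_true]
      omega
    · refine ⟨2 * q + 2 - (m + 1), by omega, ?_⟩
      simp only [O2, if_neg (by omega : 2 * q + 2 - (m + 1) ≠ 0),
        if_neg (by omega : ¬ (2 * q + 2 - (m + 1) ≤ q)),
        if_neg (by omega : ¬ (2 * q + 2 - (m + 1) = q + 1))]
      rw [show 2 * q + 2 - (2 * q + 2 - (m + 1)) = m + 1 by omega]
      omega

/-- Transport a period along the orbit: if `a` is on the orbit of `rep`. -/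
lemma F_fix_of_reach {N s L a rep : ℕ} (h1 : (F d q)^[s] rep = a)
    (h2 : (F d q)^[L] rep = rep) (h3 : L ∣ N) : (F d q)^[N] a = a := by
  obtain ⟨t, rfl⟩ := h3
  have hrep : (F d q)^[L * t] rep = rep := by
    rw [Function.iterate_mul]
    exact Function.iterate_fixed h2 t
  calc (F d q)^[L * t] a = (F d q)^[L * t] ((F d q)^[s] rep) := by rw [h1]
    _ = (F d q)^[s] ((F d q)^[L * t] rep) := by
        rw [← Function.iterate_add_apply, ← Function.iterate_add_apply, Nat.add_comm]
    _ = a := by rw [hrep, h1]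

section Perm

lemma pancake_val (n m : ℕ) (x : Fin n) :
    ((pancake n m x : Fin n) : ℕ) = if (x : ℕ) ≤ m ∧ m < n then m - (x : ℕ) else (x : ℕ) := by
  simp only [pancake, Function.Involutive.coe_toPerm]
  split_ifs with h
  · exact congrArg Fin.val (dif_pos h)
  · exact congrArg Fin.val (dif_neg h)

variable {n : ℕ}

/-- The three-pancake product agrees with `F` on values. -/
lemma G_val (hd : 2 ≤ d) (hq : 2 ≤ q) (hn : q * d < n) (x : Fin n) :
    (((pancake n 1 * pancake n ((q - 1) * d) * pancake n (q * d)) x : Fin n) : ℕ)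
      = F d q (x : ℕ) := by
  have h2d : 2 * d ≤ q * d := Nat.mul_le_mul_right d hq
  have hq1d : (q - 1) * d = q * d - d := Nat.sub_one_mul q d
  rw [Equiv.Perm.mul_apply, Equiv.Perm.mul_apply]
  set a := (x : ℕ) with ha
  set y1 := pancake n (q * d) x with hy1
  set y2 := pancake n ((q - 1) * d) y1 with hy2
  have hv1 : (y1 : ℕ) = if a ≤ q * d ∧ q * d < n then q * d - a else a := pancake_val n _ x
  have hv2 : (y2 : ℕ) = if (y1 : ℕ) ≤ (q - 1) * d ∧ (q - 1) * d < n
      then (q - 1) * d - (y1 : ℕ) else (y1 : ℕ) := pancake_val n _ y1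
  have hv3 : ((pancake n 1 y2 : Fin n) : ℕ) = if (y2 : ℕ) ≤ 1 ∧ 1 < n
      then 1 - (y2 : ℕ) else (y2 : ℕ) := pancake_val n _ y2
  by_cases h1 : a ≤ q * d
  · rw [if_pos ⟨h1, hn⟩] at hv1
    by_cases h2 : a < d
    · -- a < d
      rw [if_neg (by omega)] at hv2
      rw [hv1] at hv2
      rw [if_neg (by omega)] at hv3
      rw [hv3, hv2, F_lo h2]
    · -- d ≤ a ≤ q*d
      rw [if_pos ⟨by omega, by omega⟩] at hv2
      rw [hv1] at hv2
      have hv2' : (y2 : ℕ) = a - d := by omega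
      by_cases h3 : a = d
      · rw [if_pos ⟨by omega, by omega⟩] at hv3
        rw [hv3, hv2', h3, F_d]
        omega
      by_cases h4 : a = d + 1
      · rw [if_pos ⟨by omega, by omega⟩] at hv3
        rw [hv3, hv2', h4, F_d1]
        omega
      · rw [if_neg (by omega)] at hv3
        rw [hv3, hv2', F_mid (by omega) h1]
  · rw [if_neg (by omega)] at hv1
    rw [if_neg (by omega)] at hv2
    rw [hv1] at hv2
    rw [if_neg (by omega)] at hv3
    rw [hv3, hv2, F_hi hd hq (by omega)]

lemma G_pow_val (hd : 2 ≤ d) (hq : 2 ≤ q) (hn : q * d < n) (s : ℕ) (x : Fin n) :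
    (((pancake n 1 * pancake n ((q - 1) * d) * pancake n (q * d)) ^ s) x : ℕ)
      = (F d q)^[s] (x : ℕ) := by
  induction s with
  | zero => simp
  | succ s ih =>
    rw [pow_succ', Equiv.Perm.mul_apply, G_val hd hq hn _, ih,
      ← Function.iterate_succ_apply' (F d q) s]

/-- Upper bound: if `F^[N]` fixes all of `[0, q*d]`, then `G ^ N = 1`. -/
lemma G_pow_eq_one (hd : 2 ≤ d) (hq : 2 ≤ q) (hn : q * d < n) {N : ℕ}
    (h : ∀ a : ℕ, a ≤ q * d → (F d q)^[N] a = a) :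
    (pancake n 1 * pancake n ((q - 1) * d) * pancake n (q * d)) ^ N = 1 := by
  apply Equiv.ext
  intro x
  apply Fin.ext
  rw [Equiv.Perm.one_apply, G_pow_val hd hq hn]
  rcases Nat.lt_or_ge (q * d) (x : ℕ) with h1 | h1
  · exact F_iter_hi hd hq h1 N
  · exact h _ h1

/-- Lower bound: an exact period of a point divides the order. -/
lemma period_dvd_orderOf (hd : 2 ≤ d) (hq : 2 ≤ q) (hn : q * d < n) {L a : ℕ} (han : a < n)
    (hfix : (F d q)^[L] a = a) (hL : 0 < L)
    (hne : ∀ s, 1 ≤ s → s < L → (F d q)^[s] a ≠ a) :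
    L ∣ orderOf (pancake n 1 * pancake n ((q - 1) * d) * pancake n (q * d)) := by
  set G := pancake n 1 * pancake n ((q - 1) * d) * pancake n (q * d) with hG
  set x : Fin n := ⟨a, han⟩ with hx
  have hper : Function.IsPeriodicPt (⇑G) L x := by
    show (⇑G)^[L] x = x
    rw [← Equiv.Perm.coe_pow]
    apply Fin.ext
    rw [G_pow_val hd hq hn]
    exact hfix
  have hmin : Function.minimalPeriod (⇑G) x = L := by
    have hdvd := hper.minimalPeriod_dvd
    have hpos := hper.minimalPeriod_pos hL
    rcases Nat.lt_or_ge (Function.minimalPeriod (⇑G) x) L with hlt | hge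
    · exfalso
      have hp := Function.isPeriodicPt_minimalPeriod (⇑G) x
      have hp2 : (F d q)^[Function.minimalPeriod (⇑G) x] a = a := by
        have h2 : (⇑G)^[Function.minimalPeriod (⇑G) x] x = x := hp
        rw [← Equiv.Perm.coe_pow] at h2
        have h3 := congrArg Fin.val h2
        rw [G_pow_val hd hq hn] at h3
        exact h3
      exact hne _ (by omega) hlt hp2
    · exact Nat.le_antisymm (Nat.le_of_dvd hL hdvd) hge
  rw [← hmin]
  apply Function.IsPeriodicPt.minimalPeriod_dvd
  show (⇑G)^[orderOf G] x = x
  rw [← Equiv.Perm.coe_pow, pow_orderOf_eq_one]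
  rfl

end Perm

section UB

lemma UB_d2 (hq : 2 ≤ q) : ∀ a ≤ q * 2, (F 2 q)^[2 * q + 1] a = a := by
  intro a ha
  obtain ⟨s, hs, hOs⟩ := O2_cover hq ha
  have hreach : (F 2 q)^[s] 0 = a := by rw [O2_iter hq s hs, hOs]
  exact F_fix_of_reach hreach (F_per0_d2 hq) dvd_rfl

lemma UB_d4 {N : ℕ} (hq : 2 ≤ q) (hN1 : 3 * q + 1 ∣ N) (hN2 : q ∣ N) :
    ∀ a ≤ q * 4, (F 4 q)^[N] a = a := by
  intro a ha
  have h4 : a % 4 = 0 ∨ a % 4 = 1 ∨ a % 4 = 2 ∨ a % 4 = 3 := by omega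
  rcases h4 with h | h | h | h
  · obtain ⟨s, hs, hOs⟩ := O_cover (by omega) hq ha (by omega)
    have hreach : (F 4 q)^[s] 0 = a := by rw [O_iter (by omega) hq s hs, hOs]
    exact F_fix_of_reach hreach (F_per0 (by omega) hq) hN1
  · obtain ⟨s, hs, hOs⟩ := O_cover (by omega) hq ha (by omega)
    have hreach : (F 4 q)^[s] 0 = a := by rw [O_iter (by omega) hq s hs, hOs]
    exact F_fix_of_reach hreach (F_per0 (by omega) hq) hN1
  · obtain ⟨s, _, hOs⟩ := cover2_d4 hq ha h
    exact F_fix_of_reach hOs (F_per2_d4 hq) hN2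
  · obtain ⟨s, hs, hOs⟩ := O_cover (by omega) hq ha (by omega)
    have hreach : (F 4 q)^[s] 0 = a := by rw [O_iter (by omega) hq s hs, hOs]
    exact F_fix_of_reach hreach (F_per0 (by omega) hq) hN1

lemma UB_d5 {N : ℕ} (hd : 5 ≤ d) (hq : 2 ≤ q) (hN1 : 3 * q + 1 ∣ N) (hN2 : 2 * q ∣ N) :
    ∀ a ≤ q * d, (F d q)^[N] a = a := by
  intro a ha
  by_cases hmain : a % d = 0 ∨ a % d = 1 ∨ a % d = d - 1
  · obtain ⟨s, hs, hOs⟩ := O_cover (by omega) hq ha hmain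
    have hreach : (F d q)^[s] 0 = a := by rw [O_iter (by omega) hq s hs, hOs]
    exact F_fix_of_reach hreach (F_per0 (by omega) hq) hN1
  · have hc : 2 ≤ a % d ∧ a % d ≤ d - 2 := by
      have := Nat.mod_lt a (show 0 < d by omega)
      omega
    set c := a % d with hcdef
    rcases le_total c (d - c) with hle | hle
    · have h1 : 2 ≤ c := hc.1
      have h2 : c + 2 ≤ d := by omega
      obtain ⟨s, hs, hOs⟩ := Oc_cover hq h1 h2 ha (Or.inl rfl)
      have hreach : (F d q)^[s] c = a := by rw [Oc_iter hq h1 h2 s hs, hOs]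
      exact F_fix_of_reach hreach (F_perc hq h1 h2) hN2
    · set c0 := d - c with hc0
      have h1 : 2 ≤ c0 := by omega
      have h2 : c0 + 2 ≤ d := by omega
      have hmem : a % d = c0 ∨ a % d = d - c0 := by omega
      obtain ⟨s, hs, hOs⟩ := Oc_cover hq h1 h2 ha hmem
      have hreach : (F d q)^[s] c0 = a := by rw [Oc_iter hq h1 h2 s hs, hOs]
      exact F_fix_of_reach hreach (F_perc hq h1 h2) hN2

end UB

section Order

variable {n : ℕ}

lemma coprime_q : Nat.Coprime q (3 * q + 1) := by
  show Nat.gcd q (3 * q + 1) = 1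
  rw [show 3 * q + 1 = 1 + 3 * q by ring, Nat.gcd_add_mul_right_right, Nat.gcd_one_right]

lemma ord_d2 (hq : 2 ≤ q) (hn : q * 2 < n) :
    orderOf (pancake n 1 * pancake n ((q - 1) * 2) * pancake n (q * 2)) = 2 * q + 1 := by
  apply Nat.dvd_antisymm
  · exact orderOf_dvd_of_pow_eq_one (G_pow_eq_one (by omega) hq hn (UB_d2 hq))
  · apply period_dvd_orderOf (by omega) hq hn (show 0 < n by omega) (F_per0_d2 hq) (by omega)
    intro s h1 h2
    rw [O2_iter hq s (by omega)]
    exact O2_ne hq h1 (by omega)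

lemma ord_d4 (hq : 2 ≤ q) (hn : q * 4 < n) :
    orderOf (pancake n 1 * pancake n ((q - 1) * 4) * pancake n (q * 4)) = q * (3 * q + 1) := by
  have h2d : 2 * 4 ≤ q * 4 := Nat.mul_le_mul_right 4 hq
  apply Nat.dvd_antisymm
  · exact orderOf_dvd_of_pow_eq_one (G_pow_eq_one (by omega) hq hn
      (UB_d4 hq (dvd_mul_left _ _) (dvd_mul_right _ _)))
  · apply Nat.Coprime.mul_dvd_of_dvd_of_dvd coprime_q
    · apply period_dvd_orderOf (by omega) hq hn (show 2 < n by omega) (F_per2_d4 hq) (by omega)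
      intro s h1 h2
      exact F_ne_two_d4 hq h1 (by omega)
    · apply period_dvd_orderOf (by omega) hq hn (show 0 < n by omega)
        (F_per0 (by omega) hq) (by omega)
      intro s h1 h2
      rw [O_iter (by omega) hq s (by omega)]
      exact O_ne (by omega) h1 (by omega)

lemma dvd_ord_d5 (hd : 5 ≤ d) (hq : 2 ≤ q) (hn : q * d < n) :
    (3 * q + 1) ∣ orderOf (pancake n 1 * pancake n ((q - 1) * d) * pancake n (q * d)) ∧
    2 * q ∣ orderOf (pancake n 1 * pancake n ((q - 1) * d) * pancake n (q * d)) := by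
  have h2d : 2 * d ≤ q * d := Nat.mul_le_mul_right d hq
  constructor
  · apply period_dvd_orderOf (by omega) hq hn (show 0 < n by omega)
      (F_per0 (by omega) hq) (by omega)
    intro s h1 h2
    rw [O_iter (by omega) hq s (by omega)]
    exact O_ne (by omega) h1 (by omega)
  · apply period_dvd_orderOf (by omega) hq hn (show 2 < n by omega)
      (F_perc hq le_rfl (by omega)) (by omega)
    intro s h1 h2
    rw [Oc_iter hq le_rfl (by omega) s (by omega)]
    exact Oc_ne_two hd h1 (by omega)

lemma ord_d5_odd (hd : 5 ≤ d) (hq : 2 ≤ q) (hn : q * d < n) (hodd : Odd q) :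
    orderOf (pancake n 1 * pancake n ((q - 1) * d) * pancake n (q * d)) = q * (3 * q + 1) := by
  obtain ⟨u, hu⟩ := hodd
  have hN2 : 2 * q ∣ q * (3 * q + 1) := ⟨3 * u + 2, by subst hu; ring⟩
  obtain ⟨hA, hB⟩ := dvd_ord_d5 hd hq hn
  apply Nat.dvd_antisymm
  · exact orderOf_dvd_of_pow_eq_one (G_pow_eq_one (by omega) hq hn
      (UB_d5 hd hq (dvd_mul_left _ _) hN2))
  · exact Nat.Coprime.mul_dvd_of_dvd_of_dvd coprime_q (dvd_trans ⟨2, by ring⟩ hB) hA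

lemma ord_d5_even (hd : 5 ≤ d) (hq : 2 ≤ q) (hn : q * d < n) (heven : Even q) :
    orderOf (pancake n 1 * pancake n ((q - 1) * d) * pancake n (q * d))
      = 2 * q * (3 * q + 1) := by
  obtain ⟨u, hu⟩ := heven
  obtain ⟨hA, hB⟩ := dvd_ord_d5 hd hq hn
  apply Nat.dvd_antisymm
  · exact orderOf_dvd_of_pow_eq_one (G_pow_eq_one (by omega) hq hn
      (UB_d5 hd hq (Dvd.intro (2 * q) (by ring)) (Dvd.intro (3 * q + 1) (by ring))))
  · have hcop : Nat.Coprime (2 * q) (3 * q + 1) := by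
      apply Nat.Coprime.mul _ coprime_q
      rw [Nat.prime_two.coprime_iff_not_dvd]
      intro ⟨t, ht⟩
      omega
    exact hcop.mul_dvd_of_dvd_of_dvd hB hA

end Order

end PancakeOrder

open PancakeOrder in

/-- Let `1 < j < k ≤ n` with `k ≥ 5`, and set `d = k - j`, `q = ⌊k/d⌋`, `r = k mod d`.
Suppose `r = 1`.  Then the order of `f_1 f_{j-1} f_{k-1}` in `S_n` is: `2q + 1` if
`d = 2`; `q(3q+1)` if `d = 4`, or if `d ≥ 5` and `q` is odd; and `2q(3q+1)` if `d ≥ 5`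
and `q` is even. -/
theorem order_pancake_one_triple_r_one (n j k d q r : ℕ) (hj : 1 < j) (hjk : j < k)
    (hkn : k ≤ n) (hk5 : 5 ≤ k) (hd : d = k - j) (hq : q = k / d) (hr : r = k % d)
    (hr1 : r = 1) :
    (d = 2 → orderOf (pancake n 1 * pancake n (j - 1) * pancake n (k - 1)) = 2 * q + 1) ∧
    (d = 4 ∨ (5 ≤ d ∧ Odd q) →
      orderOf (pancake n 1 * pancake n (j - 1) * pancake n (k - 1)) = q * (3 * q + 1)) ∧
    (5 ≤ d ∧ Even q →
      orderOf (pancake n 1 * pancake n (j - 1) * pancake n (k - 1)) =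
        2 * q * (3 * q + 1)) := by
  have hk1 : k % d = 1 := hr.symm.trans hr1
  have hd2 : 2 ≤ d := by
    rcases Nat.lt_or_ge d 2 with h | h
    · exfalso
      have hd1 : d = 1 := by omega
      rw [hd1, Nat.mod_one] at hk1
      omega
    · exact h
  have hkeq : k = d * q + 1 := by
    have h := Nat.div_add_mod k d
    rw [← hq, hk1] at h
    omega
  have hcm : d * q = q * d := Nat.mul_comm d q
  have hq2 : 2 ≤ q := by
    rcases Nat.lt_or_ge q 2 with h | h
    · interval_cases q
      · rw [Nat.mul_zero] at hkeq; omega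
      · rw [Nat.mul_one] at hkeq; omega
    · exact h
  have hn : q * d < n := by omega
  have hj1 : j - 1 = (q - 1) * d := by
    rw [Nat.sub_one_mul]
    omega
  have hk1' : k - 1 = q * d := by omega
  rw [hj1, hk1']
  refine ⟨?_, ?_, ?_⟩
  · intro h2
    rw [h2] at hn ⊢
    exact ord_d2 hq2 hn
  · intro h
    rcases h with h4 | ⟨h5, hodd⟩
    · rw [h4] at hn ⊢
      exact ord_d4 hq2 hn
    · exact ord_d5_odd h5 hq2 hn hodd
  · intro ⟨h5, heven⟩
    exact ord_d5_even h5 hq2 hn heven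
end

section
/- Let 1 < j < k ≤ n with k ≥ 5, and set d = k−j, q = ⌊k/d⌋, r = k mod d. Suppose r = 3. Then the order of f_1 f_{j−1} f_{k−1} in S_n equals: q(q+1) if d = 4 and q ≡ 0 (mod 3), or if d ≥ 5 and q ≡ 3 (mod 6); 2q(q+1) if d ≥ 5 and q ≡ 0 (mod 6); 3q(q+1) if d = 4 and q is not divisible by 3, or if d ≥ 5 and q ≡ 1 or 5 (mod 6); and 6q(q+1) if d ≥ 5 and q ≡ 2 or 4 (mod 6). -/
set_option linter.unusedSectionVars false
set_option linter.unusedVariables false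
set_option maxHeartbeats 1000000


namespace POrd

def GG (n j k : ℕ) : Equiv.Perm (Fin n) :=
  pancake n 1 * pancake n (j - 1) * pancake n (k - 1)

lemma pancake_apply_le (n m : ℕ) (a : Fin n) (h1 : (a : ℕ) ≤ m) (h2 : m < n) :
    pancake n m a = ⟨m - (a:ℕ), by omega⟩ := dif_pos ⟨h1, h2⟩

lemma pancake_apply_gt (n m : ℕ) (a : Fin n) (h1 : m < (a : ℕ)) :
    pancake n m a = a := dif_neg (by omega)

lemma GG_apply {n j k : ℕ} (a : Fin n) :
    GG n j k a = pancake n 1 (pancake n (j-1) (pancake n (k-1) a)) := rfl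

lemma fixpow {α : Type*} (σ : Equiv.Perm α) (x : α) (h : σ x = x) : ∀ m, (σ^m) x = x := by
  intro m
  induction m with
  | zero => simp
  | succ m ih => rw [pow_succ, Equiv.Perm.mul_apply, h, ih]

lemma cancel {α : Type*} (σ : Equiv.Perm α) (P s : ℕ) (x y : α)
    (h1 : (σ^s) x = y) (h2 : (σ^P) y = y) : (σ^P) x = x := by
  apply (σ^s).injective
  calc (σ^s) ((σ^P) x) = (σ^s * σ^P) x := rfl
    _ = (σ^P * σ^s) x := by rw [← pow_add, add_comm, pow_add]
    _ = (σ^P) y := by rw [Equiv.Perm.mul_apply, h1]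
    _ = y := h2
    _ = (σ^s) x := h1.symm

lemma ret_gen {α : Type*} (σ : Equiv.Perm α) (x : α) (P : ℕ) (hP : 0 < P)
    (hfix : (σ^P) x = x) (hnr : ∀ t, 0 < t → t < P → (σ^t) x ≠ x) :
    ∀ t, (σ^t) x = x → P ∣ t := by
  intro t h
  have ht : t = t % P + P * (t / P) := (Nat.mod_add_div t P).symm
  rw [ht, pow_add, Equiv.Perm.mul_apply, pow_mul, fixpow _ _ hfix] at h
  rcases Nat.eq_zero_or_pos (t % P) with hz | hpos
  · exact Nat.dvd_of_mod_eq_zero hz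
  · exact absurd h (hnr _ hpos (Nat.mod_lt _ hP))

section
variable {n d q k j : ℕ} (hd : 4 ≤ d) (hq : 1 ≤ q) (hk : k = q*d+3) (hdk : d+3 ≤ k)
  (hj : j = k-d) (hn : k ≤ n)
include hd hq hk hdk hj hn

lemma gA (x : ℕ) (hx : x < d) : GG n j k ⟨x, by omega⟩ = ⟨k-1-x, by omega⟩ := by
  rw [GG_apply, pancake_apply_le n (k-1) _ (show x ≤ k-1 by omega) (by omega),
    pancake_apply_gt n (j-1) _ (show j-1 < k-1-x by omega),
    pancake_apply_gt n 1 _ (show 1 < k-1-x by omega)]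

lemma gB : GG n j k ⟨d, by omega⟩ = ⟨1, by omega⟩ := by
  rw [GG_apply, pancake_apply_le n (k-1) _ (show d ≤ k-1 by omega) (by omega),
    pancake_apply_le n (j-1) _ (show k-1-d ≤ j-1 by omega) (by omega),
    pancake_apply_le n 1 _ (show j-1-(k-1-d) ≤ 1 by omega) (by omega)]
  exact Fin.ext (by simp; omega)

lemma gC : GG n j k ⟨d+1, by omega⟩ = ⟨0, by omega⟩ := by
  rw [GG_apply, pancake_apply_le n (k-1) _ (show d+1 ≤ k-1 by omega) (by omega),
    pancake_apply_le n (j-1) _ (show k-1-(d+1) ≤ j-1 by omega) (by omega),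
    pancake_apply_le n 1 _ (show j-1-(k-1-(d+1)) ≤ 1 by omega) (by omega)]
  exact Fin.ext (by simp; omega)

lemma gD (x : ℕ) (h1 : d+2 ≤ x) (h2 : x < k) : GG n j k ⟨x, by omega⟩ = ⟨x-d, by omega⟩ := by
  rw [GG_apply, pancake_apply_le n (k-1) _ (show x ≤ k-1 by omega) (by omega),
    pancake_apply_le n (j-1) _ (show k-1-x ≤ j-1 by omega) (by omega),
    pancake_apply_gt n 1 _ (show 1 < j-1-(k-1-x) by omega)]
  exact Fin.ext (by simp; omega)

lemma gE (x : ℕ) (h1 : k ≤ x) (h2 : x < n) : GG n j k ⟨x, h2⟩ = ⟨x, h2⟩ := by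
  rw [GG_apply, pancake_apply_gt n (k-1) _ (show k-1 < x by omega),
    pancake_apply_gt n (j-1) _ (show j-1 < x by omega),
    pancake_apply_gt n 1 _ (show 1 < x by omega)]

lemma descend (t y : ℕ) (hy : 2 ≤ y) (h : y + t*d < k) :
    ((GG n j k)^(t)) ⟨y + t*d, by omega⟩ = ⟨y, by omega⟩ := by
  induction t with
  | zero => exact Fin.ext (by simp)
  | succ t ih =>
    have hdt : y + (t+1)*d = (y + t*d) + d := by ring
    rw [pow_succ, Equiv.Perm.mul_apply]
    have hg : GG n j k ⟨y + (t+1)*d, by omega⟩ = ⟨y + t*d, by omega⟩ := by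
      rw [gD hd hq hk hdk hj hn (y+(t+1)*d) (by omega) (by omega)]
      exact Fin.ext (by simp; omega)
    rw [hg, ih (by omega)]

lemma P1 : ((GG n j k)^((q+1))) ⟨0, by omega⟩ = ⟨2, by omega⟩ := by
  rw [pow_succ, Equiv.Perm.mul_apply]
  have h0 : GG n j k ⟨0, by omega⟩ = ⟨2 + q*d, by omega⟩ := by
    rw [gA hd hq hk hdk hj hn 0 (by omega)]
    exact Fin.ext (by simp; omega)
  rw [h0, descend hd hq hk hdk hj hn q 2 (by omega) (by omega)]

lemma P2 (l : ℕ) (h1 : 1 ≤ l) (h2 : l ≤ d-1) :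
    ((GG n j k)^(q)) ⟨l, by omega⟩ = ⟨d+2-l, by omega⟩ := by
  obtain ⟨q', rfl⟩ : ∃ q', q = q'+1 := ⟨q-1, by omega⟩
  have hprod : (q'+1)*d = q'*d + d := by ring
  rw [pow_succ, Equiv.Perm.mul_apply]
  have h0 : GG n j k ⟨l, by omega⟩ = ⟨(d+2-l) + q'*d, by omega⟩ := by
    rw [gA hd hq hk hdk hj hn l (by omega)]
    exact Fin.ext (by simp; omega)
  rw [h0, descend hd hq hk hdk hj hn q' (d+2-l) (by omega) (by omega)]

lemma c_d : ((GG n j k)^((2*q+1))) ⟨0, by omega⟩ = ⟨d, by omega⟩ := by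
  rw [show 2*q+1 = q + (q+1) by ring, pow_add, Equiv.Perm.mul_apply,
    P1 hd hq hk hdk hj hn, P2 hd hq hk hdk hj hn 2 (by omega) (by omega)]
  exact Fin.ext (by simp)

lemma c_1 : ((GG n j k)^((2*q+2))) ⟨0, by omega⟩ = ⟨1, by omega⟩ := by
  rw [show 2*q+2 = (2*q+1)+1 by ring, pow_succ', Equiv.Perm.mul_apply,
    c_d hd hq hk hdk hj hn, gB hd hq hk hdk hj hn]

lemma c_d1 : ((GG n j k)^((3*q+2))) ⟨0, by omega⟩ = ⟨d+1, by omega⟩ := by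
  rw [show 3*q+2 = q + (2*q+2) by ring, pow_add, Equiv.Perm.mul_apply,
    c_1 hd hq hk hdk hj hn, P2 hd hq hk hdk hj hn 1 (by omega) (by omega)]
  exact Fin.ext (by simp)

lemma c_0 : ((GG n j k)^((3*q+3))) ⟨0, by omega⟩ = ⟨0, by omega⟩ := by
  rw [show 3*q+3 = (3*q+2)+1 by ring, pow_succ', Equiv.Perm.mul_apply,
    c_d1 hd hq hk hdk hj hn, gC hd hq hk hdk hj hn]

lemma bigfix (s : ℕ) (x : Fin n) (h : ((GG n j k)^(s)) ⟨0, by omega⟩ = x) :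
    ((GG n j k)^((3*q+3))) x = x := by
  rw [← h, ← Equiv.Perm.mul_apply, ← pow_add, add_comm, pow_add, Equiv.Perm.mul_apply,
    c_0 hd hq hk hdk hj hn]

lemma small4 (h4 : d = 4) : ((GG n j k)^(q)) ⟨3, by omega⟩ = ⟨3, by omega⟩ := by
  rw [P2 hd hq hk hdk hj hn 3 (by omega) (by omega)]
  exact Fin.ext (by simp; omega)

lemma small5 (l : ℕ) (h1 : 3 ≤ l) (h2 : l ≤ d-1) :
    ((GG n j k)^((2*q))) ⟨l, by omega⟩ = ⟨l, by omega⟩ := by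
  rw [two_mul, pow_add, Equiv.Perm.mul_apply, P2 hd hq hk hdk hj hn l (by omega) (by omega),
    P2 hd hq hk hdk hj hn (d+2-l) (by omega) (by omega)]
  exact Fin.ext (by simp; omega)

lemma smallcc (l : ℕ) (h1 : 3 ≤ l) (h2 : l ≤ d-1) :
    ((GG n j k)^((if d = 4 then q else 2*q))) ⟨l, by omega⟩ = ⟨l, by omega⟩ := by
  by_cases h4 : d = 4
  · rw [if_pos h4]
    have hl3 : l = 3 := by omega
    subst hl3
    exact small4 hd hq hk hdk hj hn h4
  · rw [if_neg h4]
    exact small5 hd hq hk hdk hj hn l h1 h2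

lemma decomp : ∀ v, d+2 ≤ v → ∃ y s, 2 ≤ y ∧ y ≤ d+1 ∧ v = y + s*d := by
  intro v
  induction v using Nat.strong_induction_on with
  | _ v ih =>
    intro hv
    by_cases h : v ≤ 2*d+1
    · exact ⟨v - d, 1, by omega, by omega, by omega⟩
    · obtain ⟨y, s, h1, h2, h3⟩ := ih (v - d) (by omega) (by omega)
      refine ⟨y, s+1, h1, h2, ?_⟩
      have : (s+1)*d = s*d + d := by ring
      omega

lemma master (x : Fin n) :
    ((GG n j k)^((3*q+3))) x = x ∨ ((GG n j k)^((if d = 4 then q else 2*q))) x = x := by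
  obtain ⟨v, hv⟩ := x
  by_cases hk1 : k ≤ v
  · left; exact fixpow _ _ (gE hd hq hk hdk hj hn v hk1 hv) _
  push_neg at hk1
  have low : ∀ y, 2 ≤ y → y ≤ d+1 → ∀ hyn : y < n,
      ((GG n j k)^((3*q+3))) (⟨y, hyn⟩ : Fin n) = ⟨y, hyn⟩ ∨
      ((GG n j k)^((if d = 4 then q else 2*q))) (⟨y, hyn⟩ : Fin n) = ⟨y, hyn⟩ := by
    intro y h2 hyd hyn
    rcases (by omega : y = 2 ∨ (3 ≤ y ∧ y ≤ d-1) ∨ y = d ∨ y = d+1) with rfl | hy | rfl | rfl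
    · left; exact bigfix hd hq hk hdk hj hn (q+1) _ (P1 hd hq hk hdk hj hn)
    · right; exact smallcc hd hq hk hdk hj hn y hy.1 hy.2
    · left; exact bigfix hd hq hk hdk hj hn (2*q+1) _ (c_d hd hq hk hdk hj hn)
    · left; exact bigfix hd hq hk hdk hj hn (3*q+2) _ (c_d1 hd hq hk hdk hj hn)
  rcases (by omega : v = 0 ∨ v = 1 ∨ (2 ≤ v ∧ v ≤ d+1) ∨ d+2 ≤ v) with rfl | rfl | hv2 | hv2
  · left; exact bigfix hd hq hk hdk hj hn 0 _ (by simp)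
  · left; exact bigfix hd hq hk hdk hj hn (2*q+2) _ (c_1 hd hq hk hdk hj hn)
  · exact low v hv2.1 hv2.2 hv
  · obtain ⟨y, s, hy2, hyd, hveq⟩ := decomp hd hq hk hdk hj hn v hv2
    subst hveq
    have hdes := descend hd hq hk hdk hj hn s y hy2 (by omega)
    rcases low y hy2 hyd (by omega) with h | h
    · left; exact cancel _ _ s _ _ hdes h
    · right; exact cancel _ _ s _ _ hdes h

lemma sub1 (t : ℕ) (ht : t ≤ q) :
    ((GG n j k)^(t+1)) ⟨0, by omega⟩ =
      ⟨2+(q-t)*d, by have := Nat.le_mul_of_pos_left d hq; have h2 : (q-t)*d ≤ q*d :=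
        Nat.mul_le_mul_right d (by omega); omega⟩ := by
  have e1 : (q-t)*d + t*d = q*d := by rw [← Nat.add_mul]; congr 1; omega
  rw [pow_succ, Equiv.Perm.mul_apply]
  have h0 : GG n j k ⟨0, by omega⟩ = ⟨(2+(q-t)*d) + t*d, by omega⟩ := by
    rw [gA hd hq hk hdk hj hn 0 (by omega)]
    exact Fin.ext (by simp; omega)
  rw [h0, descend hd hq hk hdk hj hn t (2+(q-t)*d) (by omega) (by omega)]

lemma sub2 (u : ℕ) (hu : u ≤ q-1) :
    ((GG n j k)^(u+1)) ⟨2, by omega⟩ =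
      ⟨d+(q-1-u)*d, by have h2 : (q-1-u)*d ≤ (q-1)*d := Nat.mul_le_mul_right d (by omega); have h3 : (q-1)*d + d = q*d := (by rw [← Nat.succ_mul]; congr 1; omega); omega⟩ := by
  have e1 : (q-1-u)*d + u*d = (q-1)*d := by rw [← Nat.add_mul]; congr 1; omega
  have e2 : (q-1)*d + d = q*d := by rw [← Nat.succ_mul]; congr 1; omega
  rw [pow_succ, Equiv.Perm.mul_apply]
  have h0 : GG n j k ⟨2, by omega⟩ = ⟨(d+(q-1-u)*d) + u*d, by omega⟩ := by
    rw [gA hd hq hk hdk hj hn 2 (by omega)]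
    exact Fin.ext (by simp; omega)
  rw [h0, descend hd hq hk hdk hj hn u (d+(q-1-u)*d) (by omega) (by omega)]

lemma sub3 (v : ℕ) (hv : v ≤ q-1) :
    ((GG n j k)^(v+1)) ⟨1, by omega⟩ =
      ⟨d+1+(q-1-v)*d, by have h2 : (q-1-v)*d ≤ (q-1)*d := Nat.mul_le_mul_right d (by omega); have h3 : (q-1)*d + d = q*d := (by rw [← Nat.succ_mul]; congr 1; omega); omega⟩ := by
  have e1 : (q-1-v)*d + v*d = (q-1)*d := by rw [← Nat.add_mul]; congr 1; omega
  have e2 : (q-1)*d + d = q*d := by rw [← Nat.succ_mul]; congr 1; omega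
  rw [pow_succ, Equiv.Perm.mul_apply]
  have h0 : GG n j k ⟨1, by omega⟩ = ⟨(d+1+(q-1-v)*d) + v*d, by omega⟩ := by
    rw [gA hd hq hk hdk hj hn 1 (by omega)]
    exact Fin.ext (by simp; omega)
  rw [h0, descend hd hq hk hdk hj hn v (d+1+(q-1-v)*d) (by omega) (by omega)]

lemma sub4 (t : ℕ) (ht : t ≤ q-1) :
    ((GG n j k)^(t+1)) ⟨3, by omega⟩ =
      ⟨(d-1)+(q-1-t)*d, by have h2 : (q-1-t)*d ≤ (q-1)*d := Nat.mul_le_mul_right d (by omega); have h3 : (q-1)*d + d = q*d := (by rw [← Nat.succ_mul]; congr 1; omega); omega⟩ := by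
  have e1 : (q-1-t)*d + t*d = (q-1)*d := by rw [← Nat.add_mul]; congr 1; omega
  have e2 : (q-1)*d + d = q*d := by rw [← Nat.succ_mul]; congr 1; omega
  rw [pow_succ, Equiv.Perm.mul_apply]
  have h0 : GG n j k ⟨3, by omega⟩ = ⟨((d-1)+(q-1-t)*d) + t*d, by omega⟩ := by
    rw [gA hd hq hk hdk hj hn 3 (by omega)]
    exact Fin.ext (by simp; omega)
  rw [h0, descend hd hq hk hdk hj hn t ((d-1)+(q-1-t)*d) (by omega) (by omega)]

lemma sub5 (w : ℕ) (hw : w ≤ q-1) :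
    ((GG n j k)^(w+1)) ⟨d-1, by omega⟩ =
      ⟨3+(q-1-w)*d, by have h2 : (q-1-w)*d ≤ (q-1)*d := Nat.mul_le_mul_right d (by omega); have h3 : (q-1)*d + d = q*d := (by rw [← Nat.succ_mul]; congr 1; omega); omega⟩ := by
  have e1 : (q-1-w)*d + w*d = (q-1)*d := by rw [← Nat.add_mul]; congr 1; omega
  have e2 : (q-1)*d + d = q*d := by rw [← Nat.succ_mul]; congr 1; omega
  rw [pow_succ, Equiv.Perm.mul_apply]
  have h0 : GG n j k ⟨d-1, by omega⟩ = ⟨(3+(q-1-w)*d) + w*d, by omega⟩ := by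
    rw [gA hd hq hk hdk hj hn (d-1) (by omega)]
    exact Fin.ext (by simp; omega)
  rw [h0, descend hd hq hk hdk hj hn w (3+(q-1-w)*d) (by omega) (by omega)]

lemma noret0 (t : ℕ) (h1 : 0 < t) (h2 : t < 3*q+3) :
    ((GG n j k)^(t)) ⟨0, by omega⟩ ≠ ⟨0, by omega⟩ := by
  intro hE
  rcases (by omega : (t ≤ q+1) ∨ (q+2 ≤ t ∧ t ≤ 2*q+1) ∨ t = 2*q+2 ∨ (2*q+3 ≤ t))
    with h | h | h | h
  · obtain ⟨t', rfl⟩ : ∃ t', t = t'+1 := ⟨t-1, by omega⟩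
    rw [sub1 hd hq hk hdk hj hn t' (by omega)] at hE
    have := congrArg Fin.val hE; simp only [Fin.val_mk] at this; omega
  · obtain ⟨u, h3, h4⟩ : ∃ u, t = (u+1) + (q+1) ∧ u ≤ q-1 := ⟨t-q-2, by omega, by omega⟩
    rw [h3, pow_add, Equiv.Perm.mul_apply, P1 hd hq hk hdk hj hn,
      sub2 hd hq hk hdk hj hn u h4] at hE
    have := congrArg Fin.val hE; simp only [Fin.val_mk] at this; omega
  · rw [h, c_1 hd hq hk hdk hj hn] at hE
    have := congrArg Fin.val hE; simp only [Fin.val_mk] at this; omega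
  · obtain ⟨v, h3, h4⟩ : ∃ v, t = (v+1) + (2*q+2) ∧ v ≤ q-1 := ⟨t-2*q-3, by omega, by omega⟩
    rw [h3, pow_add, Equiv.Perm.mul_apply, c_1 hd hq hk hdk hj hn,
      sub3 hd hq hk hdk hj hn v h4] at hE
    have := congrArg Fin.val hE; simp only [Fin.val_mk] at this; omega

lemma gq3 : ((GG n j k)^(q)) ⟨3, by omega⟩ = ⟨d-1, by omega⟩ := by
  have h := sub4 hd hq hk hdk hj hn (q-1) (le_refl _)
  rw [show q-1+1 = q by omega] at h
  rw [h]
  exact Fin.ext (by simp)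

lemma fix3 : ((GG n j k)^((if d = 4 then q else 2*q))) ⟨3, by omega⟩ = ⟨3, by omega⟩ :=
  smallcc hd hq hk hdk hj hn 3 (by omega) (by omega)

lemma noret3 (t : ℕ) (h1 : 0 < t) (h2 : t < (if d = 4 then q else 2*q)) :
    ((GG n j k)^(t)) ⟨3, by omega⟩ ≠ ⟨3, by omega⟩ := by
  intro hE
  by_cases h4 : d = 4
  · rw [if_pos h4] at h2
    obtain ⟨t', rfl⟩ : ∃ t', t = t'+1 := ⟨t-1, by omega⟩
    rw [sub4 hd hq hk hdk hj hn t' (by omega)] at hE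
    have := congrArg Fin.val hE; simp only [Fin.val_mk] at this
    have hge : d ≤ (q-1-t')*d := Nat.le_mul_of_pos_left d (by omega)
    omega
  · rw [if_neg h4] at h2
    rcases (by omega : t ≤ q ∨ (q+1 ≤ t ∧ t ≤ 2*q-1)) with h | h
    · obtain ⟨t', rfl⟩ : ∃ t', t = t'+1 := ⟨t-1, by omega⟩
      rw [sub4 hd hq hk hdk hj hn t' (by omega)] at hE
      have := congrArg Fin.val hE; simp only [Fin.val_mk] at this
      omega
    · obtain ⟨w, h3, h5⟩ : ∃ w, t = (w+1) + q ∧ w ≤ q-2 := ⟨t-q-1, by omega, by omega⟩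
      rw [h3, pow_add, Equiv.Perm.mul_apply, gq3 hd hq hk hdk hj hn,
        sub5 hd hq hk hdk hj hn w (by omega)] at hE
      have := congrArg Fin.val hE; simp only [Fin.val_mk] at this
      have hge : d ≤ (q-1-w)*d := Nat.le_mul_of_pos_left d (by omega)
      omega

lemma retB : ∀ t, ((GG n j k)^(t)) ⟨0, by omega⟩ = ⟨0, by omega⟩ → (3*q+3) ∣ t :=
  ret_gen _ _ _ (by omega) (c_0 hd hq hk hdk hj hn) (noret0 hd hq hk hdk hj hn)

lemma retC : ∀ t, ((GG n j k)^(t)) ⟨3, by omega⟩ = ⟨3, by omega⟩ →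
    (if d = 4 then q else 2*q) ∣ t :=
  ret_gen _ _ _ (by split <;> omega) (fix3 hd hq hk hdk hj hn) (noret3 hd hq hk hdk hj hn)

lemma order_eq (L : ℕ) (hBL : (3*q+3) ∣ L) (hcL : (if d = 4 then q else 2*q) ∣ L)
    (hmin : ∀ o, (3*q+3) ∣ o → (if d = 4 then q else 2*q) ∣ o → L ∣ o) :
    orderOf (GG n j k) = L := by
  have hpow : (GG n j k)^(orderOf (GG n j k)) = 1 := pow_orderOf_eq_one _
  have hBo : (3*q+3) ∣ orderOf (GG n j k) :=
    retB hd hq hk hdk hj hn _ (by rw [hpow]; exact Equiv.Perm.one_apply _)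
  have hco : (if d = 4 then q else 2*q) ∣ orderOf (GG n j k) :=
    retC hd hq hk hdk hj hn _ (by rw [hpow]; exact Equiv.Perm.one_apply _)
  have hup : (GG n j k)^L = 1 := by
    apply Equiv.ext
    intro x
    rw [Equiv.Perm.one_apply]
    rcases master hd hq hk hdk hj hn x with h | h
    · obtain ⟨m, rfl⟩ := hBL
      rw [pow_mul]
      exact fixpow _ _ h m
    · obtain ⟨m, rfl⟩ := hcL
      rw [pow_mul]
      exact fixpow _ _ h m
  exact Nat.dvd_antisymm (orderOf_dvd_of_pow_eq_one hup) (hmin _ hBo hco)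

end
end POrd

/-- Let `1 < j < k ≤ n` with `k ≥ 5`, and set `d = k - j`, `q = ⌊k/d⌋`, `r = k mod d`.
Suppose `r = 3`.  Then the order of `f_1 f_{j-1} f_{k-1}` in `S_n` is: `q(q+1)` if
`d = 4` and `q ≡ 0 (mod 3)`, or if `d ≥ 5` and `q ≡ 3 (mod 6)`; `2q(q+1)` if `d ≥ 5`
and `q ≡ 0 (mod 6)`; `3q(q+1)` if `d = 4` and `q` is not divisible by `3`, or if
`d ≥ 5` and `q ≡ 1` or `5 (mod 6)`; and `6q(q+1)` if `d ≥ 5` and `q ≡ 2` or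
`4 (mod 6)`. -/
theorem order_pancake_one_triple_r_three (n j k d q r : ℕ) (hj : 1 < j) (hjk : j < k)
    (hkn : k ≤ n) (hk5 : 5 ≤ k) (hd : d = k - j) (hq : q = k / d) (hr : r = k % d)
    (hr3 : r = 3) :
    ((d = 4 ∧ q % 3 = 0) ∨ (5 ≤ d ∧ q % 6 = 3) →
      orderOf (pancake n 1 * pancake n (j - 1) * pancake n (k - 1)) = q * (q + 1)) ∧
    (5 ≤ d ∧ q % 6 = 0 →
      orderOf (pancake n 1 * pancake n (j - 1) * pancake n (k - 1)) =
        2 * q * (q + 1)) ∧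
    ((d = 4 ∧ q % 3 ≠ 0) ∨ (5 ≤ d ∧ (q % 6 = 1 ∨ q % 6 = 5)) →
      orderOf (pancake n 1 * pancake n (j - 1) * pancake n (k - 1)) =
        3 * q * (q + 1)) ∧
    (5 ≤ d ∧ (q % 6 = 2 ∨ q % 6 = 4) →
      orderOf (pancake n 1 * pancake n (j - 1) * pancake n (k - 1)) =
        6 * q * (q + 1)) := by
  have hr' : k % d = 3 := by omega
  have hd0 : 0 < d := by omega
  have hd4 : 4 ≤ d := by have := Nat.mod_lt k hd0; omega
  have hdm : d * (k / d) + k % d = k := Nat.div_add_mod k d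
  have hkq : k = q * d + 3 := by rw [hq, Nat.mul_comm]; omega
  have hq1 : 1 ≤ q := by
    rcases Nat.eq_zero_or_pos q with h | h
    · rw [h] at hkq; simp at hkq; omega
    · exact h
  have hdk : d + 3 ≤ k := by have : d ≤ q * d := Nat.le_mul_of_pos_left d hq1; omega
  have hj' : j = k - d := by omega
  have hGG : pancake n 1 * pancake n (j - 1) * pancake n (k - 1) = POrd.GG n j k := rfl
  rw [hGG]
  have copq : Nat.Coprime q (q+1) := by simp [Nat.coprime_self_add_right]
  refine ⟨?_, ?_, ?_, ?_⟩
  · -- q(q+1)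
    intro hcase
    apply POrd.order_eq hd4 hq1 hkq hdk hj' hkn
    · -- 3q+3 ∣ q(q+1)
      have h3 : q % 3 = 0 := by rcases hcase with ⟨_, h⟩ | ⟨_, h⟩ <;> omega
      obtain ⟨m, rfl⟩ : ∃ m, q = 3*m := ⟨q/3, by omega⟩
      exact ⟨m, by ring⟩
    · by_cases h4 : d = 4
      · rw [if_pos h4]; exact ⟨q+1, rfl⟩
      · rw [if_neg h4]
        have h6 : q % 6 = 3 := by rcases hcase with ⟨h, _⟩ | ⟨_, h⟩ <;> omega
        obtain ⟨m, rfl⟩ : ∃ m, q = 2*m+1 := ⟨q/2, by omega⟩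
        exact ⟨m+1, by ring⟩
    · intro o hBo hco
      have hq1o : (q+1) ∣ o := dvd_trans ⟨3, by ring⟩ hBo
      have hqo : q ∣ o := by
        by_cases h4 : d = 4
        · rw [if_pos h4] at hco; exact hco
        · rw [if_neg h4] at hco; exact dvd_trans ⟨2, by ring⟩ hco
      exact Nat.Coprime.mul_dvd_of_dvd_of_dvd copq hqo hq1o
  · -- 2q(q+1)
    rintro ⟨hd5, h6⟩
    apply POrd.order_eq hd4 hq1 hkq hdk hj' hkn
    · obtain ⟨m, rfl⟩ : ∃ m, q = 6*m := ⟨q/6, by omega⟩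
      exact ⟨4*m, by ring⟩
    · rw [if_neg (by omega)]
      exact ⟨q+1, by ring⟩
    · intro o hBo hco
      rw [if_neg (by omega)] at hco
      have hq1o : (q+1) ∣ o := dvd_trans ⟨3, by ring⟩ hBo
      have cop2 : Nat.Coprime 2 (q+1) := (Nat.prime_two.coprime_iff_not_dvd).mpr (by omega)
      have cop : Nat.Coprime (2*q) (q+1) := Nat.Coprime.mul cop2 copq
      exact Nat.Coprime.mul_dvd_of_dvd_of_dvd cop hco hq1o
  · -- 3q(q+1)
    intro hcase
    apply POrd.order_eq hd4 hq1 hkq hdk hj' hkn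
    · exact ⟨q, by ring⟩
    · by_cases h4 : d = 4
      · rw [if_pos h4]; exact ⟨3*(q+1), by ring⟩
      · rw [if_neg h4]
        have hodd : q % 2 = 1 := by rcases hcase with ⟨h, _⟩ | ⟨_, h | h⟩ <;> omega
        obtain ⟨m, rfl⟩ : ∃ m, q = 2*m+1 := ⟨q/2, by omega⟩
        exact ⟨3*(m+1), by ring⟩
    · intro o hBo hco
      have h3 : q % 3 ≠ 0 := by
        rcases hcase with ⟨_, h⟩ | ⟨_, h | h⟩ <;> omega
      have hqo : q ∣ o := by
        by_cases h4 : d = 4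
        · rw [if_pos h4] at hco; exact hco
        · rw [if_neg h4] at hco; exact dvd_trans ⟨2, by ring⟩ hco
      have hB3 : (3*(q+1)) ∣ o := by
        have : 3*q+3 = 3*(q+1) := by ring
        rwa [this] at hBo
      have copq3 : Nat.Coprime q 3 := ((Nat.prime_three.coprime_iff_not_dvd).mpr (by omega)).symm
      have cop : Nat.Coprime q (3*(q+1)) := Nat.Coprime.mul_right copq3 copq
      have := Nat.Coprime.mul_dvd_of_dvd_of_dvd cop hqo hB3
      rwa [show q*(3*(q+1)) = 3*q*(q+1) by ring] at this
  · -- 6q(q+1)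
    rintro ⟨hd5, h6⟩
    apply POrd.order_eq hd4 hq1 hkq hdk hj' hkn
    · exact ⟨2*q, by ring⟩
    · rw [if_neg (by omega)]
      exact ⟨3*(q+1), by ring⟩
    · intro o hBo hco
      rw [if_neg (by omega)] at hco
      have hB3 : (3*(q+1)) ∣ o := by
        have : 3*q+3 = 3*(q+1) := by ring
        rwa [this] at hBo
      have cop2q1 : Nat.Coprime 2 (q+1) := (Nat.prime_two.coprime_iff_not_dvd).mpr (by omega)
      have cop23 : Nat.Coprime 2 3 := by decide
      have copq3 : Nat.Coprime q 3 := ((Nat.prime_three.coprime_iff_not_dvd).mpr (by omega)).symm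
      have cop : Nat.Coprime (2*q) (3*(q+1)) :=
        Nat.Coprime.mul (Nat.Coprime.mul_right cop23 cop2q1) (Nat.Coprime.mul_right copq3 copq)
      have := Nat.Coprime.mul_dvd_of_dvd_of_dvd cop hco hB3
      rwa [show (2*q)*(3*(q+1)) = 6*q*(q+1) by ring] at this
end

section
/- Let 1 ≤ i < j ≤ n with j ≥ 4. If 1 < i ≤ ⌊j/2⌋, then the order of the product f^B_{i−1} f^B_{j−1} of burnt pancake generators in the hyperoctahedral group B_n is 4. -/
/-- The burnt pancake generator `f^B_m` of the hyperoctahedral group `B_n` of signed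
permutations, modeled as a permutation of `Fin n × Bool` (a `0`-indexed position together
with a sign, `false` meaning positive): it reverses and negates the first `m+1` entries,
sending `(a, s)` to `(m - a, !s)` whenever `a ≤ m` (and `m < n`), and fixing all other
points.  (In `1`-indexed terms, `f^B_m a = -(m + 2 - a)` for `1 ≤ a ≤ m + 1` and
`f^B_m a = a` for `m + 1 < a ≤ n`; for `m = 0` it is the sign change of the first entry.) -/
def bpancake (n m : ℕ) : Equiv.Perm (Fin n × Bool) :=
  Function.Involutive.toPerm
    (fun x => if h : (x.1 : ℕ) ≤ m ∧ m < n then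
        (⟨m - (x.1 : ℕ), Nat.lt_of_le_of_lt (Nat.sub_le m x.1) h.2⟩, !x.2) else x)
    (by
      intro x
      dsimp only
      by_cases h : (x.1 : ℕ) ≤ m ∧ m < n
      · rw [dif_pos h, dif_pos ⟨Nat.sub_le m (x.1 : ℕ), h.2⟩]
        exact Prod.ext (Fin.ext (Nat.sub_sub_self h.1)) (Bool.not_not x.2)
      · rw [dif_neg h, dif_neg h])

lemma bpancake_pos (n m a : ℕ) (ha : a < n) (s : Bool) (h1 : a ≤ m) (h2 : m < n) :
    bpancake n m (⟨a, ha⟩, s) = (⟨m - a, by omega⟩, !s) := by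
  show dite _ _ _ = _
  rw [dif_pos ⟨h1, h2⟩]

lemma bpancake_neg (n m a : ℕ) (ha : a < n) (s : Bool) (h1 : ¬ (a ≤ m ∧ m < n)) :
    bpancake n m (⟨a, ha⟩, s) = (⟨a, ha⟩, s) := by
  show dite _ _ _ = _
  rw [dif_neg h1]

/-- If `1 ≤ i < j ≤ n`, `j ≥ 4` and `1 < i ≤ ⌊j/2⌋`, then the order of
`f^B_{i-1} f^B_{j-1}` in the hyperoctahedral group `B_n` is `4`. -/
theorem order_bpancake_mul_of_le_half (n i j : ℕ) (hi1 : 1 ≤ i) (hij : i < j)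
    (hjn : j ≤ n) (hj4 : 4 ≤ j) (hi : 1 < i) (hhalf : i ≤ j / 2) :
    orderOf (bpancake n (i - 1) * bpancake n (j - 1)) = 4 := by
  set p := i - 1 with hp
  set q := j - 1 with hq
  set g := bpancake n p * bpancake n q with hg
  have hp1 : 1 ≤ p := by omega
  have hpq : 2 * p + 1 ≤ q := by omega
  have hqn : q < n := by omega
  have hpn : p < n := by omega
  have hg1 : ∀ (a : ℕ) (ha : a < n) (s : Bool), a < q - p →
      g (⟨a, ha⟩, s) = (⟨q - a, by omega⟩, !s) := by
    intro a ha s h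
    rw [hg, Equiv.Perm.mul_apply, bpancake_pos n q a ha s (by omega) hqn,
      bpancake_neg n p (q - a) _ _ (by omega)]
  have hg2 : ∀ (a : ℕ) (ha : a < n) (s : Bool), q - p ≤ a → a ≤ q →
      g (⟨a, ha⟩, s) = (⟨a - (q - p), by omega⟩, s) := by
    intro a ha s h1 h2
    rw [hg, Equiv.Perm.mul_apply, bpancake_pos n q a ha s h2 hqn,
      bpancake_pos n p (q - a) _ _ (by omega) hpn]
    exact Prod.ext (Fin.ext (by dsimp only; omega)) (Bool.not_not s)
  have hg3 : ∀ (a : ℕ) (ha : a < n) (s : Bool), q < a →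
      g (⟨a, ha⟩, s) = (⟨a, ha⟩, s) := by
    intro a ha s h
    rw [hg, Equiv.Perm.mul_apply, bpancake_neg n q a ha s (by omega),
      bpancake_neg n p a ha s (by omega)]
  have h4 : g ^ 4 = 1 := by
    refine Equiv.ext fun x => ?_
    obtain ⟨⟨a, ha⟩, s⟩ := x
    simp only [pow_succ, pow_zero, one_mul, Equiv.Perm.mul_apply, Equiv.Perm.one_apply]
    rcases Nat.lt_or_ge q a with h | h
    · rw [hg3 a ha s h, hg3 a ha s h, hg3 a ha s h, hg3 a ha s h]
    rcases le_or_gt (q - p) a with h1 | h1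
    · rw [hg2 a ha s h1 h,
        hg1 (a - (q - p)) (by omega) s (by omega),
        hg2 (q - (a - (q - p))) (by omega) (!s) (by omega) (by omega),
        hg1 (q - (a - (q - p)) - (q - p)) (by omega) (!s) (by omega)]
      exact Prod.ext (Fin.ext (by dsimp only; omega)) (by dsimp only; simp)
    rcases le_or_gt a p with h2 | h2
    · rw [hg1 a ha s (by omega),
        hg2 (q - a) (by omega) (!s) (by omega) (by omega),
        hg1 (q - a - (q - p)) (by omega) (!s) (by omega),
        hg2 (q - (q - a - (q - p))) (by omega) (!!s) (by omega) (by omega)]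
      exact Prod.ext (Fin.ext (by dsimp only; omega)) (by dsimp only; simp)
    · rw [hg1 a ha s (by omega),
        hg1 (q - a) (by omega) (!s) (by omega),
        hg1 (q - (q - a)) (by omega) (!!s) (by omega),
        hg1 (q - (q - (q - a))) (by omega) (!!!s) (by omega)]
      exact Prod.ext (Fin.ext (by dsimp only; omega)) (by dsimp only; simp)
  have h2ne : g ^ 2 ≠ 1 := by
    intro hcon
    have h0 : (0 : ℕ) < n := by omega
    have := congrArg (fun e : Equiv.Perm (Fin n × Bool) => e (⟨0, h0⟩, false)) hcon
    simp only [pow_succ, pow_zero, one_mul, Equiv.Perm.mul_apply, Equiv.Perm.one_apply] at this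
    rw [hg1 0 h0 false (by omega), hg2 _ _ _ (by omega) (by omega)] at this
    have := congrArg Prod.snd this
    simp at this
  have : orderOf g = 2 ^ (1 + 1) := by
    refine orderOf_eq_prime_pow ?_ ?_
    · simpa using h2ne
    · simpa using h4
  simpa using this
end

section
/- Let 1 ≤ i < j ≤ n with j ≥ 4 and 1 ≤ ⌊j/2⌋ < i < j−1. Set d = j−i, q = ⌊j/d⌋, and r = j mod d. Then the order of f^B_{i−1} f^B_{j−1} in B_n equals 2q if r = 0, and equals 2q(q+1) if r ≠ 0. -/
lemma bpancake_apply (n m : ℕ) (x : Fin n × Bool) :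
    bpancake n m x = if h : (x.1 : ℕ) ≤ m ∧ m < n then
      (⟨m - (x.1 : ℕ), Nat.lt_of_le_of_lt (Nat.sub_le m x.1) h.2⟩, !x.2) else x := rfl

section steps

variable {n i j d : ℕ}

lemma step_jump (hi1 : 1 ≤ i) (hij : i < j) (hjn : j ≤ n) (hd : d = j - i)
    (a : Fin n) (s : Bool) (ha : (a : ℕ) < d) (hb : j - 1 - (a : ℕ) < n) :
    (bpancake n (i-1) * bpancake n (j-1)) (a, s) = (⟨j - 1 - (a : ℕ), hb⟩, !s) := by
  have han := a.isLt
  have h1 : bpancake n (j-1) (a, s) = (⟨j - 1 - (a : ℕ), hb⟩, !s) := by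
    rw [bpancake_apply, dif_pos (show ((a:ℕ) ≤ j-1 ∧ j-1 < n) by omega)]
  rw [Equiv.Perm.mul_apply, h1, bpancake_apply,
    dif_neg (show ¬(j - 1 - (a:ℕ) ≤ i-1 ∧ i-1 < n) by omega)]

lemma step_shift (hi1 : 1 ≤ i) (hij : i < j) (hjn : j ≤ n) (hd : d = j - i)
    (a : Fin n) (s : Bool) (ha : d ≤ (a : ℕ)) (ha2 : (a : ℕ) < j) (hb : (a : ℕ) - d < n) :
    (bpancake n (i-1) * bpancake n (j-1)) (a, s) = (⟨(a : ℕ) - d, hb⟩, s) := by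
  have han := a.isLt
  have h1 : bpancake n (j-1) (a, s) = (⟨j - 1 - (a : ℕ), by omega⟩, !s) := by
    rw [bpancake_apply, dif_pos (show ((a:ℕ) ≤ j-1 ∧ j-1 < n) by omega)]
  rw [Equiv.Perm.mul_apply, h1, bpancake_apply,
    dif_pos (show (j - 1 - (a:ℕ) ≤ i-1 ∧ i-1 < n) by omega)]
  exact Prod.ext (Fin.ext (show i - 1 - (j - 1 - (a:ℕ)) = (a:ℕ) - d by omega)) (Bool.not_not s)

lemma step_fix (hi1 : 1 ≤ i) (hij : i < j) (hjn : j ≤ n) (hd : d = j - i)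
    (a : Fin n) (s : Bool) (ha : j ≤ (a : ℕ)) :
    (bpancake n (i-1) * bpancake n (j-1)) (a, s) = (a, s) := by
  have h1 : bpancake n (j-1) (a, s) = (a, s) := by
    rw [bpancake_apply, dif_neg (show ¬((a:ℕ) ≤ j-1 ∧ j-1 < n) by omega)]
  rw [Equiv.Perm.mul_apply, h1, bpancake_apply,
    dif_neg (show ¬((a:ℕ) ≤ i-1 ∧ i-1 < n) by omega)]

lemma pow_shift (hi1 : 1 ≤ i) (hij : i < j) (hjn : j ≤ n) (hd : d = j - i) (t : ℕ) :
    ∀ (a : Fin n) (s : Bool), t * d ≤ (a : ℕ) → (a : ℕ) < j → ∀ hb : (a : ℕ) - t * d < n,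
      ((bpancake n (i-1) * bpancake n (j-1)) ^ t) (a, s) = (⟨(a : ℕ) - t * d, hb⟩, s) := by
  induction t with
  | zero =>
    intro a s _ _ hb
    rw [pow_zero]
    exact Prod.ext (Fin.ext (show (a:ℕ) = (a:ℕ) - 0 * d by omega)) rfl
  | succ t IH =>
    intro a s ht ha2 hb
    have han := a.isLt
    have e : (t+1)*d = t*d + d := Nat.succ_mul t d
    have hd1 : 1 ≤ d := by omega
    have hb' : (a:ℕ) - d < n := by omega
    have hstep := step_shift hi1 hij hjn hd a s (by omega) ha2 hb'
    rw [pow_succ, Equiv.Perm.mul_apply, hstep]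
    rw [IH ⟨(a:ℕ) - d, hb'⟩ s (show t*d ≤ (a:ℕ) - d by omega)
      (show (a:ℕ) - d < j by omega) (show (a:ℕ) - d - t*d < n by omega)]
    exact Prod.ext (Fin.ext (show (a:ℕ) - d - t*d = (a:ℕ) - (t+1)*d by omega)) rfl

variable {q r : ℕ}

lemma land_hi (hi1 : 1 ≤ i) (hij : i < j) (hjn : j ≤ n) (hd : d = j - i)
    (hjr : q * d + r = j) (hrd : r < d) (hq1 : 1 ≤ q)
    (a : Fin n) (s : Bool) (ha1 : r ≤ (a : ℕ)) (ha2 : (a : ℕ) < d)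
    (hb : d + r - 1 - (a : ℕ) < n) :
    ((bpancake n (i-1) * bpancake n (j-1)) ^ q) (a, s) = (⟨d + r - 1 - (a : ℕ), hb⟩, !s) := by
  obtain ⟨q', rfl⟩ : ∃ q', q = q' + 1 := ⟨q - 1, by omega⟩
  have e : (q'+1)*d = q'*d + d := Nat.succ_mul q' d
  have hb' : j - 1 - (a : ℕ) < n := by omega
  rw [pow_succ, Equiv.Perm.mul_apply,
    step_jump hi1 hij hjn hd a s (by omega) hb',
    pow_shift hi1 hij hjn hd q' ⟨j - 1 - (a:ℕ), hb'⟩ (!s)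
      (show q'*d ≤ j - 1 - (a:ℕ) by omega) (show j - 1 - (a:ℕ) < j by omega)
      (show j - 1 - (a:ℕ) - q'*d < n by omega)]
  exact Prod.ext (Fin.ext (show j - 1 - (a:ℕ) - q'*d = d + r - 1 - (a:ℕ) by omega)) rfl

lemma land_lo (hi1 : 1 ≤ i) (hij : i < j) (hjn : j ≤ n) (hd : d = j - i)
    (hjr : q * d + r = j) (hrd : r < d)
    (a : Fin n) (s : Bool) (ha1 : (a : ℕ) < r)
    (hb : r - 1 - (a : ℕ) < n) :
    ((bpancake n (i-1) * bpancake n (j-1)) ^ (q+1)) (a, s) = (⟨r - 1 - (a : ℕ), hb⟩, !s) := by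
  have hb' : j - 1 - (a : ℕ) < n := by omega
  rw [pow_succ, Equiv.Perm.mul_apply,
    step_jump hi1 hij hjn hd a s (by omega) hb',
    pow_shift hi1 hij hjn hd q ⟨j - 1 - (a:ℕ), hb'⟩ (!s)
      (show q*d ≤ j - 1 - (a:ℕ) by omega) (show j - 1 - (a:ℕ) < j by omega)
      (show j - 1 - (a:ℕ) - q*d < n by omega)]
  exact Prod.ext (Fin.ext (show j - 1 - (a:ℕ) - q*d = r - 1 - (a:ℕ) by omega)) rfl

lemma cycle_hi (hi1 : 1 ≤ i) (hij : i < j) (hjn : j ≤ n) (hd : d = j - i)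
    (hjr : q * d + r = j) (hrd : r < d) (hq1 : 1 ≤ q)
    (a : Fin n) (s : Bool) (ha1 : r ≤ (a : ℕ)) (ha2 : (a : ℕ) < d) :
    ((bpancake n (i-1) * bpancake n (j-1)) ^ (2*q)) (a, s) = (a, s) := by
  have han := a.isLt
  have hbb : d + r - 1 - (a : ℕ) < n := by omega
  have h1 := land_hi hi1 hij hjn hd hjr hrd hq1 a s ha1 ha2 hbb
  have h2 := land_hi hi1 hij hjn hd hjr hrd hq1 (⟨d + r - 1 - (a:ℕ), hbb⟩ : Fin n) (!s)
    (show r ≤ d + r - 1 - (a:ℕ) by omega) (show d + r - 1 - (a:ℕ) < d by omega)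
    (show d + r - 1 - (d + r - 1 - (a:ℕ)) < n by omega)
  rw [show 2*q = q + q by omega, pow_add, Equiv.Perm.mul_apply, h1, h2]
  exact Prod.ext (Fin.ext (show d + r - 1 - (d + r - 1 - (a:ℕ)) = (a:ℕ) by omega))
    (Bool.not_not s)

lemma cycle_lo (hi1 : 1 ≤ i) (hij : i < j) (hjn : j ≤ n) (hd : d = j - i)
    (hjr : q * d + r = j) (hrd : r < d)
    (a : Fin n) (s : Bool) (ha1 : (a : ℕ) < r) :
    ((bpancake n (i-1) * bpancake n (j-1)) ^ (2*(q+1))) (a, s) = (a, s) := by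
  have han := a.isLt
  have hbb : r - 1 - (a : ℕ) < n := by omega
  have h1 := land_lo hi1 hij hjn hd hjr hrd a s ha1 hbb
  have h2 := land_lo hi1 hij hjn hd hjr hrd (⟨r - 1 - (a:ℕ), hbb⟩ : Fin n) (!s)
    (show r - 1 - (a:ℕ) < r by omega) (show r - 1 - (r - 1 - (a:ℕ)) < n by omega)
  rw [show 2*(q+1) = (q+1) + (q+1) by omega, pow_add, Equiv.Perm.mul_apply, h1, h2]
  exact Prod.ext (Fin.ext (show r - 1 - (r - 1 - (a:ℕ)) = (a:ℕ) by omega))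
    (Bool.not_not s)

lemma pow_all (hi1 : 1 ≤ i) (hij : i < j) (hjn : j ≤ n) (hd : d = j - i) (N : ℕ)
    (hbase : ∀ (b : Fin n) (s : Bool), (b : ℕ) < d →
      ((bpancake n (i-1) * bpancake n (j-1)) ^ N) (b, s) = (b, s)) :
    (bpancake n (i-1) * bpancake n (j-1)) ^ N = 1 := by
  set σ := bpancake n (i-1) * bpancake n (j-1) with hσ
  have H : ∀ (k : ℕ) (a : Fin n) (s : Bool), (a : ℕ) ≤ k → (σ ^ N) (a, s) = (a, s) := by
    intro k
    induction k with
    | zero => intro a s h0; exact hbase a s (by omega)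
    | succ k IH =>
      intro a s hk
      have han := a.isLt
      rcases lt_or_ge (a : ℕ) d with h | h
      · exact hbase a s h
      rcases lt_or_ge (a : ℕ) j with h2 | h2
      · have hb' : (a : ℕ) - d < n := by omega
        have hstep := step_shift hi1 hij hjn hd a s h h2 hb'
        have key : (σ ^ N) (σ (a, s)) = σ ((σ ^ N) (a, s)) := by
          rw [← Equiv.Perm.mul_apply, ← Equiv.Perm.mul_apply, ← pow_succ, pow_succ']
        have hIH := IH ⟨(a:ℕ) - d, hb'⟩ s (show (a:ℕ) - d ≤ k by omega)
        apply σ.injective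
        rw [← key, hstep, hIH]
      · have hfix := step_fix hi1 hij hjn hd a s h2
        exact Function.IsFixedPt.perm_pow hfix N
  refine Equiv.ext fun x => ?_
  obtain ⟨a, s⟩ := x
  exact H n a s (le_of_lt a.isLt)

lemma period_dvd {α : Type*} (σ : Equiv.Perm α) (f : ℕ → α) (L : ℕ) (hL : 0 < L)
    (hstep : ∀ m, m < L → σ (f m) = f ((m+1) % L))
    (hne : ∀ m, 0 < m → m < L → f m ≠ f 0) (k : ℕ) :
    (σ ^ k) (f 0) = f 0 ↔ L ∣ k := by
  have key : ∀ k, (σ ^ k) (f 0) = f (k % L) := by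
    intro k
    induction k with
    | zero => rw [pow_zero, Nat.zero_mod]; rfl
    | succ k IH =>
      rw [pow_succ', Equiv.Perm.mul_apply, IH, hstep _ (Nat.mod_lt _ hL), Nat.mod_add_mod]
  rw [key k]
  constructor
  · intro h
    rcases Nat.eq_zero_or_pos (k % L) with h0 | h0
    · exact Nat.dvd_iff_mod_eq_zero.mpr h0
    · exact absurd h (hne (k % L) h0 (Nat.mod_lt _ hL))
  · intro h
    rw [Nat.dvd_iff_mod_eq_zero.mp h]

end steps

section cycles

variable {n i j d q r : ℕ}

lemma cycle_f (hi1 : 1 ≤ i) (hij : i < j) (hjn : j ≤ n) (hd : d = j - i)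
    (hjr : q * d + r = j) (hrd : r < d) (hq2 : 2 ≤ q) :
    2 * q ∣ orderOf (bpancake n (i-1) * bpancake n (j-1)) := by
  have hd0 : 0 < d := by omega
  have h2d : 2 * d ≤ q * d := Nat.mul_le_mul_right d hq2
  have hn0 : 0 < n := by omega
  let f : ℕ → Fin n × Bool := fun m =>
    (⟨(if m = 0 then d - 1 else if m ≤ q then j - m * d else (2*q+1-m)*d - 1) % n,
        Nat.mod_lt _ hn0⟩,
      if 1 ≤ m ∧ m ≤ q then true else false)
  have hfpos : ∀ m, ((f m).1 : ℕ) =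
      (if m = 0 then d - 1 else if m ≤ q then j - m * d else (2*q+1-m)*d - 1) % n :=
    fun m => rfl
  have hfsgn : ∀ m, (f m).2 = if 1 ≤ m ∧ m ≤ q then true else false := fun m => rfl
  have hb0 : d - 1 < n := by omega
  have hf0 : f 0 = (⟨d-1, hb0⟩, false) := by
    refine Prod.ext (Fin.ext ?_) ?_
    · rw [hfpos, if_pos rfl]; exact Nat.mod_eq_of_lt (by omega)
    · rw [hfsgn, if_neg (by omega)]
  have hfmid : ∀ m, 1 ≤ m → m ≤ q → ∀ (pf : j - m*d < n), f m = (⟨j - m*d, pf⟩, true) := by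
    intro m h1 h2 pf
    refine Prod.ext (Fin.ext ?_) ?_
    · rw [hfpos, if_neg (by omega), if_pos h2]; exact Nat.mod_eq_of_lt pf
    · rw [hfsgn, if_pos ⟨h1, h2⟩]
  have hfhi : ∀ m, q < m → m ≤ 2*q - 1 → ∀ (pf : (2*q+1-m)*d - 1 < n),
      f m = (⟨(2*q+1-m)*d - 1, pf⟩, false) := by
    intro m h1 h2 pf
    refine Prod.ext (Fin.ext ?_) ?_
    · rw [hfpos, if_neg (by omega), if_neg (by omega)]; exact Nat.mod_eq_of_lt pf
    · rw [hfsgn, if_neg (by omega)]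
  have hL : 0 < 2*q := by omega
  have hstep : ∀ m, m < 2*q →
      (bpancake n (i-1) * bpancake n (j-1)) (f m) = f ((m+1) % (2*q)) := by
    intro m hm
    by_cases hlast : m = 2*q - 1
    · subst hlast
      rw [show (2*q-1+1) % (2*q) = 0 by rw [show 2*q-1+1 = 2*q by omega]; exact Nat.mod_self _]
      have e : (2*q+1-(2*q-1))*d = 2*d := by rw [show 2*q+1-(2*q-1) = 2 by omega]
      have pf : (2*q+1-(2*q-1))*d - 1 < n := by omega
      rw [hfhi (2*q-1) (by omega) le_rfl pf,
        step_shift hi1 hij hjn hd ⟨(2*q+1-(2*q-1))*d - 1, pf⟩ false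
          (show d ≤ (2*q+1-(2*q-1))*d - 1 by omega)
          (show (2*q+1-(2*q-1))*d - 1 < j by omega)
          (show (2*q+1-(2*q-1))*d - 1 - d < n by omega), hf0]
      exact Prod.ext (Fin.ext (show (2*q+1-(2*q-1))*d - 1 - d = d - 1 by omega)) rfl
    have hmod : (m+1) % (2*q) = m+1 := Nat.mod_eq_of_lt (by omega)
    rw [hmod]
    rcases Nat.eq_zero_or_pos m with rfl | hm0
    · have pf1 : j - (0+1)*d < n := by have := Nat.mul_le_mul_right d (show 1 ≤ q by omega); omega
      have e1 : (0+1)*d = d := by rw [Nat.one_mul]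
      rw [hf0, step_jump hi1 hij hjn hd ⟨d-1, hb0⟩ false (show d-1 < d by omega)
        (show j - 1 - (d-1) < n by omega), hfmid (0+1) le_rfl (by omega) pf1]
      exact Prod.ext (Fin.ext (show j - 1 - (d-1) = j - (0+1)*d by omega)) rfl
    rcases lt_or_ge m q with hmq | hmq
    · -- 1 ≤ m < q : shift
      have hmd1 : 1*d ≤ m*d := Nat.mul_le_mul_right d hm0
      have hmd2 : (m+1)*d ≤ q*d := Nat.mul_le_mul_right d (by omega)
      have e : (m+1)*d = m*d + d := Nat.succ_mul m d
      have pfm : j - m*d < n := by omega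
      have pfm1 : j - (m+1)*d < n := by omega
      rw [hfmid m hm0 (by omega) pfm,
        step_shift hi1 hij hjn hd ⟨j - m*d, pfm⟩ true (show d ≤ j - m*d by omega)
          (show j - m*d < j by omega) (show j - m*d - d < n by omega),
        hfmid (m+1) (by omega) (by omega) pfm1]
      exact Prod.ext (Fin.ext (show j - m*d - d = j - (m+1)*d by omega)) rfl
    rcases eq_or_lt_of_le hmq with hmeq | hmq2
    · -- m = q : jump
      have emd : m*d = q*d := by rw [← hmeq]
      have pfm : j - m*d < n := by omega
      have e : (2*q+1-(m+1))*d = q*d := by rw [show 2*q+1-(m+1) = q from by omega]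
      have pf1 : (2*q+1-(m+1))*d - 1 < n := by omega
      rw [hfmid m (by omega) (by omega) pfm,
        step_jump hi1 hij hjn hd ⟨j - m*d, pfm⟩ true (show j - m*d < d by omega)
          (show j - 1 - (j - m*d) < n by omega),
        hfhi (m+1) (by omega) (by omega) pf1]
      exact Prod.ext (Fin.ext (show j - 1 - (j - m*d) = (2*q+1-(m+1))*d - 1 by omega)) rfl
    · -- q < m ≤ 2q-2 : shift
      have h2 : 2*d ≤ (2*q+1-m)*d := Nat.mul_le_mul_right d (by omega)
      have h3 : (2*q+1-m)*d ≤ q*d := Nat.mul_le_mul_right d (by omega)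
      have e : (2*q+1-m)*d = (2*q+1-(m+1))*d + d := by
        rw [show 2*q+1-m = (2*q+1-(m+1)) + 1 from by omega, Nat.succ_mul]
      have pfm : (2*q+1-m)*d - 1 < n := by omega
      have pf1 : (2*q+1-(m+1))*d - 1 < n := by omega
      rw [hfhi m (by omega) (by omega) pfm,
        step_shift hi1 hij hjn hd ⟨(2*q+1-m)*d - 1, pfm⟩ false
          (show d ≤ (2*q+1-m)*d - 1 by omega) (show (2*q+1-m)*d - 1 < j by omega)
          (show (2*q+1-m)*d - 1 - d < n by omega),
        hfhi (m+1) (by omega) (by omega) pf1]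
      exact Prod.ext (Fin.ext (show (2*q+1-m)*d - 1 - d = (2*q+1-(m+1))*d - 1 by omega)) rfl
  have hne : ∀ m, 0 < m → m < 2*q → f m ≠ f 0 := by
    intro m h1 h2 hcon
    rcases le_or_gt m q with hmq | hmq
    · have hs := congrArg Prod.snd hcon
      rw [hfsgn, hfsgn, if_pos ⟨h1, hmq⟩, if_neg (by omega)] at hs
      exact Bool.noConfusion hs
    · have hv := congrArg (fun x : Fin n × Bool => (x.1 : ℕ)) hcon
      simp only [hfpos] at hv
      rw [if_neg (show ¬(m = 0) by omega), if_neg (show ¬(m ≤ q) by omega)] at hv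
      norm_num at hv
      have h2' : 2*d ≤ (2*q+1-m)*d := Nat.mul_le_mul_right d (by omega)
      have h3 : (2*q+1-m)*d ≤ q*d := Nat.mul_le_mul_right d (by omega)
      rw [Nat.mod_eq_of_lt (by omega), Nat.mod_eq_of_lt (by omega)] at hv
      omega
  have hper := period_dvd _ f (2*q) hL hstep hne
    (orderOf (bpancake n (i-1) * bpancake n (j-1)))
  exact (hper).mp (by rw [pow_orderOf_eq_one]; rfl)


lemma cycle_g (hi1 : 1 ≤ i) (hij : i < j) (hjn : j ≤ n) (hd : d = j - i)
    (hjr : q * d + r = j) (hrd : r < d) (hq2 : 2 ≤ q) (hr1 : 1 ≤ r) :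
    2 * (q+1) ∣ orderOf (bpancake n (i-1) * bpancake n (j-1)) := by
  have hd0 : 0 < d := by omega
  have h2d : 2 * d ≤ q * d := Nat.mul_le_mul_right d hq2
  have hn0 : 0 < n := by omega
  let g : ℕ → Fin n × Bool := fun m =>
    (⟨(if m = 0 then r - 1 else if m ≤ q+1 then (q+1-m)*d else (2*q+2-m)*d + r - 1) % n,
        Nat.mod_lt _ hn0⟩,
      if 1 ≤ m ∧ m ≤ q+1 then true else false)
  have hgpos : ∀ m, ((g m).1 : ℕ) =
      (if m = 0 then r - 1 else if m ≤ q+1 then (q+1-m)*d else (2*q+2-m)*d + r - 1) % n :=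
    fun m => rfl
  have hgsgn : ∀ m, (g m).2 = if 1 ≤ m ∧ m ≤ q+1 then true else false := fun m => rfl
  have hb0 : r - 1 < n := by omega
  have hg0 : g 0 = (⟨r-1, hb0⟩, false) := by
    refine Prod.ext (Fin.ext ?_) ?_
    · rw [hgpos, if_pos rfl]; exact Nat.mod_eq_of_lt (by omega)
    · rw [hgsgn, if_neg (by omega)]
  have hgmid : ∀ m, 1 ≤ m → m ≤ q+1 → ∀ (pf : (q+1-m)*d < n), g m = (⟨(q+1-m)*d, pf⟩, true) := by
    intro m h1 h2 pf
    refine Prod.ext (Fin.ext ?_) ?_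
    · rw [hgpos, if_neg (by omega), if_pos h2]; exact Nat.mod_eq_of_lt pf
    · rw [hgsgn, if_pos ⟨h1, h2⟩]
  have hghi : ∀ m, q+1 < m → m ≤ 2*q+1 → ∀ (pf : (2*q+2-m)*d + r - 1 < n),
      g m = (⟨(2*q+2-m)*d + r - 1, pf⟩, false) := by
    intro m h1 h2 pf
    refine Prod.ext (Fin.ext ?_) ?_
    · rw [hgpos, if_neg (by omega), if_neg (by omega)]; exact Nat.mod_eq_of_lt pf
    · rw [hgsgn, if_neg (by omega)]
  have hL : 0 < 2*(q+1) := by omega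
  have hstep : ∀ m, m < 2*(q+1) →
      (bpancake n (i-1) * bpancake n (j-1)) (g m) = g ((m+1) % (2*(q+1))) := by
    intro m hm
    by_cases hlast : m = 2*q+1
    · subst hlast
      rw [show (2*q+1+1) % (2*(q+1)) = 0 by
        rw [show 2*q+1+1 = 2*(q+1) by omega]; exact Nat.mod_self _]
      have e : (2*q+2-(2*q+1))*d = 1*d := by rw [show 2*q+2-(2*q+1) = 1 by omega]
      have pf : (2*q+2-(2*q+1))*d + r - 1 < n := by omega
      rw [hghi (2*q+1) (by omega) le_rfl pf,
        step_shift hi1 hij hjn hd ⟨(2*q+2-(2*q+1))*d + r - 1, pf⟩ false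
          (show d ≤ (2*q+2-(2*q+1))*d + r - 1 by omega)
          (show (2*q+2-(2*q+1))*d + r - 1 < j by omega)
          (show (2*q+2-(2*q+1))*d + r - 1 - d < n by omega), hg0]
      exact Prod.ext (Fin.ext (show (2*q+2-(2*q+1))*d + r - 1 - d = r - 1 by omega)) rfl
    have hmod : (m+1) % (2*(q+1)) = m+1 := Nat.mod_eq_of_lt (by omega)
    rw [hmod]
    rcases Nat.eq_zero_or_pos m with rfl | hm0
    · have e1 : (q+1-(0+1))*d = q*d := by rw [show q+1-(0+1) = q by omega]
      have pf1 : (q+1-(0+1))*d < n := by omega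
      rw [hg0, step_jump hi1 hij hjn hd ⟨r-1, hb0⟩ false (show r-1 < d by omega)
        (show j - 1 - (r-1) < n by omega), hgmid (0+1) le_rfl (by omega) pf1]
      exact Prod.ext (Fin.ext (show j - 1 - (r-1) = (q+1-(0+1))*d by omega)) rfl
    rcases lt_or_ge m (q+1) with hmq | hmq
    · -- 1 ≤ m ≤ q : shift
      have hmd1 : 1*d ≤ (q+1-m)*d := Nat.mul_le_mul_right d (by omega)
      have hmd2 : (q+1-m)*d ≤ q*d := Nat.mul_le_mul_right d (by omega)
      have e : (q+1-m)*d = (q+1-(m+1))*d + d := by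
        rw [show q+1-m = (q+1-(m+1)) + 1 from by omega, Nat.succ_mul]
      have pfm : (q+1-m)*d < n := by omega
      have pf1 : (q+1-(m+1))*d < n := by omega
      rw [hgmid m hm0 (by omega) pfm,
        step_shift hi1 hij hjn hd ⟨(q+1-m)*d, pfm⟩ true (show d ≤ (q+1-m)*d by omega)
          (show (q+1-m)*d < j by omega) (show (q+1-m)*d - d < n by omega),
        hgmid (m+1) (by omega) (by omega) pf1]
      exact Prod.ext (Fin.ext (show (q+1-m)*d - d = (q+1-(m+1))*d by omega)) rfl
    rcases eq_or_lt_of_le hmq with hmeq | hmq2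
    · -- m = q+1 : jump
      have e : (q+1-m)*d = 0 := by rw [show q+1-m = 0 from by omega, Nat.zero_mul]
      have pfm : (q+1-m)*d < n := by omega
      have e2 : (2*q+2-(m+1))*d = q*d := by rw [show 2*q+2-(m+1) = q from by omega]
      have pf1 : (2*q+2-(m+1))*d + r - 1 < n := by omega
      rw [hgmid m (by omega) (by omega) pfm,
        step_jump hi1 hij hjn hd ⟨(q+1-m)*d, pfm⟩ true (show (q+1-m)*d < d by omega)
          (show j - 1 - ((q+1-m)*d) < n by omega),
        hghi (m+1) (by omega) (by omega) pf1]
      exact Prod.ext (Fin.ext (show j - 1 - ((q+1-m)*d) = (2*q+2-(m+1))*d + r - 1 by omega)) rfl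
    · -- q+2 ≤ m ≤ 2q : shift
      have h2 : 2*d ≤ (2*q+2-m)*d := Nat.mul_le_mul_right d (by omega)
      have h3 : (2*q+2-m)*d ≤ q*d := Nat.mul_le_mul_right d (by omega)
      have e : (2*q+2-m)*d = (2*q+2-(m+1))*d + d := by
        rw [show 2*q+2-m = (2*q+2-(m+1)) + 1 from by omega, Nat.succ_mul]
      have pfm : (2*q+2-m)*d + r - 1 < n := by omega
      have pf1 : (2*q+2-(m+1))*d + r - 1 < n := by omega
      rw [hghi m (by omega) (by omega) pfm,
        step_shift hi1 hij hjn hd ⟨(2*q+2-m)*d + r - 1, pfm⟩ false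
          (show d ≤ (2*q+2-m)*d + r - 1 by omega)
          (show (2*q+2-m)*d + r - 1 < j by omega)
          (show (2*q+2-m)*d + r - 1 - d < n by omega),
        hghi (m+1) (by omega) (by omega) pf1]
      exact Prod.ext (Fin.ext
        (show (2*q+2-m)*d + r - 1 - d = (2*q+2-(m+1))*d + r - 1 by omega)) rfl
  have hne : ∀ m, 0 < m → m < 2*(q+1) → g m ≠ g 0 := by
    intro m h1 h2 hcon
    rcases le_or_gt m (q+1) with hmq | hmq
    · have hs := congrArg Prod.snd hcon
      rw [hgsgn, hgsgn, if_pos ⟨h1, hmq⟩, if_neg (by omega)] at hs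
      exact Bool.noConfusion hs
    · have hv := congrArg (fun x : Fin n × Bool => (x.1 : ℕ)) hcon
      simp only [hgpos] at hv
      rw [if_neg (show ¬(m = 0) by omega), if_neg (show ¬(m ≤ q+1) by omega)] at hv
      norm_num at hv
      have h2' : 1*d ≤ (2*q+2-m)*d := Nat.mul_le_mul_right d (by omega)
      have h3 : (2*q+2-m)*d ≤ q*d := Nat.mul_le_mul_right d (by omega)
      rw [Nat.mod_eq_of_lt (by omega), Nat.mod_eq_of_lt (by omega)] at hv
      omega
  have hper := period_dvd _ g (2*(q+1)) hL hstep hne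
    (orderOf (bpancake n (i-1) * bpancake n (j-1)))
  exact (hper).mp (by rw [pow_orderOf_eq_one]; rfl)

end cycles

/-- Let `1 ≤ i < j ≤ n` with `j ≥ 4` and `1 ≤ ⌊j/2⌋ < i < j - 1`, and set `d = j - i`,
`q = ⌊j/d⌋`, `r = j mod d`.  Then the order of `f^B_{i-1} f^B_{j-1}` in the
hyperoctahedral group `B_n` is `2q` if `r = 0`, and `2q(q+1)` if `r ≠ 0`. -/
theorem order_bpancake_mul_middle_case (n i j d q r : ℕ) (hi1 : 1 ≤ i) (hij : i < j)
    (hjn : j ≤ n) (hj4 : 4 ≤ j) (hhalf1 : 1 ≤ j / 2) (hhalf : j / 2 < i)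
    (hij1 : i < j - 1) (hd : d = j - i) (hq : q = j / d) (hr : r = j % d) :
    (r = 0 → orderOf (bpancake n (i - 1) * bpancake n (j - 1)) = 2 * q) ∧
    (r ≠ 0 → orderOf (bpancake n (i - 1) * bpancake n (j - 1)) = 2 * q * (q + 1)) := by
  have hd0 : 0 < d := by omega
  have hjr : q * d + r = j := by rw [hq, hr, Nat.mul_comm]; exact Nat.div_add_mod j d
  have hrd : r < d := by rw [hr]; exact Nat.mod_lt j hd0
  have hq2 : 2 ≤ q := by rw [hq, Nat.le_div_iff_mul_le hd0]; omega
  have h2d : 2*d ≤ q*d := Nat.mul_le_mul_right d hq2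
  constructor
  · intro hr0
    subst hr0
    have hone : (bpancake n (i-1) * bpancake n (j-1)) ^ (2*q) = 1 := by
      apply pow_all hi1 hij hjn hd
      intro b s hb
      exact cycle_hi hi1 hij hjn hd hjr hrd (by omega) b s (by omega) hb
    exact Nat.dvd_antisymm (orderOf_dvd_of_pow_eq_one hone)
      (cycle_f hi1 hij hjn hd hjr hrd hq2)
  · intro hr0
    have hone : (bpancake n (i-1) * bpancake n (j-1)) ^ (2*q*(q+1)) = 1 := by
      apply pow_all hi1 hij hjn hd
      intro b s hb
      rcases lt_or_ge (b:ℕ) r with hbr | hbr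
      · have hfix := cycle_lo hi1 hij hjn hd hjr hrd b s hbr
        rw [show 2*q*(q+1) = (2*(q+1))*q by ring, pow_mul]
        exact Function.IsFixedPt.perm_pow hfix q
      · have hfix := cycle_hi hi1 hij hjn hd hjr hrd (by omega) b s hbr hb
        rw [show 2*q*(q+1) = (2*q)*(q+1) by ring, pow_mul]
        exact Function.IsFixedPt.perm_pow hfix (q+1)
    have hdvd1 := orderOf_dvd_of_pow_eq_one hone
    have hdvd2 := cycle_f hi1 hij hjn hd hjr hrd hq2
    have hdvd3 := cycle_g hi1 hij hjn hd hjr hrd hq2 (by omega)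
    have hlcm := Nat.lcm_dvd hdvd2 hdvd3
    have hco : Nat.gcd q (q+1) = 1 := by
      rw [Nat.gcd_self_add_right]; exact Nat.gcd_one_right q
    have hgcd : Nat.gcd (2*q) (2*(q+1)) = 2 := by
      rw [Nat.gcd_mul_left, hco]
    have hml := Nat.gcd_mul_lcm (2*q) (2*(q+1))
    rw [hgcd] at hml
    have hval : Nat.lcm (2*q) (2*(q+1)) = 2*q*(q+1) := by
      have h4 : (2*q) * (2*(q+1)) = 2 * (2*q*(q+1)) := by ring
      rw [h4] at hml
      exact Nat.eq_of_mul_eq_mul_left (by norm_num) hml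
    exact Nat.dvd_antisymm hdvd1 (hval ▸ hlcm)
end

section
/- For every j with 3 ≤ j ≤ n, the order of the product f^B_{j−2} f^B_{j−1} of consecutive burnt pancake generators in the hyperoctahedral group B_n is 2j. -/
lemma bp_apply_le {n m : ℕ} (a : Fin n) (s : Bool) (h1 : (a : ℕ) ≤ m) (h2 : m < n) :
    bpancake n m (a, s) =
      (⟨m - (a : ℕ), Nat.lt_of_le_of_lt (Nat.sub_le m a) h2⟩, !s) := by
  show dite _ _ _ = _
  rw [dif_pos ⟨h1, h2⟩]

lemma bp_apply_gt {n m : ℕ} (a : Fin n) (s : Bool) (h1 : m < (a : ℕ)) :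
    bpancake n m (a, s) = (a, s) := by
  show dite _ _ _ = _
  rw [dif_neg (by omega : ¬((a : ℕ) ≤ m ∧ m < n))]

/-- For every `j` with `3 ≤ j ≤ n`, the order of the product `f^B_{j-2} f^B_{j-1}` of
consecutive burnt pancake generators in the hyperoctahedral group `B_n` is `2j`. -/
theorem order_bpancake_mul_consecutive (n j : ℕ) (hj3 : 3 ≤ j) (hjn : j ≤ n) :
    orderOf (bpancake n (j - 2) * bpancake n (j - 1)) = 2 * j := by
  set g := bpancake n (j - 2) * bpancake n (j - 1) with hgdef
  have hj1n : j - 1 < n := by omega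
  set P : Fin n := ⟨j - 1, hj1n⟩ with hP
  -- action of g
  have hg0 : ∀ s : Bool, g (⟨0, by omega⟩, s) = (P, !s) := by
    intro s
    show bpancake n (j-2) (bpancake n (j-1) (⟨0, by omega⟩, s)) = _
    rw [bp_apply_le _ s (by simp) hj1n]
    rw [bp_apply_gt _ (!s) (by simp; omega)]
    simp [hP]
  have hgstep : ∀ (a : Fin n) (s : Bool), 0 < (a : ℕ) → (a : ℕ) < j →
      g (a, s) = (⟨(a : ℕ) - 1, by omega⟩, s) := by
    intro a s h0 hlt
    show bpancake n (j-2) (bpancake n (j-1) (a, s)) = _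
    rw [bp_apply_le _ s (by omega) hj1n]
    rw [bp_apply_le _ (!s) (by simp; omega) (by omega)]
    simp only [Bool.not_not]
    congr 1
    apply Fin.ext
    simp
    omega
  have hgfix : ∀ (a : Fin n) (s : Bool), j ≤ (a : ℕ) → g (a, s) = (a, s) := by
    intro a s hge
    show bpancake n (j-2) (bpancake n (j-1) (a, s)) = _
    rw [bp_apply_gt _ s (by omega), bp_apply_gt _ s (by omega)]
  -- orbit of P
  have hiter : ∀ k, k ≤ j - 1 → ∀ s : Bool,
      (g ^ k) (P, s) = (⟨j - 1 - k, by omega⟩, s) := by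
    intro k
    induction k with
    | zero => intro _ s; simp [hP]
    | succ k ih =>
      intro hk s
      rw [pow_succ', Equiv.Perm.mul_apply, ih (by omega) s]
      rw [hgstep _ s (by simp; omega) (by simp; omega)]
      congr 1
  have hj_it : ∀ s : Bool, (g ^ j) (P, s) = (P, !s) := by
    intro s
    have he : g ^ j = g * g ^ (j - 1) := by rw [← pow_succ']; congr 1; omega
    rw [he, Equiv.Perm.mul_apply, hiter (j-1) le_rfl s]
    have : (⟨j - 1 - (j - 1), by omega⟩ : Fin n) = ⟨0, by omega⟩ := by
      apply Fin.ext; simp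
    rw [this, hg0]
  have h2j : ∀ s : Bool, (g ^ (2 * j)) (P, s) = (P, s) := by
    intro s
    have he : g ^ (2 * j) = g ^ j * g ^ j := by rw [← pow_add]; congr 1; omega
    rw [he, Equiv.Perm.mul_apply, hj_it, hj_it, Bool.not_not]
  have hpow : g ^ (2 * j) = 1 := by
    ext x
    all_goals {
      obtain ⟨a, s⟩ := x
      by_cases ha : (a : ℕ) < j
      · have hk : j - 1 - (j - 1 - (a : ℕ)) = (a : ℕ) := by omega
        have ha' : (a, s) = (g ^ (j - 1 - (a : ℕ))) (P, s) := by
          rw [hiter _ (by omega) s]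
          congr 1
          apply Fin.ext
          simp [hk]
        rw [ha', ← Equiv.Perm.mul_apply, ← pow_add, add_comm, pow_add,
          Equiv.Perm.mul_apply, h2j]
        simp
      · have : ∀ k : ℕ, (g ^ k) (a, s) = (a, s) := by
          intro k
          induction k with
          | zero => simp
          | succ k ih => rw [pow_succ', Equiv.Perm.mul_apply, ih, hgfix _ _ (by omega)]
        rw [this]
        simp
    }
  rw [orderOf_eq_iff (by omega : 0 < 2 * j)]
  refine ⟨hpow, ?_⟩
  intro m hm hm0 h1
  have := congrArg (fun p => p (P, false)) (h1 : g ^ m = 1)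
  simp only [Equiv.Perm.coe_one, id_eq] at this
  by_cases hmj : m < j
  · rw [hiter m (by omega) false] at this
    have := congrArg Prod.fst this
    simp [hP] at this
    omega
  · have hk : m = (m - j) + j := by omega
    rw [hk, pow_add, Equiv.Perm.mul_apply, hj_it] at this
    simp only [Bool.not_false] at this
    rw [hiter (m - j) (by omega) true] at this
    have := congrArg Prod.snd this
    simp at this
end
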